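/- arXiv:2204.06300 — 6 statements merged into one kernel-verified Lean document; each statement's English description precedes it below -/
import Mathlib

section
/- Let X be a finite-dimensional (real) Banach space. Then the closed unit ball B_X of X is plastic; that is, every non-expansive bijection F : B_X → B_X is an isometry. -/
open Function Metric

/-- A non-expansive surjection of a compact metric space onto itself is an isometry. -/
theorem dist_eq_of_compact_surj {K : Type*} [MetricSpace K] [CompactSpace K]
    (f : K → K) (hs : Function.Surjective f)
    (hne : ∀ a b, dist (f a) (f b) ≤ dist a b) :
    ∀ a b, dist (f a) (f b) = dist a b := by
  have hiterne : ∀ m a b, dist (f^[m] a) (f^[m] b) ≤ dist a b := by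
    intro m
    induction m with
    | zero => simp
    | succ m ih =>
      intro a b
      simp only [Function.iterate_succ_apply]
      exact le_trans (ih _ _) (hne a b)
  intro x y
  refine le_antisymm (hne x y) ?_
  -- backward chains starting at f x (resp. f y) passing through x (resp. y)
  have chain : ∀ z : K, ∃ c : ℕ → K, c 0 = f z ∧ c 1 = z ∧ ∀ n, f (c (n + 1)) = c n := by
    intro z
    have e : ∃ e : ℕ → K, e 0 = z ∧ ∀ n, f (e (n + 1)) = e n :=
      ⟨fun n => Nat.rec z (fun _ ih => (hs ih).choose) n, rfl, fun n => (hs _).choose_spec⟩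
    obtain ⟨e, he0, hes⟩ := e
    refine ⟨fun n => Nat.rec (f z) (fun k _ => e k) n, rfl, by simp [he0], fun n => ?_⟩
    cases n with
    | zero => simp [he0]
    | succ n => exact hes n
  obtain ⟨c, hc0, hc1, hcs⟩ := chain x
  obtain ⟨d, hd0, hd1, hds⟩ := chain y
  have hcit : ∀ (c : ℕ → K), (∀ n, f (c (n + 1)) = c n) → ∀ m k, f^[m] (c (k + m)) = c k := by
    intro c hcs m
    induction m with
    | zero => simp
    | succ m ih =>
      intro k
      have h1 : k + (m + 1) = (k + m) + 1 := by ring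
      rw [h1, Function.iterate_succ_apply, hcs (k + m), ih k]
  -- recurrence: for every ε > 0 there is k ≥ 1 with c k and d k ε-close to c 0, d 0
  have key : ∀ ε : ℝ, 0 < ε → ∃ k, 1 ≤ k ∧ dist (c k) (c 0) < ε ∧ dist (d k) (d 0) < ε := by
    intro ε hε
    obtain ⟨a, -, φ, hφ, hconv⟩ :=
      isCompact_univ.tendsto_subseq (x := fun n => (c n, d n)) (fun n => Set.mem_univ _)
    have hcauchy := hconv.cauchySeq
    rw [Metric.cauchySeq_iff] at hcauchy
    obtain ⟨N, hN⟩ := hcauchy ε hε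
    have hmn : φ N < φ (N + 1) := hφ (Nat.lt_succ_self N)
    have hclose := hN (N + 1) (le_of_lt (Nat.lt_succ_self N)) N le_rfl
    simp only [Function.comp_apply, Prod.dist_eq, max_lt_iff] at hclose
    obtain ⟨hc', hd'⟩ := hclose
    set m := φ N
    set n := φ (N + 1)
    refine ⟨n - m, by omega, ?_, ?_⟩
    · have h1 : f^[m] (c n) = c (n - m) := by
        have := hcit c hcs m (n - m); rwa [show n - m + m = n by omega] at this
      have h2 : f^[m] (c m) = c 0 := by
        have := hcit c hcs m 0; rwa [zero_add] at this
      calc dist (c (n - m)) (c 0) = dist (f^[m] (c n)) (f^[m] (c m)) := by rw [h1, h2]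
        _ ≤ dist (c n) (c m) := hiterne m _ _
        _ < ε := hc'
    · have h1 : f^[m] (d n) = d (n - m) := by
        have := hcit d hds m (n - m); rwa [show n - m + m = n by omega] at this
      have h2 : f^[m] (d m) = d 0 := by
        have := hcit d hds m 0; rwa [zero_add] at this
      calc dist (d (n - m)) (d 0) = dist (f^[m] (d n)) (f^[m] (d m)) := by rw [h1, h2]
        _ ≤ dist (d n) (d m) := hiterne m _ _
        _ < ε := hd'
  -- conclude
  have main : ∀ ε : ℝ, 0 < ε → dist x y ≤ dist (f x) (f y) + 2 * ε := by
    intro ε hε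
    obtain ⟨k, hk1, hck, hdk⟩ := key ε hε
    have h1 : f^[k - 1] (c k) = c 1 := by
      have := hcit c hcs (k - 1) 1
      rwa [show 1 + (k - 1) = k by omega] at this
    have h2 : f^[k - 1] (d k) = d 1 := by
      have := hcit d hds (k - 1) 1
      rwa [show 1 + (k - 1) = k by omega] at this
    have hxy : dist x y ≤ dist (c k) (d k) := by
      calc dist x y = dist (f^[k - 1] (c k)) (f^[k - 1] (d k)) := by rw [h1, h2, hc1, hd1]
        _ ≤ dist (c k) (d k) := hiterne _ _ _
    calc dist x y ≤ dist (c k) (d k) := hxy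
      _ ≤ dist (c k) (c 0) + dist (c 0) (d 0) + dist (d 0) (d k) := dist_triangle4 _ _ _ _
      _ = dist (c k) (c 0) + dist (f x) (f y) + dist (d 0) (d k) := by rw [hc0, hd0]
      _ ≤ ε + dist (f x) (f y) + ε := by
          rw [dist_comm (d 0) (d k)]; linarith [hck.le, hdk.le]
      _ = dist (f x) (f y) + 2 * ε := by ring
  refine le_of_forall_pos_le_add fun ε hε => ?_
  have := main (ε / 2) (by linarith)
  linarith

/-- Let `X` be a finite-dimensional real Banach space. Then the closed
unit ball of `X` is plastic: every non-expansive bijection of the ball onto itself is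
an isometry. -/
theorem unit_ball_of_finiteDimensional_is_plastic
    {X : Type*} [NormedAddCommGroup X] [NormedSpace ℝ X]
    [FiniteDimensional ℝ X] [CompleteSpace X]
    (F : X → X)
    (hF : Set.BijOn F (Metric.closedBall (0 : X) 1) (Metric.closedBall (0 : X) 1))
    (hne : ∀ x ∈ Metric.closedBall (0 : X) 1, ∀ y ∈ Metric.closedBall (0 : X) 1,
      dist (F x) (F y) ≤ dist x y) :
    ∀ x ∈ Metric.closedBall (0 : X) 1, ∀ y ∈ Metric.closedBall (0 : X) 1,
      dist (F x) (F y) = dist x y := by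
  set B := Metric.closedBall (0 : X) 1 with hB
  haveI : CompactSpace B := isCompact_iff_compactSpace.mp (isCompact_closedBall 0 1)
  set f : B → B := fun p => ⟨F p, hF.mapsTo p.2⟩ with hf
  have hsurj : Function.Surjective f := by
    rintro ⟨y, hy⟩
    obtain ⟨x, hx, hfx⟩ := hF.surjOn hy
    exact ⟨⟨x, hx⟩, Subtype.ext hfx⟩
  have hfe : ∀ a b : B, dist (f a) (f b) ≤ dist a b := by
    rintro ⟨a, ha⟩ ⟨b, hb⟩
    simpa [Subtype.dist_eq, hf] using hne a ha b hb
  have h := dist_eq_of_compact_surj f hsurj hfe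
  intro x hx y hy
  have := h ⟨x, hx⟩ ⟨y, hy⟩
  simpa [Subtype.dist_eq, hf] using this
end

section
/- Let A be a bounded self-adjoint operator on a separable infinite-dimensional Hilbert space H with inf_{‖x‖=1} ⟨Ax, x⟩ > 0, and let E = {x ∈ H : ⟨x, Ax⟩ ≤ 1} be the ellipsoid generated by A. Suppose the set of eigenvalues of A contains a subset B with the following properties: (1) B has at least two elements; (2) either B has no minimum, or the minimum of B is an eigenvalue whose eigenspace is infinite-dimensional; (3) either B has no maximum, or the maximum of B is an eigenvalue whose eigenspace is infinite-dimensional. Then E is not LEC-plastic; that is, there exists a linear operator T : H → H whose restriction to E is a non-expansive bijection from E onto E but which is not an isometry on E. -/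
open scoped InnerProductSpace ComplexConjugate

/-- A subset `M` of a normed space `X` is LEC-plastic (linearly expand-contract plastic)
if every linear operator `T : X → X` whose restriction to `M` is a non-expansive bijection
from `M` onto `M` is an isometry on `M`. -/
def IsLECPlastic (𝕜 : Type*) {X : Type*} [NontriviallyNormedField 𝕜]
    [NormedAddCommGroup X] [NormedSpace 𝕜 X] (M : Set X) : Prop :=
  ∀ T : X →ₗ[𝕜] X, Set.BijOn T M M →
    (∀ x ∈ M, ∀ y ∈ M, ‖T x - T y‖ ≤ ‖x - y‖) →
    (∀ x ∈ M, ∀ y ∈ M, ‖T x - T y‖ = ‖x - y‖)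

set_option linter.unusedSectionVars false
set_option linter.unusedVariables false




section Core
variable {𝕜 H : Type*} [RCLike 𝕜] [NormedAddCommGroup H] [InnerProductSpace 𝕜 H]
  [CompleteSpace H]

lemma on_summable_smul {g : ℤ → H} (hg : Orthonormal 𝕜 g) (c : ℤ → 𝕜)
    (hc : Summable fun n => ‖c n‖ ^ 2) : Summable fun n => c n • g n := by
  have := (hg.orthogonalFamily.summable_iff_norm_sq_summable c).2 hc
  simpa [LinearIsometry.toSpanSingleton] using this

lemma on_inner_tsum_smul {g : ℤ → H} (hg : Orthonormal 𝕜 g) {c : ℤ → 𝕜}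
    (hc : Summable fun n => ‖c n‖ ^ 2) (m : ℤ) :
    ⟪g m, ∑' n, c n • g n⟫_𝕜 = c m := by
  have hs := on_summable_smul hg c hc
  have h1 := ContinuousLinearMap.map_tsum (innerSL 𝕜 (g m)) hs
  simp only [innerSL_apply_apply] at h1
  rw [h1, tsum_eq_single m]
  · rw [inner_smul_right, orthonormal_iff_ite.mp hg]
    simp
  · intro n hn
    rw [inner_smul_right, orthonormal_iff_ite.mp hg]
    simp [Ne.symm hn]
end Core

section Core2
variable {𝕜 H : Type*} [RCLike 𝕜] [NormedAddCommGroup H] [InnerProductSpace 𝕜 H]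
  [CompleteSpace H]

lemma quad_expand (A : H →L[𝕜] H) (hA : IsSelfAdjoint A) {g : ℤ → H} (hg : Orthonormal 𝕜 g)
    (ν : ℤ → ℝ) (heig : ∀ n, A (g n) = ((ν n : ℝ) : 𝕜) • g n) (Cb : ℝ) (hCb : ∀ n, |ν n| ≤ Cb)
    {c : ℤ → 𝕜} (hc : Summable fun n => ‖c n‖ ^ 2)
    {w : H} (hw : ∀ n, ⟪g n, w⟫_𝕜 = 0) :
    RCLike.re ⟪w + ∑' n, c n • g n, A (w + ∑' n, c n • g n)⟫_𝕜
      = RCLike.re ⟪w, A w⟫_𝕜 + ∑' n, ν n * ‖c n‖ ^ 2 := by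
  have hsum := on_summable_smul hg c hc
  set s := ∑' n, c n • g n with hs_def
  have hCb0 : 0 ≤ Cb := le_trans (abs_nonneg _) (hCb 0)
  have hnorm_mul : ∀ n, ‖((ν n : ℝ) : 𝕜) * c n‖ = |ν n| * ‖c n‖ := by
    intro n; rw [norm_mul, RCLike.norm_ofReal]
  have hc' : Summable fun n => ‖((ν n : ℝ) : 𝕜) * c n‖ ^ 2 := by
    apply Summable.of_nonneg_of_le (fun n => by positivity) (fun n => ?_) (hc.mul_left (Cb ^ 2))
    rw [hnorm_mul, mul_pow]
    exact mul_le_mul_of_nonneg_right (pow_le_pow_left₀ (abs_nonneg _) (hCb n) 2)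
      (by positivity)
  have hsum' := on_summable_smul hg _ hc'
  have hAs : A s = ∑' n, (((ν n : ℝ) : 𝕜) * c n) • g n := by
    rw [hs_def, ContinuousLinearMap.map_tsum A hsum]
    congr 1; funext n; rw [map_smul, heig n, smul_smul, mul_comm]
  have hwg : ∀ n, ⟪w, g n⟫_𝕜 = 0 := fun n => by rw [← inner_conj_symm, hw n, map_zero]
  have h1 : ⟪w, A s⟫_𝕜 = 0 := by
    have h := ContinuousLinearMap.map_tsum (innerSL 𝕜 w) hsum'
    simp only [innerSL_apply_apply] at h
    rw [hAs, h]
    simp [inner_smul_right, hwg]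
  have h2 : ⟪s, A w⟫_𝕜 = 0 := by
    rw [← inner_conj_symm]
    have h := ContinuousLinearMap.map_tsum (innerSL 𝕜 (A w)) hsum
    simp only [innerSL_apply_apply] at h
    rw [hs_def, h]
    have hterm : ∀ n, ⟪A w, c n • g n⟫_𝕜 = 0 := by
      intro n
      have hsymm : ⟪A w, g n⟫_𝕜 = 0 := by
        have := hA.isSymmetric w (g n)
        simp only [ContinuousLinearMap.coe_coe] at this
        rw [this, heig n, inner_smul_right, hwg n, mul_zero]
      rw [inner_smul_right, hsymm, mul_zero]
    simp [hterm]
  have h3 : ⟪s, A s⟫_𝕜 = ∑' n, ((ν n * ‖c n‖ ^ 2 : ℝ) : 𝕜) := by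
    have h := ContinuousLinearMap.map_tsum (innerSL 𝕜 s) hsum'
    simp only [innerSL_apply_apply] at h
    rw [hAs, h]
    congr 1; funext n
    rw [inner_smul_right, ← inner_conj_symm, on_inner_tsum_smul hg hc n, mul_assoc,
      RCLike.mul_conj]
    push_cast
    ring
  have expand : ⟪w + s, A (w + s)⟫_𝕜
      = ⟪w, A w⟫_𝕜 + ⟪w, A s⟫_𝕜 + (⟪s, A w⟫_𝕜 + ⟪s, A s⟫_𝕜) := by
    rw [map_add, inner_add_left, inner_add_right, inner_add_right]
  rw [expand, h1, h2, h3, add_zero, zero_add, map_add]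
  congr 1
  have hreal : Summable fun n => ν n * ‖c n‖ ^ 2 := by
    apply Summable.of_abs
    apply Summable.of_nonneg_of_le (fun n => abs_nonneg _) (fun n => ?_) (hc.mul_left Cb)
    rw [abs_mul, abs_of_nonneg (by positivity : (0:ℝ) ≤ ‖c n‖ ^ 2)]
    exact mul_le_mul_of_nonneg_right (hCb n) (by positivity)
  rw [← RCLike.ofReal_tsum, RCLike.ofReal_re]
end Core2

section Core3
variable {𝕜 H : Type*} [RCLike 𝕜] [NormedAddCommGroup H] [InnerProductSpace 𝕜 H]
  [CompleteSpace H]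

lemma norm_expand {g : ℤ → H} (hg : Orthonormal 𝕜 g) {c : ℤ → 𝕜}
    (hc : Summable fun n => ‖c n‖ ^ 2) {w : H} (hw : ∀ n, ⟪g n, w⟫_𝕜 = 0) :
    ‖w + ∑' n, c n • g n‖ ^ 2 = ‖w‖ ^ 2 + ∑' n, ‖c n‖ ^ 2 := by
  have h := quad_expand (ContinuousLinearMap.id 𝕜 H) ?_ hg (fun _ => 1) ?_ 1 ?_ hc hw
  · simpa [inner_self_eq_norm_sq] using h
  · rw [← ContinuousLinearMap.one_def]; exact .one _
  · intro n; simp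
  · intro n; simp

end Core3
section Construction
variable {H : Type*} (𝕜 : Type*) [RCLike 𝕜] [NormedAddCommGroup H] [InnerProductSpace 𝕜 H]
  [CompleteSpace H]

noncomputable def Pmap (g : ℤ → H) (x : H) : H := ∑' n, (⟪g n, x⟫_𝕜) • g n

noncomputable def Vmap (g : ℤ → H) (r : ℤ → ℝ) (x : H) : H :=
  ∑' n, (((r n : ℝ) : 𝕜) * ⟪g n, x⟫_𝕜) • g (n + 1)

noncomputable def Tmap (g : ℤ → H) (r : ℤ → ℝ) (x : H) : H :=
  (x - Pmap 𝕜 g x) + Vmap 𝕜 g r x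

variable {𝕜}
variable {g : ℤ → H} {r : ℤ → ℝ}

lemma shift_inj : Function.Injective (fun n : ℤ => n + 1) := add_left_injective 1

lemma bessel (hg : Orthonormal 𝕜 g) (x : H) : Summable fun n => ‖⟪g n, x⟫_𝕜‖ ^ 2 :=
  Orthonormal.inner_products_summable x hg

lemma coef_summable (hg : Orthonormal 𝕜 g) (hr0 : ∀ n, 0 ≤ r n) (hr1 : ∀ n, r n ≤ 1) (x : H) :
    Summable fun n => ‖((r n : ℝ) : 𝕜) * ⟪g n, x⟫_𝕜‖ ^ 2 := by
  apply Summable.of_nonneg_of_le (fun n => by positivity) (fun n => ?_) (bessel hg x)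
  rw [norm_mul, RCLike.norm_ofReal, abs_of_nonneg (hr0 n), mul_pow]
  calc r n ^ 2 * ‖⟪g n, x⟫_𝕜‖ ^ 2 ≤ 1 ^ 2 * ‖⟪g n, x⟫_𝕜‖ ^ 2 := by
        gcongr
        · exact hr0 n
        · exact hr1 n
    _ = ‖⟪g n, x⟫_𝕜‖ ^ 2 := by ring


lemma on_summable_smul_shift (hg : Orthonormal 𝕜 g) (c : ℤ → 𝕜)
    (hc : Summable fun n => ‖c n‖ ^ 2) : Summable fun n : ℤ => c n • g (n + 1) := by
  have := on_summable_smul (hg.comp _ shift_inj) c hc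
  simpa [Function.comp_def] using this

lemma on_inner_tsum_smul_shift (hg : Orthonormal 𝕜 g) {c : ℤ → 𝕜}
    (hc : Summable fun n => ‖c n‖ ^ 2) (m : ℤ) :
    ⟪g (m + 1), ∑' n, c n • g (n + 1)⟫_𝕜 = c m := by
  have := on_inner_tsum_smul (hg.comp _ shift_inj) (c := c) hc m
  simpa [Function.comp_def] using this

lemma perp (hg : Orthonormal 𝕜 g) (x : H) (m : ℤ) : ⟪g m, x - Pmap 𝕜 g x⟫_𝕜 = 0 := by
  rw [inner_sub_right, Pmap, on_inner_tsum_smul hg (bessel hg x) m, sub_self]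

lemma Pmap_add (hg : Orthonormal 𝕜 g) (x y : H) :
    Pmap 𝕜 g (x + y) = Pmap 𝕜 g x + Pmap 𝕜 g y := by
  unfold Pmap
  rw [← Summable.tsum_add (on_summable_smul hg _ (bessel hg x))
    (on_summable_smul hg _ (bessel hg y))]
  congr 1; funext n; rw [inner_add_right, add_smul]

lemma Pmap_smul (hg : Orthonormal 𝕜 g) (c : 𝕜) (x : H) :
    Pmap 𝕜 g (c • x) = c • Pmap 𝕜 g x := by
  unfold Pmap
  rw [← Summable.tsum_const_smul c (on_summable_smul hg _ (bessel hg x))]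
  congr 1; funext n; rw [inner_smul_right, mul_smul, smul_smul]

lemma Vmap_add (hg : Orthonormal 𝕜 g) (hr0 : ∀ n, 0 ≤ r n) (hr1 : ∀ n, r n ≤ 1) (x y : H) :
    Vmap 𝕜 g r (x + y) = Vmap 𝕜 g r x + Vmap 𝕜 g r y := by
  unfold Vmap
  rw [← Summable.tsum_add
    (on_summable_smul_shift hg _ (coef_summable hg hr0 hr1 x))
    (on_summable_smul_shift hg _ (coef_summable hg hr0 hr1 y))]
  congr 1; funext n; rw [inner_add_right, mul_add, add_smul]

lemma Vmap_smul (hg : Orthonormal 𝕜 g) (hr0 : ∀ n, 0 ≤ r n) (hr1 : ∀ n, r n ≤ 1) (c : 𝕜) (x : H) :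
    Vmap 𝕜 g r (c • x) = c • Vmap 𝕜 g r x := by
  unfold Vmap
  rw [← Summable.tsum_const_smul c
    (on_summable_smul_shift hg _ (coef_summable hg hr0 hr1 x))]
  congr 1; funext n
  rw [inner_smul_right, smul_smul]
  ring_nf


variable {A : H →L[𝕜] H} {lam : ℤ → ℝ}

/-- Norm squared of `Tmap`. -/
lemma Tmap_norm_sq (hg : Orthonormal 𝕜 g) (hr0 : ∀ n, 0 ≤ r n) (hr1 : ∀ n, r n ≤ 1) (x : H) :
    ‖Tmap 𝕜 g r x‖ ^ 2
      = ‖x - Pmap 𝕜 g x‖ ^ 2 + ∑' n, ‖((r n : ℝ) : 𝕜) * ⟪g n, x⟫_𝕜‖ ^ 2 := by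
  have h := norm_expand (hg.comp _ shift_inj) (c := fun n => ((r n : ℝ) : 𝕜) * ⟪g n, x⟫_𝕜)
    (coef_summable hg hr0 hr1 x) (w := x - Pmap 𝕜 g x) (fun n => perp hg x _)
  simpa [Function.comp_def, Tmap, Vmap] using h

lemma x_norm_sq (hg : Orthonormal 𝕜 g) (x : H) :
    ‖x‖ ^ 2 = ‖x - Pmap 𝕜 g x‖ ^ 2 + ∑' n, ‖⟪g n, x⟫_𝕜‖ ^ 2 := by
  have h := norm_expand hg (c := fun n => ⟪g n, x⟫_𝕜) (bessel hg x)
    (w := x - Pmap 𝕜 g x) (fun n => perp hg x _)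
  rw [← h, Pmap, sub_add_cancel]

lemma Tmap_contract (hg : Orthonormal 𝕜 g) (hr0 : ∀ n, 0 ≤ r n) (hr1 : ∀ n, r n ≤ 1) (x : H) :
    ‖Tmap 𝕜 g r x‖ ≤ ‖x‖ := by
  have h1 := Tmap_norm_sq hg hr0 hr1 x
  have h2 := x_norm_sq hg x
  have hle : ‖Tmap 𝕜 g r x‖ ^ 2 ≤ ‖x‖ ^ 2 := by
    rw [h1, h2]
    gcongr _ + ?_
    apply Summable.tsum_le_tsum _ (coef_summable hg hr0 hr1 x) (bessel hg x)
    intro n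
    rw [norm_mul, RCLike.norm_ofReal, abs_of_nonneg (hr0 n), mul_pow]
    calc r n ^ 2 * ‖⟪g n, x⟫_𝕜‖ ^ 2 ≤ 1 ^ 2 * ‖⟪g n, x⟫_𝕜‖ ^ 2 := by
          gcongr
          · exact hr0 n
          · exact hr1 n
      _ = ‖⟪g n, x⟫_𝕜‖ ^ 2 := by ring
  have := Real.sqrt_le_sqrt hle
  rwa [Real.sqrt_sq (norm_nonneg _), Real.sqrt_sq (norm_nonneg _)] at this

/-- `Tmap` preserves the quadratic form. -/
lemma Tmap_quad (hA : IsSelfAdjoint A) (hg : Orthonormal 𝕜 g)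
    (heig : ∀ n, A (g n) = ((lam n : ℝ) : 𝕜) • g n)
    (cm CM : ℝ) (hc0 : 0 < cm) (hlb : ∀ n, cm ≤ lam n) (hub : ∀ n, lam n ≤ CM)
    (hmono : Monotone lam)
    (hr : ∀ n, r n = Real.sqrt (lam n / lam (n + 1))) (x : H) :
    RCLike.re ⟪Tmap 𝕜 g r x, A (Tmap 𝕜 g r x)⟫_𝕜 = RCLike.re ⟪x, A x⟫_𝕜 := by
  have hpos : ∀ n, 0 < lam n := fun n => lt_of_lt_of_le hc0 (hlb n)
  have habs : ∀ n : ℤ, |lam n| ≤ CM := fun n =>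
    abs_le.2 ⟨by linarith [hlb n, hub n, hc0], hub n⟩
  have hr0 : ∀ n, 0 ≤ r n := fun n => by rw [hr n]; positivity
  have hr1 : ∀ n, r n ≤ 1 := by
    intro n
    rw [hr n]
    rw [show (1:ℝ) = Real.sqrt 1 by simp]
    apply Real.sqrt_le_sqrt
    rw [div_le_one (hpos (n+1))]
    exact hmono (by omega)
  have hrsq : ∀ n, r n ^ 2 = lam n / lam (n + 1) := fun n => by
    rw [hr n, Real.sq_sqrt (le_of_lt (div_pos (hpos n) (hpos (n+1))))]
  -- left side
  have hL := quad_expand A hA (hg.comp _ shift_inj) (fun n => lam (n + 1))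
    (fun n => by simpa [Function.comp_def] using heig (n + 1)) CM (fun n => habs (n + 1))
    (c := fun n => ((r n : ℝ) : 𝕜) * ⟪g n, x⟫_𝕜) (coef_summable hg hr0 hr1 x)
    (w := x - Pmap 𝕜 g x) (fun n => perp hg x _)
  have hR := quad_expand A hA hg lam heig CM habs
    (c := fun n => ⟪g n, x⟫_𝕜) (bessel hg x)
    (w := x - Pmap 𝕜 g x) (fun n => perp hg x _)
  have hTx : Tmap 𝕜 g r x = (x - Pmap 𝕜 g x) + ∑' n, (((r n : ℝ) : 𝕜) * ⟪g n, x⟫_𝕜) • (g ∘ fun k => k + 1) n := by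
    simp [Tmap, Vmap, Function.comp_def]
  have hx : x = (x - Pmap 𝕜 g x) + ∑' n, (⟪g n, x⟫_𝕜) • g n := by
    rw [Pmap, sub_add_cancel]
  rw [hTx, hL]
  conv_rhs => rw [hx]
  rw [hR]
  congr 1
  apply tsum_congr
  intro n
  simp only [norm_mul, RCLike.norm_ofReal, abs_of_nonneg (hr0 n), mul_pow, hrsq n]
  have hne : lam (n + 1) ≠ 0 := (hpos (n + 1)).ne'
  have hsc : lam (n + 1) * (lam n / lam (n + 1)) = lam n := by field_simp
  calc lam (n + 1) * (lam n / lam (n + 1) * ‖⟪g n, x⟫_𝕜‖ ^ 2)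
      = lam (n + 1) * (lam n / lam (n + 1)) * ‖⟪g n, x⟫_𝕜‖ ^ 2 := by ring
    _ = lam n * ‖⟪g n, x⟫_𝕜‖ ^ 2 := by rw [hsc]

lemma Tmap_g0 (hg : Orthonormal 𝕜 g) (hr0 : ∀ n, 0 ≤ r n) (hr1 : ∀ n, r n ≤ 1) :
    Tmap 𝕜 g r (g 0) = ((r 0 : ℝ) : 𝕜) • g 1 := by
  have hcoef : ∀ n : ℤ, ⟪g n, g 0⟫_𝕜 = if n = 0 then 1 else 0 := fun n =>
    orthonormal_iff_ite.mp hg n 0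
  have hP : Pmap 𝕜 g (g 0) = g 0 := by
    rw [Pmap, tsum_eq_single 0]
    · rw [hcoef 0]; simp
    · intro n hn; rw [hcoef n]; simp [hn]
  have hV : Vmap 𝕜 g r (g 0) = ((r 0 : ℝ) : 𝕜) • g 1 := by
    rw [Vmap, tsum_eq_single 0]
    · rw [hcoef 0]; norm_num
    · intro n hn; rw [hcoef n]; simp [hn]
  rw [Tmap, hP, hV, sub_self, zero_add]

lemma Tmap_inj (hg : Orthonormal 𝕜 g) (hr0 : ∀ n, 0 < r n) (hr1 : ∀ n, r n ≤ 1) (x : H)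
    (hx : Tmap 𝕜 g r x = 0) : x = 0 := by
  have hr0' : ∀ n, 0 ≤ r n := fun n => (hr0 n).le
  have hcoefs : ∀ m : ℤ, ((r m : ℝ) : 𝕜) * ⟪g m, x⟫_𝕜 = 0 := by
    intro m
    have h1 : ⟪g (m + 1), Tmap 𝕜 g r x⟫_𝕜 = ((r m : ℝ) : 𝕜) * ⟪g m, x⟫_𝕜 := by
      rw [Tmap, inner_add_right, perp hg x (m + 1), zero_add, Vmap,
        on_inner_tsum_smul_shift hg (coef_summable hg hr0' hr1 x) m]
    rw [← h1, hx, inner_zero_right]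
  have hinner : ∀ m : ℤ, ⟪g m, x⟫_𝕜 = 0 := by
    intro m
    have := hcoefs m
    rcases mul_eq_zero.mp this with h | h
    · exfalso
      have : (r m : ℝ) ≠ 0 := (hr0 m).ne'
      simp [RCLike.ofReal_eq_zero] at h
      exact this h
    · exact h
  have hP : Pmap 𝕜 g x = 0 := by
    rw [Pmap]
    convert tsum_zero with n
    rw [hinner n, zero_smul]
  have hV : Vmap 𝕜 g r x = 0 := by
    rw [Vmap]
    convert tsum_zero with n
    rw [hinner n, mul_zero, zero_smul]
  have := hx
  rw [Tmap, hP, hV, sub_zero, add_zero] at this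
  exact this

lemma Tmap_surj (hA : IsSelfAdjoint A) (hg : Orthonormal 𝕜 g)
    (heig : ∀ n, A (g n) = ((lam n : ℝ) : 𝕜) • g n)
    (cm CM : ℝ) (hc0 : 0 < cm) (hlb : ∀ n, cm ≤ lam n) (hub : ∀ n, lam n ≤ CM)
    (hmono : Monotone lam)
    (hr : ∀ n, r n = Real.sqrt (lam n / lam (n + 1))) (y : H) :
    ∃ x : H, Tmap 𝕜 g r x = y ∧ RCLike.re ⟪x, A x⟫_𝕜 = RCLike.re ⟪y, A y⟫_𝕜 := by
  have hpos : ∀ n, 0 < lam n := fun n => lt_of_lt_of_le hc0 (hlb n)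
  have hrpos : ∀ n, 0 < r n := fun n => by
    rw [hr n]; exact Real.sqrt_pos.2 (div_pos (hpos n) (hpos (n+1)))
  have hrsq : ∀ n, r n ^ 2 = lam n / lam (n + 1) := fun n => by
    rw [hr n, Real.sq_sqrt (le_of_lt (div_pos (hpos n) (hpos (n+1))))]
  -- coefficients of the preimage
  set b : ℤ → 𝕜 := fun n => (((r n)⁻¹ : ℝ) : 𝕜) * ⟪g (n + 1), y⟫_𝕜 with hb
  have hshift : Summable fun n : ℤ => ‖⟪g (n + 1), y⟫_𝕜‖ ^ 2 := by
    have := (bessel hg y).comp_injective (add_left_injective (1 : ℤ))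
    simpa [Function.comp_def] using this
  have hrinv_sq : ∀ n, ((r n)⁻¹) ^ 2 ≤ CM / cm := by
    intro n
    rw [inv_pow, hrsq n, inv_div]
    exact div_le_div₀ (by linarith [hlb 0, hub 0]) (hub (n+1)) hc0 (hlb n)
  have hbsum : Summable fun n => ‖b n‖ ^ 2 := by
    apply Summable.of_nonneg_of_le (fun n => by positivity) (fun n => ?_)
      (hshift.mul_left (CM / cm))
    rw [hb]
    simp only [norm_mul, RCLike.norm_ofReal, mul_pow, abs_of_nonneg (inv_nonneg.2 (hrpos n).le)]
    exact mul_le_mul_of_nonneg_right (hrinv_sq n) (by positivity)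
  set x : H := (y - Pmap 𝕜 g y) + ∑' n, b n • g n with hxdef
  -- inner products of x with the g's
  have hax : ∀ m : ℤ, ⟪g m, x⟫_𝕜 = b m := by
    intro m
    rw [hxdef, inner_add_right, perp hg y m, zero_add, on_inner_tsum_smul hg hbsum m]
  have hPx : Pmap 𝕜 g x = ∑' n, b n • g n := by
    rw [Pmap]
    apply tsum_congr
    intro n
    rw [hax n]
  have hwx : x - Pmap 𝕜 g x = y - Pmap 𝕜 g y := by
    rw [hPx, hxdef, add_sub_cancel_right]
  have hVx : Vmap 𝕜 g r x = Pmap 𝕜 g y := by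
    rw [Vmap]
    have hterm : ∀ n : ℤ, (((r n : ℝ) : 𝕜) * ⟪g n, x⟫_𝕜) • g (n + 1)
        = ⟪g (n + 1), y⟫_𝕜 • g (n + 1) := by
      intro n
      rw [hax n, hb]
      have : ((r n : ℝ) : 𝕜) * ((((r n)⁻¹ : ℝ) : 𝕜) * ⟪g (n + 1), y⟫_𝕜)
          = ⟪g (n + 1), y⟫_𝕜 := by
        rw [← mul_assoc, ← RCLike.ofReal_mul, mul_inv_cancel₀ (hrpos n).ne', RCLike.ofReal_one,
          one_mul]
      rw [this]
    rw [tsum_congr hterm]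
    have := (Equiv.addRight (1 : ℤ)).tsum_eq (fun m => ⟪g m, y⟫_𝕜 • g m)
    simpa [Pmap] using this
  refine ⟨x, ?_, ?_⟩
  · rw [Tmap, hwx, hVx, Pmap, sub_add_cancel]
  · -- quadratic forms agree
    have hCM := fun n => abs_le.2 ⟨by linarith [hlb n, hub n, hc0], hub n⟩
    have hqx := quad_expand A hA hg lam heig CM hCM (c := b) hbsum
      (w := y - Pmap 𝕜 g y) (fun n => by rw [← hwx]; exact perp hg x n)
    have hqy := quad_expand A hA hg lam heig CM hCM (c := fun n => ⟪g n, y⟫_𝕜) (bessel hg y)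
      (w := y - Pmap 𝕜 g y) (fun n => perp hg y n)
    have hx' : x = (y - Pmap 𝕜 g y) + ∑' n, b n • g n := hxdef
    have hy' : y = (y - Pmap 𝕜 g y) + ∑' n, (⟪g n, y⟫_𝕜) • g n := by
      rw [Pmap, sub_add_cancel]
    rw [hx', hqx]
    conv_rhs => rw [hy', hqy]
    congr 1
    have hre : ∀ n : ℤ, lam n * ‖b n‖ ^ 2 = lam (n + 1) * ‖⟪g (n + 1), y⟫_𝕜‖ ^ 2 := by
      intro n
      rw [hb]
      simp only [norm_mul, RCLike.norm_ofReal, mul_pow,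
        abs_of_nonneg (inv_nonneg.2 (hrpos n).le), inv_pow, hrsq n, inv_div]
      have hne : lam n ≠ 0 := (hpos n).ne'
      field_simp
    rw [tsum_congr hre]
    have := (Equiv.addRight (1 : ℤ)).tsum_eq (fun m => lam m * ‖⟪g m, y⟫_𝕜‖ ^ 2)
    simpa using this

theorem not_plastic_of_seq (A : H →L[𝕜] H) (hA : IsSelfAdjoint A)
    (lam : ℤ → ℝ) (g : ℤ → H) (hg : Orthonormal 𝕜 g)
    (heig : ∀ n, A (g n) = ((lam n : ℝ) : 𝕜) • g n)
    (cm CM : ℝ) (hc0 : 0 < cm) (hlb : ∀ n, cm ≤ lam n) (hub : ∀ n, lam n ≤ CM)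
    (hmono : Monotone lam) (hstrict : lam 0 < lam 1) :
    ¬ IsLECPlastic 𝕜 {x : H | RCLike.re (inner 𝕜 x (A x) : 𝕜) ≤ 1} := by
  intro hpl
  have hpos : ∀ n, 0 < lam n := fun n => lt_of_lt_of_le hc0 (hlb n)
  set r : ℤ → ℝ := fun n => Real.sqrt (lam n / lam (n + 1)) with hrdef
  have hr : ∀ n, r n = Real.sqrt (lam n / lam (n + 1)) := fun n => rfl
  have hrpos : ∀ n, 0 < r n := fun n =>
    Real.sqrt_pos.2 (div_pos (hpos n) (hpos (n + 1)))
  have hr0' : ∀ n, 0 ≤ r n := fun n => (hrpos n).le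
  have hr1 : ∀ n, r n ≤ 1 := by
    intro n
    rw [hr n, show (1 : ℝ) = Real.sqrt 1 by simp]
    apply Real.sqrt_le_sqrt
    rw [div_le_one (hpos (n + 1))]
    exact hmono (by omega)
  have hr0lt : r 0 < 1 := by
    rw [hr 0, show (1 : ℝ) = Real.sqrt 1 by simp]
    apply Real.sqrt_lt_sqrt (div_nonneg (hpos 0).le (hpos 1).le)
    rw [div_lt_one (hpos 1)]
    exact hstrict
  set T : H →ₗ[𝕜] H :=
    { toFun := Tmap 𝕜 g r
      map_add' := fun x y => by
        simp only [Tmap, Pmap_add hg, Vmap_add hg hr0' hr1]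
        abel
      map_smul' := fun c x => by
        simp only [Tmap, Pmap_smul hg, Vmap_smul hg hr0' hr1, RingHom.id_apply,
          smul_sub, smul_add] } with hTdef
  have hTapp : ∀ x, T x = Tmap 𝕜 g r x := fun x => rfl
  set M := {x : H | RCLike.re (inner 𝕜 x (A x) : 𝕜) ≤ 1} with hMdef
  have hq : ∀ x, RCLike.re ⟪Tmap 𝕜 g r x, A (Tmap 𝕜 g r x)⟫_𝕜 = RCLike.re ⟪x, A x⟫_𝕜 :=
    Tmap_quad hA hg heig cm CM hc0 hlb hub hmono hr
  have hbij : Set.BijOn T M M := by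
    refine ⟨?_, ?_, ?_⟩
    · intro x hx
      rw [hMdef, Set.mem_setOf_eq] at hx ⊢
      rw [hTapp, hq]
      exact hx
    · intro x _ y _ hxy
      rw [hTapp, hTapp] at hxy
      have hz : Tmap 𝕜 g r (x - y) = 0 := by
        have := map_sub T x y
        rw [hTapp, hTapp, hTapp] at this
        rw [this, hxy, sub_self]
      have := Tmap_inj hg hrpos hr1 (x - y) hz
      exact sub_eq_zero.mp this
    · intro y hy
      obtain ⟨x, hTx, hqx⟩ := Tmap_surj hA hg heig cm CM hc0 hlb hub hmono hr y
      refine ⟨x, ?_, by rw [hTapp, hTx]⟩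
      rw [hMdef, Set.mem_setOf_eq] at hy ⊢
      rw [hqx]
      exact hy
  have hnonexp : ∀ x ∈ M, ∀ y ∈ M, ‖T x - T y‖ ≤ ‖x - y‖ := by
    intro x _ y _
    rw [← map_sub, hTapp]
    exact Tmap_contract hg hr0' hr1 (x - y)
  have hiso := hpl T hbij hnonexp
  -- the witness point
  set s : ℝ := (Real.sqrt (lam 0))⁻¹ with hsdef
  have hs_pos : 0 < s := by
    rw [hsdef]
    exact inv_pos.2 (Real.sqrt_pos.2 (hpos 0))
  have hssq : s ^ 2 * lam 0 = 1 := by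
    rw [hsdef, inv_pow, Real.sq_sqrt (hpos 0).le, inv_mul_cancel₀ (hpos 0).ne']
  set x₀ : H := ((s : ℝ) : 𝕜) • g 0 with hx₀def
  have hg00 : ⟪g 0, g 0⟫_𝕜 = 1 := by
    have := orthonormal_iff_ite.mp hg 0 0
    simpa using this
  have hx₀M : x₀ ∈ M := by
    rw [hMdef, Set.mem_setOf_eq]
    have : (inner 𝕜 x₀ (A x₀) : 𝕜) = ((s ^ 2 * lam 0 : ℝ) : 𝕜) := by
      rw [hx₀def, map_smul, heig 0, inner_smul_left, inner_smul_right, inner_smul_right, hg00,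
        RCLike.conj_ofReal]
      push_cast
      ring
    rw [this, hssq]
    simp
  have h0M : (0 : H) ∈ M := by
    rw [hMdef, Set.mem_setOf_eq]
    simp
  have heq := hiso x₀ hx₀M 0 h0M
  rw [map_zero, sub_zero, sub_zero] at heq
  have hTx₀ : T x₀ = ((s : ℝ) : 𝕜) • (((r 0 : ℝ) : 𝕜) • g 1) := by
    rw [hTapp, hx₀def]
    have hlin : Tmap 𝕜 g r (((s : ℝ) : 𝕜) • g 0) = ((s : ℝ) : 𝕜) • Tmap 𝕜 g r (g 0) := by
      have := map_smul T ((s : ℝ) : 𝕜) (g 0)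
      rw [hTapp, hTapp] at this
      simpa using this
    rw [hlin, Tmap_g0 hg hr0' hr1]
  have hnorm1 : ‖g 1‖ = 1 := hg.1 1
  have hnorm0 : ‖g 0‖ = 1 := hg.1 0
  have hL : ‖T x₀‖ = s * r 0 := by
    rw [hTx₀, norm_smul, norm_smul, RCLike.norm_ofReal, RCLike.norm_ofReal, hnorm1,
      abs_of_nonneg hs_pos.le, abs_of_nonneg (hr0' 0), mul_one]
  have hR : ‖x₀‖ = s := by
    rw [hx₀def, norm_smul, RCLike.norm_ofReal, hnorm0, abs_of_nonneg hs_pos.le, mul_one]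
  rw [hL, hR] at heq
  nlinarith [hs_pos, hr0lt]

end Construction

section Spectral
variable {𝕜 H : Type*} [RCLike 𝕜] [NormedAddCommGroup H] [InnerProductSpace 𝕜 H]
  [CompleteSpace H]

lemma exists_unit_eigenvector (A : H →L[𝕜] H) {μ : ℝ}
    (h : Module.End.HasEigenvalue (A : H →ₗ[𝕜] H) (μ : 𝕜)) :
    ∃ v : H, ‖v‖ = 1 ∧ A v = ((μ : ℝ) : 𝕜) • v := by
  obtain ⟨v, hv, hv0⟩ := Submodule.exists_mem_ne_zero_of_ne_bot h
  rw [Module.End.mem_eigenspace_iff] at hv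
  refine ⟨((‖v‖⁻¹ : ℝ) : 𝕜) • v, ?_, ?_⟩
  · rw [norm_smul, RCLike.norm_ofReal, abs_of_nonneg (inv_nonneg.2 (norm_nonneg v)),
      inv_mul_cancel₀ (norm_ne_zero_iff.2 hv0)]
  · rw [map_smul]
    have : A v = ((μ : ℝ) : 𝕜) • v := hv
    rw [this, smul_comm]

lemma eig_mem_Icc (A : H →L[𝕜] H) {c : ℝ} (hc : ∀ x : H, ‖x‖ = 1 → c ≤ RCLike.re (inner 𝕜 (A x) x : 𝕜))
    {μ : ℝ} {v : H} (hv : ‖v‖ = 1) (hAv : A v = ((μ : ℝ) : 𝕜) • v) :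
    c ≤ μ ∧ μ ≤ ‖A‖ := by
  have hvv : (inner 𝕜 v v : 𝕜) = 1 := by
    rw [@inner_self_eq_norm_sq_to_K 𝕜, hv]
    norm_num
  have hin : (inner 𝕜 (A v) v : 𝕜) = ((μ : ℝ) : 𝕜) := by
    rw [hAv, inner_smul_left, hvv, RCLike.conj_ofReal, mul_one]
  have hre : RCLike.re (inner 𝕜 (A v) v : 𝕜) = μ := by rw [hin, RCLike.ofReal_re]
  constructor
  · have := hc v hv
    rwa [hre] at this
  · calc μ = RCLike.re (inner 𝕜 (A v) v : 𝕜) := hre.symm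
      _ ≤ ‖(inner 𝕜 (A v) v : 𝕜)‖ := RCLike.re_le_norm _
      _ ≤ ‖A v‖ * ‖v‖ := norm_inner_le_norm _ _
      _ ≤ ‖A‖ * ‖v‖ * ‖v‖ := by
          gcongr
          exact A.le_opNorm v
      _ = ‖A‖ := by rw [hv]; ring

lemma eigvec_orthogonal {A : H →L[𝕜] H} (hA : IsSelfAdjoint A) {μ ν : ℝ} {v w : H}
    (hv : A v = ((μ : ℝ) : 𝕜) • v) (hw : A w = ((ν : ℝ) : 𝕜) • w) (hne : μ ≠ ν) :
    ⟪v, w⟫_𝕜 = 0 := by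
  have hsym := hA.isSymmetric v w
  simp only [ContinuousLinearMap.coe_coe] at hsym
  rw [hv, hw, inner_smul_left, inner_smul_right, RCLike.conj_ofReal] at hsym
  have : (((μ : ℝ) : 𝕜) - ((ν : ℝ) : 𝕜)) * ⟪v, w⟫_𝕜 = 0 := by
    rw [sub_mul]
    rw [hsym]
    ring
  rcases mul_eq_zero.mp this with h | h
  · exfalso
    apply hne
    have := sub_eq_zero.mp h
    exact_mod_cast this
  · exact h

lemma exists_orthonormal_seq_of_infdim (K : Submodule 𝕜 H) (hK : ¬ FiniteDimensional 𝕜 K) :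
    ∃ e : ℕ → H, Orthonormal 𝕜 e ∧ ∀ n, e n ∈ K := by
  have b := Module.Basis.ofVectorSpace 𝕜 K
  have hinf : Infinite (Module.Basis.ofVectorSpaceIndex 𝕜 K) := by
    by_contra hfin
    rw [not_infinite_iff_finite] at hfin
    exact hK (Module.Basis.finiteDimensional_of_finite b)
  let emb := Infinite.natEmbedding (Module.Basis.ofVectorSpaceIndex 𝕜 K)
  let f : ℕ → H := fun n => (b (emb n) : H)
  have hfK : ∀ n, f n ∈ K := fun n => (b (emb n)).2
  have hli : LinearIndependent 𝕜 f :=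
    (b.linearIndependent.comp emb emb.injective).map' K.subtype K.ker_subtype
  refine ⟨InnerProductSpace.gramSchmidtNormed 𝕜 f, InnerProductSpace.gramSchmidtNormed_orthonormal hli, fun n => ?_⟩
  have h1 : InnerProductSpace.gramSchmidtNormed 𝕜 f n ∈ Submodule.span 𝕜 (Set.range (InnerProductSpace.gramSchmidtNormed 𝕜 f)) :=
    Submodule.subset_span ⟨n, rfl⟩
  rw [InnerProductSpace.span_gramSchmidtNormed_range, InnerProductSpace.span_gramSchmidt] at h1
  have h2 : Submodule.span 𝕜 (Set.range f) ≤ K := by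
    rw [Submodule.span_le]
    rintro _ ⟨n, rfl⟩
    exact hfK n
  exact h2 h1

end Spectral

section Chains
variable {𝕜 H : Type*} [RCLike 𝕜] [NormedAddCommGroup H] [InnerProductSpace 𝕜 H]
  [CompleteSpace H]

lemma left_chain (A : H →L[𝕜] H) (hA : IsSelfAdjoint A) (B : Set ℝ)
    (hBeig : ∀ μ ∈ B, Module.End.HasEigenvalue (A : H →ₗ[𝕜] H) (μ : 𝕜))
    (hBmin : ∀ m ∈ B, (∀ b ∈ B, m ≤ b) →
      ¬ FiniteDimensional 𝕜 (Module.End.eigenspace (A : H →ₗ[𝕜] H) (m : 𝕜)))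
    {p : ℝ} (hp : p ∈ B) :
    ∃ (α : ℕ → ℝ) (e : ℕ → H), Orthonormal 𝕜 e ∧
      (∀ k, A (e k) = ((α k : ℝ) : 𝕜) • e k) ∧ Antitone α ∧ (∀ k, α k ∈ B) ∧ α 0 ≤ p := by
  by_cases hmin : ∃ m ∈ B, ∀ b ∈ B, m ≤ b
  · obtain ⟨m, hmB, hmle⟩ := hmin
    obtain ⟨e, he, heK⟩ := exists_orthonormal_seq_of_infdim
      (Module.End.eigenspace (A : H →ₗ[𝕜] H) (m : 𝕜)) (hBmin m hmB hmle)
    refine ⟨fun _ => m, e, he, fun k => ?_, antitone_const, fun _ => hmB, hmle p hp⟩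
    have := Module.End.mem_eigenspace_iff.mp (heK k)
    simpa using this
  · push_neg at hmin
    have hstep : ∀ x : {x : ℝ // x ∈ B}, ∃ y : {y : ℝ // y ∈ B}, (y : ℝ) < x := by
      rintro ⟨x, hx⟩
      obtain ⟨y, hy, hylt⟩ := hmin x hx
      exact ⟨⟨y, hy⟩, hylt⟩
    choose F hF using hstep
    set d : ℕ → {x : ℝ // x ∈ B} := fun k => F^[k] ⟨p, hp⟩ with hd
    have hanti : StrictAnti fun k => (d k : ℝ) := by
      apply strictAnti_nat_of_succ_lt
      intro k
      have : d (k + 1) = F (d k) := Function.iterate_succ_apply' F k _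
      rw [this]
      exact hF (d k)
    have hvec : ∀ k, ∃ v : H, ‖v‖ = 1 ∧ A v = (((d k : ℝ) : ℝ) : 𝕜) • v := fun k =>
      exists_unit_eigenvector A (hBeig _ (d k).2)
    choose e he1 he2 using hvec
    refine ⟨fun k => (d k : ℝ), e, ⟨he1, fun i j hij => ?_⟩, he2,
      hanti.antitone, fun k => (d k).2, le_of_eq (by rw [hd]; simp)⟩
    exact eigvec_orthogonal hA (he2 i) (he2 j) (fun h => hij (hanti.injective h))

lemma right_chain (A : H →L[𝕜] H) (hA : IsSelfAdjoint A) (B : Set ℝ)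
    (hBeig : ∀ μ ∈ B, Module.End.HasEigenvalue (A : H →ₗ[𝕜] H) (μ : 𝕜))
    (hBmax : ∀ m ∈ B, (∀ b ∈ B, b ≤ m) →
      ¬ FiniteDimensional 𝕜 (Module.End.eigenspace (A : H →ₗ[𝕜] H) (m : 𝕜)))
    {q : ℝ} (hq : q ∈ B) :
    ∃ (β : ℕ → ℝ) (f : ℕ → H), Orthonormal 𝕜 f ∧
      (∀ k, A (f k) = ((β k : ℝ) : 𝕜) • f k) ∧ Monotone β ∧ (∀ k, β k ∈ B) ∧ q ≤ β 0 := by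
  by_cases hmax : ∃ m ∈ B, ∀ b ∈ B, b ≤ m
  · obtain ⟨m, hmB, hmle⟩ := hmax
    obtain ⟨e, he, heK⟩ := exists_orthonormal_seq_of_infdim
      (Module.End.eigenspace (A : H →ₗ[𝕜] H) (m : 𝕜)) (hBmax m hmB hmle)
    refine ⟨fun _ => m, e, he, fun k => ?_, monotone_const, fun _ => hmB, hmle q hq⟩
    have := Module.End.mem_eigenspace_iff.mp (heK k)
    simpa using this
  · push_neg at hmax
    have hstep : ∀ x : {x : ℝ // x ∈ B}, ∃ y : {y : ℝ // y ∈ B}, (x : ℝ) < y := by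
      rintro ⟨x, hx⟩
      obtain ⟨y, hy, hylt⟩ := hmax x hx
      exact ⟨⟨y, hy⟩, hylt⟩
    choose F hF using hstep
    set d : ℕ → {x : ℝ // x ∈ B} := fun k => F^[k] ⟨q, hq⟩ with hd
    have hmono : StrictMono fun k => (d k : ℝ) := by
      apply strictMono_nat_of_lt_succ
      intro k
      have : d (k + 1) = F (d k) := Function.iterate_succ_apply' F k _
      rw [this]
      exact hF (d k)
    have hvec : ∀ k, ∃ v : H, ‖v‖ = 1 ∧ A v = (((d k : ℝ) : ℝ) : 𝕜) • v := fun k =>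
      exists_unit_eigenvector A (hBeig _ (d k).2)
    choose e he1 he2 using hvec
    refine ⟨fun k => (d k : ℝ), e, ⟨he1, fun i j hij => ?_⟩, he2,
      hmono.monotone, fun k => (d k).2, ge_of_eq (by rw [hd]; simp)⟩
    exact eigvec_orthogonal hA (he2 i) (he2 j) (fun h => hij (hmono.injective h))

end Chains

/-- If the set of eigenvalues of a bounded self-adjoint operator `A`
(positively bounded below on the sphere) on a separable infinite-dimensional Hilbert space
contains a subset `B` with at least two elements such that any minimum of `B` has
infinite-dimensional eigenspace and any maximum of `B` has infinite-dimensional eigenspace,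
then the ellipsoid `E = {x | ⟨x, Ax⟩ ≤ 1}` is not LEC-plastic. -/
theorem ellipsoid_not_LECPlastic_of_bad_eigenvalue_set
    {𝕜 H : Type*} [RCLike 𝕜] [NormedAddCommGroup H] [InnerProductSpace 𝕜 H]
    [CompleteSpace H] [TopologicalSpace.SeparableSpace H]
    (hinf : ¬ FiniteDimensional 𝕜 H)
    (A : H →L[𝕜] H) (hA : IsSelfAdjoint A)
    (hpos : ∃ c : ℝ, 0 < c ∧ ∀ x : H, ‖x‖ = 1 → c ≤ RCLike.re (inner 𝕜 (A x) x : 𝕜))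
    (B : Set ℝ)
    (hBeig : ∀ μ ∈ B, Module.End.HasEigenvalue (A : H →ₗ[𝕜] H) (μ : 𝕜))
    (hBtwo : B.Nontrivial)
    (hBmin : ∀ m ∈ B, (∀ b ∈ B, m ≤ b) →
      ¬ FiniteDimensional 𝕜 (Module.End.eigenspace (A : H →ₗ[𝕜] H) (m : 𝕜)))
    (hBmax : ∀ m ∈ B, (∀ b ∈ B, b ≤ m) →
      ¬ FiniteDimensional 𝕜 (Module.End.eigenspace (A : H →ₗ[𝕜] H) (m : 𝕜))) :
    ¬ IsLECPlastic 𝕜 {x : H | RCLike.re (inner 𝕜 x (A x) : 𝕜) ≤ 1} := by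
  obtain ⟨c, hc0, hc⟩ := hpos
  -- two distinct elements p < q of B
  obtain ⟨p₀, hp₀, q₀, hq₀, hne⟩ := hBtwo
  obtain ⟨p, q, hp, hq, hpq⟩ : ∃ p q : ℝ, p ∈ B ∧ q ∈ B ∧ p < q := by
    rcases lt_or_gt_of_ne hne with h | h
    · exact ⟨p₀, q₀, hp₀, hq₀, h⟩
    · exact ⟨q₀, p₀, hq₀, hp₀, h⟩
  obtain ⟨α, e, he, heig, hαanti, hαB, hα0⟩ := left_chain A hA B hBeig hBmin hp
  obtain ⟨β, f, hf, hfeig, hβmono, hβB, hβ0⟩ := right_chain A hA B hBeig hBmax hq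
  -- assemble two-sided sequences
  set lam : ℤ → ℝ := fun n => if n ≤ 0 then α (-n).toNat else β (n - 1).toNat with hlam
  set g : ℤ → H := fun n => if n ≤ 0 then e (-n).toNat else f (n - 1).toNat with hgdef
  have hglam : ∀ n : ℤ, A (g n) = ((lam n : ℝ) : 𝕜) • g n := by
    intro n
    rw [hlam, hgdef]
    by_cases h : n ≤ 0
    · simp only [h, if_true]
      exact heig _
    · simp only [h, if_false]
      exact hfeig _
  -- eigenvalue bounds
  have hlamB : ∀ n, lam n ∈ B := by
    intro n
    rw [hlam]
    by_cases h : n ≤ 0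
    · simp only [h, if_true]; exact hαB _
    · simp only [h, if_false]; exact hβB _
  have hgnorm : ∀ n, ‖g n‖ = 1 := by
    intro n
    rw [hgdef]
    by_cases h : n ≤ 0
    · simp only [h, if_true]; exact he.1 _
    · simp only [h, if_false]; exact hf.1 _
  have hbounds : ∀ n, c ≤ lam n ∧ lam n ≤ ‖A‖ := fun n =>
    eig_mem_Icc A hc (hgnorm n) (hglam n)
  -- key order facts
  have hαle : ∀ k, α k ≤ p := fun k => le_trans (hαanti (Nat.zero_le k)) hα0
  have hβge : ∀ k, q ≤ β k := fun k => le_trans hβ0 (hβmono (Nat.zero_le k))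
  -- orthonormality of g
  have hg : Orthonormal 𝕜 g := by
    constructor
    · exact hgnorm
    · intro i j hij
      rw [hgdef]
      by_cases hi : i ≤ 0 <;> by_cases hj : j ≤ 0
      · simp only [hi, hj, if_true]
        apply he.2
        intro hcon
        apply hij
        omega
      · simp only [hi, hj, if_true, if_false]
        apply eigvec_orthogonal hA (heig _) (hfeig _)
        have h1 : α (-i).toNat ≤ p := hαle _
        have h2 : q ≤ β (j - 1).toNat := hβge _
        intro hcon
        rw [hcon] at h1
        linarith
      · simp only [hi, hj, if_false, if_true]
        apply eigvec_orthogonal hA (hfeig _) (heig _)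
        have h1 : α (-j).toNat ≤ p := hαle _
        have h2 : q ≤ β (i - 1).toNat := hβge _
        intro hcon
        rw [hcon] at h2
        linarith
      · simp only [hi, hj, if_false]
        apply hf.2
        intro hcon
        apply hij
        omega
  -- monotonicity
  have hmono : Monotone lam := by
    apply monotone_int_of_le_succ
    intro n
    rw [hlam]
    by_cases h1 : n + 1 ≤ 0
    · have h0 : n ≤ 0 := by omega
      simp only [h0, h1, if_true]
      apply hαanti
      omega
    · by_cases h0 : n ≤ 0
      · have hn : n = 0 := by omega
        subst hn
        simp only [le_refl, if_true, h1, if_false]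
        calc α 0 ≤ p := hα0
          _ ≤ q := hpq.le
          _ ≤ β (1 - 1 : ℤ).toNat := by simpa using hβ0
      · simp only [h0, h1, if_false]
        apply hβmono
        omega
  have hstrict : lam 0 < lam 1 := by
    rw [hlam]
    norm_num
    calc α 0 ≤ p := hα0
      _ < q := hpq
      _ ≤ β (1 - 1 : ℤ).toNat := by simpa using hβ0
  exact not_plastic_of_seq A hA lam g hg hglam c ‖A‖ hc0 (fun n => (hbounds n).1)
    (fun n => (hbounds n).2) hmono hstrict
end

section
/- Let H = L²[1,2] and let A : L²[1,2] → L²[1,2] be the multiplication operator (Af)(t) = t·f(t). Then the ellipsoid E = {f ∈ L²[1,2] : ∫₁² t·|f(t)|² dt ≤ 1} generated by A is not LEC-plastic; that is, there exists a linear operator T : L²[1,2] → L²[1,2] whose restriction to E is a non-expansive bijection from E onto E but which is not an isometry on E. -/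
open MeasureTheory Set
open scoped ENNReal

noncomputable section EllAux

namespace EllAux

def phi (t : ℝ) : ℝ := 1 + (t - 1) ^ 2
def psi (s : ℝ) : ℝ := 1 + Real.sqrt (s - 1)
def w (t : ℝ) : ℝ := Real.sqrt ((1 + (t - 1) ^ 2) * (2 * (t - 1)) / t)
def u (s : ℝ) : ℝ := (w (psi s))⁻¹

abbrev I : Set ℝ := Set.Ioo (1 : ℝ) 2
abbrev μ : Measure ℝ := volume.restrict (Set.Icc (1 : ℝ) 2)

lemma μ_eq : μ = volume.restrict I :=
  (Measure.restrict_congr_set Ioo_ae_eq_Icc).symm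

lemma phi_psi {s : ℝ} (hs : 1 ≤ s) : phi (psi s) = s := by
  simp [phi, psi, Real.sq_sqrt (by linarith : (0:ℝ) ≤ s - 1)]

lemma psi_phi {t : ℝ} (ht : 1 ≤ t) : psi (phi t) = t := by
  simp only [phi, psi, add_sub_cancel_left, Real.sqrt_sq (by linarith : (0:ℝ) ≤ t - 1)]
  ring

lemma phi_mem {t : ℝ} (ht : t ∈ I) : phi t ∈ I := by
  obtain ⟨h1, h2⟩ := ht
  simp only [phi, Set.mem_Ioo]
  constructor <;> nlinarith

lemma psi_mem {s : ℝ} (hs : s ∈ I) : psi s ∈ I := by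
  obtain ⟨h1, h2⟩ := hs
  have h0 : (0:ℝ) < s - 1 := by linarith
  have hs1 : 0 < Real.sqrt (s - 1) := Real.sqrt_pos.2 h0
  have hs2 : Real.sqrt (s - 1) < 1 := by
    have : Real.sqrt (s-1) < Real.sqrt 1 := Real.sqrt_lt_sqrt (le_of_lt h0) (by linarith)
    simpa using this
  simp only [psi, Set.mem_Ioo]
  constructor <;> linarith

lemma image_phi : phi '' I = I := by
  apply Subset.antisymm
  · rintro s ⟨t, ht, rfl⟩; exact phi_mem ht
  · intro s hs; exact ⟨psi s, psi_mem hs, phi_psi (le_of_lt hs.1)⟩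

lemma image_psi : psi '' I = I := by
  apply Subset.antisymm
  · rintro t ⟨s, hs, rfl⟩; exact psi_mem hs
  · intro t ht; exact ⟨phi t, phi_mem ht, psi_phi (le_of_lt ht.1)⟩

lemma injOn_phi : InjOn phi I := by
  intro a ha b hb h
  have h2 : (a - b) * (a + b - 2) = 0 := by
    have : (a-1)^2 = (b-1)^2 := by simpa [phi] using h
    linear_combination this
  rcases mul_eq_zero.1 h2 with h3 | h3
  · linarith
  · exfalso; obtain ⟨ha1, _⟩ := ha; obtain ⟨hb1, _⟩ := hb; linarith

lemma injOn_psi : InjOn psi I := by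
  intro a ha b hb h
  have h1 : Real.sqrt (a-1) = Real.sqrt (b-1) := by simpa [psi] using h
  have h2 : a - 1 = b - 1 := by
    have := congrArg (fun x => x ^ 2) h1
    simpa [Real.sq_sqrt (by linarith [ha.1] : (0:ℝ) ≤ a - 1),
      Real.sq_sqrt (by linarith [hb.1] : (0:ℝ) ≤ b - 1)] using this
  linarith

lemma hasDeriv_phi {t : ℝ} : HasDerivWithinAt phi (2 * (t - 1)) I t := by
  have : HasDerivAt phi (2 * (t - 1)) t := by
    have h : HasDerivAt (fun t : ℝ => 1 + (t - 1) ^ 2) (2 * (t-1) ^ 1 * 1) t := by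
      exact (((hasDerivAt_id t).sub_const 1).pow 2).const_add 1
    simpa [show phi = fun t : ℝ => 1 + (t - 1) ^ 2 from rfl] using h
  exact this.hasDerivWithinAt

lemma hasDeriv_psi {s : ℝ} (hs : s ∈ I) :
    HasDerivWithinAt psi (1 / (2 * Real.sqrt (s - 1))) I s := by
  have h0 : s - 1 ≠ 0 := by have := hs.1; intro h; linarith
  have h1 : HasDerivAt (fun s : ℝ => s - 1) 1 s := (hasDerivAt_id s).sub_const 1
  have h2 : HasDerivAt (fun s : ℝ => Real.sqrt (s - 1)) (1 / (2 * Real.sqrt (s-1)) * 1) s :=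
    (Real.hasDerivAt_sqrt h0).comp s h1
  have h3 : HasDerivAt psi (1 / (2 * Real.sqrt (s-1))) s := by
    simpa [show psi = fun s : ℝ => 1 + Real.sqrt (s - 1) from rfl] using h2.const_add 1
  exact h3.hasDerivWithinAt

lemma measurable_phi : Measurable phi := by unfold phi; fun_prop
lemma continuous_psi : Continuous psi := by
  unfold psi; continuity
lemma measurable_psi : Measurable psi := continuous_psi.measurable
lemma measurable_w : Measurable w := by
  apply Real.continuous_sqrt.measurable.comp
  fun_prop
lemma measurable_u : Measurable u := (measurable_w.comp measurable_psi).inv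

lemma w_pos {t : ℝ} (ht : t ∈ I) : 0 < w t := by
  apply Real.sqrt_pos.2
  obtain ⟨h1, h2⟩ := ht
  have : 0 < t := by linarith
  apply div_pos _ this
  nlinarith [sq_nonneg (t-1)]

lemma w_sq {t : ℝ} (ht : t ∈ I) : w t ^ 2 = phi t * (2 * (t - 1)) / t := by
  rw [w, Real.sq_sqrt, phi]
  obtain ⟨h1, h2⟩ := ht
  have : 0 < t := by linarith
  apply div_nonneg _ this.le
  nlinarith [sq_nonneg (t-1)]

lemma u_mul_w {s : ℝ} (hs : s ∈ I) : u s * w (psi s) = 1 :=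
  inv_mul_cancel₀ (ne_of_gt (w_pos (psi_mem hs)))

/-- Bochner change of variables via `phi`. -/
lemma cv_phi (g : ℝ → ℝ) :
    ∫ s in I, g s = ∫ t in I, |2 * (t - 1)| • g (phi t) := by
  conv_lhs => rw [← image_phi]
  exact integral_image_eq_integral_abs_deriv_smul measurableSet_Ioo
    (fun x _ => hasDeriv_phi) injOn_phi g

/-- Bochner change of variables via `psi`. -/
lemma cv_psi (g : ℝ → ℝ) :
    ∫ t in I, g t = ∫ s in I, |1 / (2 * Real.sqrt (s - 1))| • g (psi s) := by
  conv_lhs => rw [← image_psi]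
  exact integral_image_eq_integral_abs_deriv_smul measurableSet_Ioo
    (fun x hx => hasDeriv_psi hx) injOn_psi g

/-- Integrability transfer via `phi`. -/
lemma int_phi (g : ℝ → ℝ) :
    IntegrableOn g I ↔ IntegrableOn (fun t => |2 * (t - 1)| • g (phi t)) I := by
  conv_lhs => rw [← image_phi]
  exact integrableOn_image_iff_integrableOn_abs_deriv_smul measurableSet_Ioo
    (fun x _ => hasDeriv_phi) injOn_phi g

lemma int_psi (g : ℝ → ℝ) :
    IntegrableOn g I ↔ IntegrableOn (fun s => |1 / (2 * Real.sqrt (s - 1))| • g (psi s)) I := by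
  conv_lhs => rw [← image_psi]
  exact integrableOn_image_iff_integrableOn_abs_deriv_smul measurableSet_Ioo
    (fun x hx => hasDeriv_psi hx) injOn_psi g

/-- lintegral change of variables via `phi`. -/
lemma lint_phi (g : ℝ → ℝ≥0∞) :
    ∫⁻ s in I, g s = ∫⁻ t in I, ENNReal.ofReal |2 * (t - 1)| * g (phi t) := by
  conv_lhs => rw [← image_phi]
  have := lintegral_image_eq_lintegral_abs_det_fderiv_mul (volume : Measure ℝ)
    measurableSet_Ioo
    (f' := fun x => (1 : ℝ →L[ℝ] ℝ).smulRight (2 * (x - 1)))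
    (fun x _ => hasDeriv_phi.hasFDerivWithinAt) injOn_phi g
  simpa only [ContinuousLinearMap.smulRight_one_eq_toSpanSingleton, ContinuousLinearMap.det_toSpanSingleton] using this

lemma lint_psi (g : ℝ → ℝ≥0∞) :
    ∫⁻ t in I, g t = ∫⁻ s in I, ENNReal.ofReal |1 / (2 * Real.sqrt (s - 1))| * g (psi s) := by
  conv_lhs => rw [← image_psi]
  have := lintegral_image_eq_lintegral_abs_det_fderiv_mul (volume : Measure ℝ)
    measurableSet_Ioo
    (f' := fun x => (1 : ℝ →L[ℝ] ℝ).smulRight (1 / (2 * Real.sqrt (x - 1))))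
    (fun x hx => (hasDeriv_psi hx).hasFDerivWithinAt) injOn_psi g
  simpa only [ContinuousLinearMap.smulRight_one_eq_toSpanSingleton, ContinuousLinearMap.det_toSpanSingleton] using this

lemma qmp_phi : Measure.QuasiMeasurePreserving phi μ μ := by
  refine ⟨measurable_phi, Measure.AbsolutelyContinuous.mk fun N hN hN0 => ?_⟩
  rw [Measure.map_apply measurable_phi hN, μ_eq, ← lintegral_indicator_one (measurable_phi hN)]
  have h1 : ∀ t ∈ I, (phi ⁻¹' N).indicator (1 : ℝ → ℝ≥0∞) t
      = N.indicator (1 : ℝ → ℝ≥0∞) (phi t) := by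
    intro t _; by_cases h : phi t ∈ N <;> simp [h, Set.indicator_apply]
  rw [setLIntegral_congr_fun measurableSet_Ioo h1,
    lint_psi (fun t => N.indicator (1 : ℝ → ℝ≥0∞) (phi t))]
  have hae : ∀ᵐ s ∂(volume.restrict I), s ∉ N := by
    have h0 : volume.restrict I N = 0 := by rw [← μ_eq]; exact hN0
    exact measure_eq_zero_iff_ae_notMem.1 h0
  have hzero : (fun s => ENNReal.ofReal |1 / (2 * Real.sqrt (s - 1))|
      * N.indicator (1 : ℝ → ℝ≥0∞) (phi (psi s))) =ᵐ[volume.restrict I] 0 := by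
    filter_upwards [hae, ae_restrict_mem measurableSet_Ioo] with s hsN hsI
    simp [phi_psi hsI.1.le, Set.indicator_of_notMem hsN]
  rw [lintegral_congr_ae hzero]; simp

lemma qmp_psi : Measure.QuasiMeasurePreserving psi μ μ := by
  refine ⟨measurable_psi, Measure.AbsolutelyContinuous.mk fun N hN hN0 => ?_⟩
  rw [Measure.map_apply measurable_psi hN, μ_eq, ← lintegral_indicator_one (measurable_psi hN)]
  have h1 : ∀ t ∈ I, (psi ⁻¹' N).indicator (1 : ℝ → ℝ≥0∞) t
      = N.indicator (1 : ℝ → ℝ≥0∞) (psi t) := by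
    intro t _; by_cases h : psi t ∈ N <;> simp [h, Set.indicator_apply]
  rw [setLIntegral_congr_fun measurableSet_Ioo h1,
    lint_phi (fun s => N.indicator (1 : ℝ → ℝ≥0∞) (psi s))]
  have hae : ∀ᵐ s ∂(volume.restrict I), s ∉ N := by
    have h0 : volume.restrict I N = 0 := by rw [← μ_eq]; exact hN0
    exact measure_eq_zero_iff_ae_notMem.1 h0
  have hzero : (fun t => ENNReal.ofReal |2 * (t - 1)|
      * N.indicator (1 : ℝ → ℝ≥0∞) (psi (phi t))) =ᵐ[volume.restrict I] 0 := by
    filter_upwards [hae, ae_restrict_mem measurableSet_Ioo] with t htN htI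
    simp [psi_phi htI.1.le, Set.indicator_of_notMem htN]
  rw [lintegral_congr_ae hzero]; simp

lemma psi_gt {s : ℝ} (hs : s ∈ I) : s < psi s := by
  obtain ⟨h1, h2⟩ := hs
  have h0 : (0:ℝ) ≤ s - 1 := by linarith
  have : s - 1 < Real.sqrt (s - 1) := by
    nlinarith [Real.sq_sqrt h0, Real.sqrt_nonneg (s-1), sq_nonneg (Real.sqrt (s-1) - 1)]
  simp only [psi]; linarith

lemma psi_pos {s : ℝ} (hs : s ∈ I) : 0 < psi s := lt_trans (by linarith [hs.1]) (psi_gt hs)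

lemma ratio_lt_one {s : ℝ} (hs : s ∈ I) : s / psi s < 1 :=
  (div_lt_one (psi_pos hs)).2 (psi_gt hs)

lemma ratio_nonneg {s : ℝ} (hs : s ∈ I) : 0 ≤ s / psi s :=
  div_nonneg (by linarith [hs.1]) (psi_pos hs).le

def Tfun (f : ℝ → ℝ) : ℝ → ℝ := fun t => w t * f (phi t)
def Ufun (g : ℝ → ℝ) : ℝ → ℝ := fun s => u s * g (psi s)

lemma Tfun_congr {f g : ℝ → ℝ} (h : f =ᵐ[μ] g) : Tfun f =ᵐ[μ] Tfun g := by
  filter_upwards [qmp_phi.ae_eq_comp h] with t ht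
  simp only [Tfun]
  rw [show f (phi t) = (f ∘ phi) t from rfl, ht]; rfl

lemma Ufun_congr {f g : ℝ → ℝ} (h : f =ᵐ[μ] g) : Ufun f =ᵐ[μ] Ufun g := by
  filter_upwards [qmp_psi.ae_eq_comp h] with t ht
  simp only [Ufun]
  rw [show f (psi t) = (f ∘ psi) t from rfl, ht]; rfl

lemma aesm_Tfun {f : ℝ → ℝ} (hf : AEStronglyMeasurable f μ) :
    AEStronglyMeasurable (Tfun f) μ :=
  measurable_w.aestronglyMeasurable.mul (hf.comp_quasiMeasurePreserving qmp_phi)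

lemma aesm_Ufun {f : ℝ → ℝ} (hf : AEStronglyMeasurable f μ) :
    AEStronglyMeasurable (Ufun f) μ :=
  measurable_u.aestronglyMeasurable.mul (hf.comp_quasiMeasurePreserving qmp_psi)

lemma u_sq {s : ℝ} (hs : s ∈ I) : u s ^ 2 = psi s / (s * (2 * Real.sqrt (s - 1))) := by
  have h1 : w (psi s) ^ 2 = s * (2 * Real.sqrt (s - 1)) / psi s := by
    rw [w_sq (psi_mem hs), phi_psi hs.1.le]
    simp [psi]
  have hψ : psi s ≠ 0 := (psi_pos hs).ne'
  have hs0 : s * (2 * Real.sqrt (s - 1)) ≠ 0 := by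
    have h2 : 0 < Real.sqrt (s - 1) := Real.sqrt_pos.2 (by linarith [hs.1])
    have h3 : (0:ℝ) < s := by linarith [hs.1]
    positivity
  rw [u, inv_pow, h1]
  field_simp

/-- The key pointwise identity on `I`: `(Tfun f t)^2 = |φ'(t)| • g₁(φ t)` where
`g₁ s = (s / ψ s) * f s ^ 2`. -/
lemma Tfun_sq_eq {f : ℝ → ℝ} {t : ℝ} (ht : t ∈ I) :
    Tfun f t ^ 2 = |2 * (t - 1)| • ((phi t / psi (phi t)) * f (phi t) ^ 2) := by
  have ht0 : t ≠ 0 := by have := ht.1; intro h; linarith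
  rw [Tfun, mul_pow, w_sq ht, psi_phi ht.1.le, abs_of_nonneg (by linarith [ht.1] : (0:ℝ) ≤ 2 * (t-1)),
    smul_eq_mul]
  field_simp

lemma Ufun_sq_eq {g : ℝ → ℝ} {s : ℝ} (hs : s ∈ I) :
    Ufun g s ^ 2 = |1 / (2 * Real.sqrt (s - 1))| • ((psi s / phi (psi s)) * g (psi s) ^ 2) := by
  have hsq : 0 < Real.sqrt (s - 1) := Real.sqrt_pos.2 (by linarith [hs.1])
  have hs0 : s ≠ 0 := by have := hs.1; intro h; linarith
  rw [Ufun, mul_pow, u_sq hs, phi_psi hs.1.le,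
    abs_of_nonneg (by positivity : (0:ℝ) ≤ 1 / (2 * Real.sqrt (s - 1))), smul_eq_mul]
  field_simp

lemma aesm_sq {f : ℝ → ℝ} (hf : AEStronglyMeasurable f (volume.restrict I)) :
    AEStronglyMeasurable (fun x => f x ^ 2) (volume.restrict I) :=
  (hf.aemeasurable.pow_const 2).aestronglyMeasurable

/-- `g₁ s = (s / ψ s) * f s ^ 2` is integrable on `I` when `f²` is. -/
lemma int_g1 {f : ℝ → ℝ} (hf : AEStronglyMeasurable f μ)
    (hif : Integrable (fun x => f x ^ 2) μ) :
    IntegrableOn (fun s => (s / psi s) * f s ^ 2) I := by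
  rw [μ_eq] at hf hif
  refine Integrable.mono hif ?_ ?_
  · exact ((measurable_id.div measurable_psi).aestronglyMeasurable).mul (aesm_sq hf)
  · filter_upwards [ae_restrict_mem measurableSet_Ioo] with s hs
    have h1 := ratio_nonneg hs
    have h2 := (ratio_lt_one hs).le
    have key : s / psi s * f s ^ 2 ≤ f s ^ 2 := by
      nlinarith [mul_nonneg (sub_nonneg.2 h2) (sq_nonneg (f s))]
    simpa [Real.norm_eq_abs, abs_of_nonneg (show (0:ℝ) ≤ s by linarith [hs.1]),
      abs_of_nonneg (psi_pos hs).le, abs_of_nonneg (sq_nonneg (f s))] using key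

lemma int_g2 {g : ℝ → ℝ} (hg : AEStronglyMeasurable g μ)
    (hig : Integrable (fun x => g x ^ 2) μ) :
    IntegrableOn (fun t => (t / phi t) * g t ^ 2) I := by
  rw [μ_eq] at hg hig
  refine Integrable.mono (hig.const_mul 2) ?_ ?_
  · exact ((measurable_id.div (measurable_phi)).aestronglyMeasurable).mul (aesm_sq hg)
  · filter_upwards [ae_restrict_mem measurableSet_Ioo] with t ht
    have h1 : (1:ℝ) ≤ phi t := by simp only [phi]; nlinarith [sq_nonneg (t-1)]
    have h2 : 0 ≤ t / phi t := div_nonneg (by linarith [ht.1]) (by linarith)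
    have h3 : t / phi t ≤ 2 := by
      rw [div_le_iff₀ (by linarith : (0:ℝ) < phi t)]
      nlinarith [ht.2]
    have key : t / phi t * g t ^ 2 ≤ 2 * g t ^ 2 := by
      nlinarith [mul_nonneg (sub_nonneg.2 h3) (sq_nonneg (g t))]
    simpa [Real.norm_eq_abs, abs_of_nonneg (show (0:ℝ) ≤ t by linarith [ht.1]),
      abs_of_nonneg (show (0:ℝ) ≤ phi t by linarith), abs_of_nonneg (sq_nonneg (g t))] using key

lemma int_sq_Tfun {f : ℝ → ℝ} (hf : AEStronglyMeasurable f μ)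
    (hif : Integrable (fun x => f x ^ 2) μ) :
    Integrable (fun t => Tfun f t ^ 2) μ := by
  rw [μ_eq]
  have h := (int_phi (fun s => (s / psi s) * f s ^ 2)).1 (int_g1 hf hif)
  exact h.congr_fun (fun t ht => (Tfun_sq_eq ht).symm) measurableSet_Ioo

lemma int_sq_Ufun {g : ℝ → ℝ} (hg : AEStronglyMeasurable g μ)
    (hig : Integrable (fun x => g x ^ 2) μ) :
    Integrable (fun s => Ufun g s ^ 2) μ := by
  rw [μ_eq]
  have h := (int_psi (fun t => (t / phi t) * g t ^ 2)).1 (int_g2 hg hig)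
  exact h.congr_fun (fun s hs => (Ufun_sq_eq hs).symm) measurableSet_Ioo

lemma memT (f : Lp ℝ 2 μ) : MemLp (Tfun ⇑f) 2 μ :=
  (memLp_two_iff_integrable_sq (aesm_Tfun (Lp.aestronglyMeasurable f))).2
    (int_sq_Tfun (Lp.aestronglyMeasurable f) (Lp.memLp f).integrable_sq)

lemma memU (g : Lp ℝ 2 μ) : MemLp (Ufun ⇑g) 2 μ :=
  (memLp_two_iff_integrable_sq (aesm_Ufun (Lp.aestronglyMeasurable g))).2
    (int_sq_Ufun (Lp.aestronglyMeasurable g) (Lp.memLp g).integrable_sq)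

lemma ae_of_forall_I {p : ℝ → Prop} (h : ∀ s ∈ I, p s) : ∀ᵐ s ∂μ, p s := by
  rw [μ_eq]
  exact (ae_restrict_mem measurableSet_Ioo).mono h

lemma integral_μ_eq (g : ℝ → ℝ) : ∫ a, g a ∂μ = ∫ a in I, g a := by rw [μ_eq]

def Tmap : Lp ℝ 2 μ →ₗ[ℝ] Lp ℝ 2 μ where
  toFun f := (memT f).toLp (Tfun ⇑f)
  map_add' f g := by
    apply Lp.ext
    have h1 : Tfun ⇑(f + g) =ᵐ[μ] Tfun (⇑f + ⇑g) := Tfun_congr (Lp.coeFn_add f g)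
    have h2 : Tfun (⇑f + ⇑g) = Tfun ⇑f + Tfun ⇑g := by
      funext t; simp [Tfun, mul_add]
    filter_upwards [(memT (f + g)).coeFn_toLp, (memT f).coeFn_toLp, (memT g).coeFn_toLp,
      Lp.coeFn_add ((memT f).toLp (Tfun ⇑f)) ((memT g).toLp (Tfun ⇑g)), h1] with t e1 e2 e3 e4 e5
    rw [e1, e4, Pi.add_apply, e2, e3, e5, h2, Pi.add_apply]
  map_smul' c f := by
    apply Lp.ext
    have h1 : Tfun ⇑(c • f) =ᵐ[μ] Tfun (c • ⇑f) := Tfun_congr (Lp.coeFn_smul c f)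
    have h2 : Tfun (c • ⇑f) = c • Tfun ⇑f := by
      funext t; simp [Tfun]; ring
    filter_upwards [(memT (c • f)).coeFn_toLp, (memT f).coeFn_toLp,
      Lp.coeFn_smul c ((memT f).toLp (Tfun ⇑f)), h1] with t e1 e2 e3 e4
    rw [RingHom.id_apply, e1, e3, Pi.smul_apply, e2, e4, h2, Pi.smul_apply]

def Umap : Lp ℝ 2 μ → Lp ℝ 2 μ := fun g => (memU g).toLp (Ufun ⇑g)

lemma Tmap_coe (f : Lp ℝ 2 μ) : ⇑(Tmap f) =ᵐ[μ] Tfun ⇑f := (memT f).coeFn_toLp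
lemma Umap_coe (g : Lp ℝ 2 μ) : ⇑(Umap g) =ᵐ[μ] Ufun ⇑g := (memU g).coeFn_toLp

lemma UT (f : Lp ℝ 2 μ) : Umap (Tmap f) = f := by
  apply Lp.ext
  have h1 : Ufun ⇑(Tmap f) =ᵐ[μ] Ufun (Tfun ⇑f) := Ufun_congr (Tmap_coe f)
  have h2 : ∀ s ∈ I, Ufun (Tfun ⇑f) s = f s := by
    intro s hs
    rw [Ufun, Tfun, phi_psi hs.1.le, ← mul_assoc, u_mul_w hs, one_mul]
  have h3 : Ufun (Tfun ⇑f) =ᵐ[μ] ⇑f := ae_of_forall_I h2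
  exact (Umap_coe (Tmap f)).trans (h1.trans h3)

lemma TU (g : Lp ℝ 2 μ) : Tmap (Umap g) = g := by
  apply Lp.ext
  have h1 : Tfun ⇑(Umap g) =ᵐ[μ] Tfun (Ufun ⇑g) := Tfun_congr (Umap_coe g)
  have h2 : ∀ t ∈ I, Tfun (Ufun ⇑g) t = g t := by
    intro t ht
    rw [Tfun, Ufun, u, psi_phi ht.1.le, ← mul_assoc, mul_inv_cancel₀ (w_pos ht).ne', one_mul]
  have h3 : Tfun (Ufun ⇑g) =ᵐ[μ] ⇑g := ae_of_forall_I h2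
  exact (Tmap_coe (Umap g)).trans (h1.trans h3)

/-- Quadratic-form preservation. -/
lemma Q_T (f : Lp ℝ 2 μ) :
    ∫ a, a * (Tfun ⇑f a) ^ 2 ∂μ = ∫ a, a * (f a) ^ 2 ∂μ := by
  rw [integral_μ_eq (fun a => a * (Tfun ⇑f a) ^ 2), integral_μ_eq (fun a => a * (f a) ^ 2),
    cv_phi (fun s => s * (f s) ^ 2)]
  apply setIntegral_congr_fun measurableSet_Ioo
  intro t ht
  have ht0 : t ≠ 0 := by have := ht.1; intro h; linarith
  have habs : |2 * (t - 1)| = 2 * (t - 1) := abs_of_nonneg (by linarith [ht.1])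
  simp only [Tfun, mul_pow, w_sq ht, smul_eq_mul, habs]
  field_simp

/-- Norm computation. -/
lemma sq_int_T (f : Lp ℝ 2 μ) :
    ∫ a, (Tfun ⇑f a) ^ 2 ∂μ = ∫ s in I, (s / psi s) * (f s) ^ 2 := by
  rw [integral_μ_eq (fun a => (Tfun ⇑f a) ^ 2), cv_phi (fun s => (s / psi s) * (f s) ^ 2)]
  apply setIntegral_congr_fun measurableSet_Ioo
  intro t ht
  exact Tfun_sq_eq ht

instance : IsFiniteMeasure μ :=
  ⟨by rw [Measure.restrict_apply_univ]; exact measure_Icc_lt_top⟩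

lemma norm_sq_eq (f : Lp ℝ 2 μ) : ‖f‖ ^ 2 = ∫ a, (f a) ^ 2 ∂μ := by
  rw [← real_inner_self_eq_norm_sq f, L2.inner_def]
  apply integral_congr_ae
  filter_upwards with a
  simp [RCLike.inner_apply, sq]

lemma integrable_μ_iff (g : ℝ → ℝ) : Integrable g μ ↔ IntegrableOn g I volume := by
  rw [μ_eq]; rfl

lemma int_sq_I (f : Lp ℝ 2 μ) : IntegrableOn (fun s => (f s) ^ 2) I :=
  (integrable_μ_iff _).1 (Lp.memLp f).integrable_sq

lemma norm_T_le (f : Lp ℝ 2 μ) : ‖Tmap f‖ ≤ ‖f‖ := by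
  have h1 : ‖Tmap f‖ ^ 2 = ∫ a, (Tfun ⇑f a) ^ 2 ∂μ := by
    rw [norm_sq_eq]
    exact integral_congr_ae ((Tmap_coe f).mono fun a ha => by simp only [ha])
  have h2 : ∫ s in I, (s / psi s) * (f s) ^ 2 ≤ ∫ s in I, (f s) ^ 2 := by
    apply integral_mono_ae (int_g1 (Lp.aestronglyMeasurable f) (Lp.memLp f).integrable_sq)
      (int_sq_I f)
    filter_upwards [ae_restrict_mem measurableSet_Ioo] with s hs
    nlinarith [mul_nonneg (sub_nonneg.2 (ratio_lt_one hs).le) (sq_nonneg ((f : ℝ → ℝ) s))]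
  have h3 : ‖Tmap f‖ ^ 2 ≤ ‖f‖ ^ 2 := by
    rw [h1, sq_int_T, norm_sq_eq, integral_μ_eq (fun a => (f a) ^ 2)]
    exact h2
  nlinarith [norm_nonneg (Tmap f), norm_nonneg f]

def c : ℝ := Real.sqrt (2 / 3)

lemma c_sq : c ^ 2 = 2 / 3 := Real.sq_sqrt (by norm_num)
lemma c_pos : 0 < c := Real.sqrt_pos.2 (by norm_num)

def f0 : Lp ℝ 2 μ := (memLp_const c).toLp (fun _ => c)

lemma f0_coe : ⇑f0 =ᵐ[μ] fun _ => c := (memLp_const c).coeFn_toLp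

lemma int_id_μ : ∫ a, a ∂μ = 3 / 2 := by
  have : ∫ a, a ∂μ = ∫ a in Set.Icc (1:ℝ) 2, a := rfl
  rw [this, integral_Icc_eq_integral_Ioc, ← intervalIntegral.integral_of_le one_le_two,
    integral_id]
  norm_num

lemma Q_f0 : ∫ a, a * (f0 a) ^ 2 ∂μ = 1 := by
  have h1 : ∫ a, a * (f0 a) ^ 2 ∂μ = ∫ a, a * c ^ 2 ∂μ := by
    apply integral_congr_ae
    filter_upwards [f0_coe] with a ha
    rw [ha]
  rw [h1, integral_mul_const, int_id_μ, c_sq]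
  norm_num

lemma μ_univ_toReal : (μ Set.univ).toReal = 1 := by
  rw [Measure.restrict_apply_univ, Real.volume_Icc]
  norm_num

lemma norm_f0_sq : ‖f0‖ ^ 2 = 2 / 3 := by
  rw [norm_sq_eq]
  have h1 : ∫ a, (f0 a) ^ 2 ∂μ = ∫ _, c ^ 2 ∂μ := by
    apply integral_congr_ae
    filter_upwards [f0_coe] with a ha
    rw [ha]
  rw [h1, integral_const, measureReal_def, μ_univ_toReal, c_sq]
  norm_num

lemma norm_Tf0_lt : ‖Tmap f0‖ < ‖f0‖ := by
  have e1 : ‖Tmap f0‖ ^ 2 = ∫ a, (Tfun ⇑f0 a) ^ 2 ∂μ := by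
    rw [norm_sq_eq]
    exact integral_congr_ae ((Tmap_coe f0).mono fun a ha => by simp only [ha])
  have e3 : ∫ s in I, (s / psi s) * (f0 s) ^ 2 = ∫ s in I, (s / psi s) * c ^ 2 := by
    rw [← integral_μ_eq (fun s => (s / psi s) * (f0 s) ^ 2),
      ← integral_μ_eq (fun s => (s / psi s) * c ^ 2)]
    apply integral_congr_ae
    filter_upwards [f0_coe] with a ha
    rw [ha]
  have h1 : ‖Tmap f0‖ ^ 2 = ∫ s in I, (s / psi s) * c ^ 2 := e1.trans ((sq_int_T f0).trans e3)
  have hconst : ∫ _ in I, c ^ 2 = 2 / 3 := by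
    rw [setIntegral_const, Real.volume_real_Ioo, c_sq]
    norm_num
  have hint_ratio : IntegrableOn (fun s => (s / psi s) * c ^ 2) I := by
    have := int_g1 (f := fun _ => c) aestronglyMeasurable_const (integrable_const _)
    simpa using this
  have hint_const : IntegrableOn (fun _ : ℝ => c ^ 2) I := integrableOn_const (by
    rw [Real.volume_Ioo]; simp)
  have hd : 0 < ∫ s in I, (c ^ 2 - (s / psi s) * c ^ 2) := by
    rw [setIntegral_pos_iff_support_of_nonneg_ae]
    · apply lt_of_lt_of_le _ (measure_mono (show I ⊆ Function.support
        (fun s => c ^ 2 - (s / psi s) * c ^ 2) ∩ I from fun s hs => ⟨by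
          have h := ratio_lt_one hs
          have hc := c_sq
          have hpos : 0 < c ^ 2 - (s / psi s) * c ^ 2 := by nlinarith
          simpa only [Function.mem_support] using hpos.ne', hs⟩))
      rw [Real.volume_Ioo]; norm_num
    · filter_upwards [ae_restrict_mem measurableSet_Ioo] with s hs
      have := ratio_lt_one hs
      simp only [Pi.zero_apply]
      nlinarith [sq_nonneg c]
    · exact hint_const.sub hint_ratio
  have hsub := integral_sub hint_const hint_ratio
  have h2 : ∫ s in I, (s / psi s) * c ^ 2 < 2 / 3 := by
    rw [hsub] at hd
    rw [hconst] at hd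
    linarith
  have h3 : ‖Tmap f0‖ ^ 2 < ‖f0‖ ^ 2 := by
    rw [h1, norm_f0_sq]; exact h2
  nlinarith [norm_nonneg (Tmap f0), norm_nonneg f0]

end EllAux

/-- The ellipsoid `E = {f ∈ L²[1,2] : ∫₁² t |f t|² dt ≤ 1}` generated by
the multiplication operator `(Af)(t) = t f(t)` on `L²[1,2]` is not LEC-plastic. -/
theorem ellipsoid_L2_unit_interval_not_LECPlastic :
    ¬ IsLECPlastic ℝ
      {f : Lp ℝ 2 (volume.restrict (Set.Icc (1 : ℝ) 2)) |
        ∫ t : ℝ, t * (f t) ^ 2 ∂(volume.restrict (Set.Icc (1 : ℝ) 2)) ≤ 1} := by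
  intro hP
  set E : Set (Lp ℝ 2 EllAux.μ) :=
    {f : Lp ℝ 2 (volume.restrict (Set.Icc (1 : ℝ) 2)) |
      ∫ t : ℝ, t * (f t) ^ 2 ∂(volume.restrict (Set.Icc (1 : ℝ) 2)) ≤ 1} with hE
  -- membership of 0
  have h0E : (0 : Lp ℝ 2 EllAux.μ) ∈ E := by
    have hz : (∫ t : ℝ, t * ((0 : Lp ℝ 2 EllAux.μ) t) ^ 2 ∂EllAux.μ) = 0 := by
      rw [show (∫ t : ℝ, t * ((0 : Lp ℝ 2 EllAux.μ) t) ^ 2 ∂EllAux.μ) = ∫ _ : ℝ, (0:ℝ) ∂EllAux.μ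
        from integral_congr_ae (by filter_upwards [Lp.coeFn_zero ℝ 2 EllAux.μ] with t ht; rw [ht, Pi.zero_apply]; ring)]
      simp
    simp only [hE, Set.mem_setOf_eq, hz]
    norm_num
  -- membership of f0
  have hf0E : EllAux.f0 ∈ E := by
    simp only [hE, Set.mem_setOf_eq]
    rw [EllAux.Q_f0]
  -- Q of image
  have hQT : ∀ f : Lp ℝ 2 EllAux.μ,
      (∫ t : ℝ, t * ((EllAux.Tmap f) t) ^ 2 ∂EllAux.μ) = ∫ t : ℝ, t * (f t) ^ 2 ∂EllAux.μ := by
    intro f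
    have e : (∫ t : ℝ, t * ((EllAux.Tmap f) t) ^ 2 ∂EllAux.μ)
        = ∫ t : ℝ, t * (EllAux.Tfun ⇑f t) ^ 2 ∂EllAux.μ :=
      integral_congr_ae ((EllAux.Tmap_coe f).mono fun a ha => by simp only [ha])
    rw [e, EllAux.Q_T]
  have hbij : Set.BijOn EllAux.Tmap E E := by
    refine ⟨fun f hf => ?_, fun f _ g _ h => ?_, fun g hg => ⟨EllAux.Umap g, ?_, EllAux.TU g⟩⟩
    · simp only [hE, Set.mem_setOf_eq] at hf ⊢
      rw [hQT f]; exact hf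
    · have := congrArg EllAux.Umap h
      rwa [EllAux.UT, EllAux.UT] at this
    · simp only [hE, Set.mem_setOf_eq] at hg ⊢
      have := hQT (EllAux.Umap g)
      rw [EllAux.TU g] at this
      rw [← this]; exact hg
  have hnonexp : ∀ x ∈ E, ∀ y ∈ E, ‖EllAux.Tmap x - EllAux.Tmap y‖ ≤ ‖x - y‖ := by
    intro x _ y _
    rw [← map_sub]
    exact EllAux.norm_T_le (x - y)
  have hiso := hP EllAux.Tmap hbij hnonexp EllAux.f0 hf0E 0 h0E
  rw [map_zero, sub_zero, sub_zero] at hiso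
  exact absurd hiso (ne_of_lt EllAux.norm_Tf0_lt)

end EllAux
end

section
/- Let 0 < α < β, and let μ : ℝ → [0,∞) be a function in L¹(ℝ) with support contained in (α, β) and with μ(t) > 0 for almost every t ∈ (α, β). Let A : L²(ℝ, μ(t)dt) → L²(ℝ, μ(t)dt) be the multiplication operator (Af)(t) = t·f(t). Then the ellipsoid E = {f ∈ L²(ℝ, μ(t)dt) : ∫ t·|f(t)|² μ(t)dt ≤ 1} generated by A is not LEC-plastic; that is, there exists a linear operator T on L²(ℝ, μ(t)dt) whose restriction to E is a non-expansive bijection from E onto E but which is not an isometry on E. -/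
open MeasureTheory Set ENNReal

noncomputable section LECaux

variable (α β : ℝ)

def psiF (t : ℝ) : ℝ := if t ∈ Set.Ioo α β then α + (t - α)^2 / (β - α) else t

def phiF (s : ℝ) : ℝ := if s ∈ Set.Ioo α β then α + Real.sqrt ((s - α) * (β - α)) else s

variable {α β}

lemma psiF_of_mem {t : ℝ} (ht : t ∈ Set.Ioo α β) : psiF α β t = α + (t - α)^2 / (β - α) :=
  if_pos ht

lemma phiF_of_mem {s : ℝ} (hs : s ∈ Set.Ioo α β) : phiF α β s = α + Real.sqrt ((s - α) * (β - α)) :=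
  if_pos hs

lemma psiF_mem (hαβ : α < β) {t : ℝ} (ht : t ∈ Set.Ioo α β) : psiF α β t ∈ Set.Ioo α β := by
  rw [psiF_of_mem ht]
  obtain ⟨h1, h2⟩ := ht
  have hba : 0 < β - α := by linarith
  constructor
  · have h' : 0 < t - α := by linarith
    have : 0 < (t - α)^2 / (β - α) := div_pos (pow_pos h' 2) hba
    linarith
  · have : (t - α)^2 / (β - α) < β - α := by
      rw [div_lt_iff₀ hba]; nlinarith
    linarith

lemma psiF_lt {t : ℝ} (ht : t ∈ Set.Ioo α β) : psiF α β t < t := by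
  rw [psiF_of_mem ht]
  obtain ⟨h1, h2⟩ := ht
  have hba : 0 < β - α := by linarith
  have : (t - α)^2 / (β - α) < t - α := by
    rw [div_lt_iff₀ hba]; nlinarith
  linarith

lemma phiF_mem (hαβ : α < β) {s : ℝ} (hs : s ∈ Set.Ioo α β) : phiF α β s ∈ Set.Ioo α β := by
  rw [phiF_of_mem hs]
  obtain ⟨h1, h2⟩ := hs
  have hba : 0 < β - α := by linarith
  constructor
  · have : 0 < Real.sqrt ((s - α) * (β - α)) := Real.sqrt_pos.2 (by nlinarith)
    linarith
  · have : Real.sqrt ((s - α) * (β - α)) < β - α := by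
      rw [Real.sqrt_lt' hba]; nlinarith
    linarith

lemma phiF_gt {s : ℝ} (hs : s ∈ Set.Ioo α β) : s < phiF α β s := by
  rw [phiF_of_mem hs]
  obtain ⟨h1, h2⟩ := hs
  have hba : 0 < β - α := by linarith
  have : s - α < Real.sqrt ((s - α) * (β - α)) := by
    rw [Real.lt_sqrt (by linarith)]; nlinarith
  linarith

lemma psiF_phiF (hαβ : α < β) {s : ℝ} (hs : s ∈ Set.Ioo α β) : psiF α β (phiF α β s) = s := by
  rw [psiF_of_mem (phiF_mem hαβ hs), phiF_of_mem hs]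
  have hba : 0 < β - α := by linarith
  have h1 : 0 ≤ (s - α) * (β - α) := by nlinarith [hs.1]
  rw [add_sub_cancel_left, Real.sq_sqrt h1]
  field_simp
  ring

lemma phiF_psiF (hαβ : α < β) {t : ℝ} (ht : t ∈ Set.Ioo α β) : phiF α β (psiF α β t) = t := by
  rw [phiF_of_mem (psiF_mem hαβ ht), psiF_of_mem ht]
  have hba : 0 < β - α := by linarith
  rw [add_sub_cancel_left]
  rw [div_mul_cancel₀ _ hba.ne', Real.sqrt_sq (by linarith [ht.1])]
  ring

lemma measurable_psiF : Measurable (psiF α β) := by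
  unfold psiF
  exact Measurable.ite measurableSet_Ioo (by fun_prop) measurable_id

lemma measurable_phiF : Measurable (phiF α β) := by
  unfold phiF
  exact Measurable.ite measurableSet_Ioo (by fun_prop) measurable_id

lemma hasDerivWithinAt_psiF {t : ℝ} (ht : t ∈ Set.Ioo α β) :
    HasDerivWithinAt (psiF α β) (2 * (t - α) / (β - α)) (Set.Ioo α β) t := by
  have h : HasDerivWithinAt (fun t => α + (t - α)^2 / (β - α)) (2 * (t - α) / (β - α))
      (Set.Ioo α β) t := by
    have := (((hasDerivAt_id t).sub_const α).pow 2).div_const (β - α)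
    simpa using (this.const_add α).hasDerivWithinAt
  exact h.congr (fun x hx => psiF_of_mem hx) (psiF_of_mem ht)

lemma hasDerivWithinAt_phiF {s : ℝ} (hs : s ∈ Set.Ioo α β) :
    HasDerivWithinAt (phiF α β) ((β - α) / (2 * Real.sqrt ((s - α) * (β - α))))
      (Set.Ioo α β) s := by
  have hba : 0 < β - α := by linarith [hs.1, hs.2]
  have hpos : 0 < (s - α) * (β - α) := by nlinarith [hs.1, hs.2]
  have h : HasDerivWithinAt (fun s => α + Real.sqrt ((s - α) * (β - α)))
      ((β - α) / (2 * Real.sqrt ((s - α) * (β - α)))) (Set.Ioo α β) s := by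
    have hinner : HasDerivAt (fun s : ℝ => (s - α) * (β - α)) (β - α) s := by
      simpa using ((hasDerivAt_id s).sub_const α).mul_const (β - α)
    have := (hinner.sqrt hpos.ne')
    simpa [div_eq_div_iff] using (this.const_add α).hasDerivWithinAt
  exact h.congr (fun x hx => phiF_of_mem hx) (phiF_of_mem hs)

lemma injOn_psiF : Set.InjOn (psiF α β) (Set.Ioo α β) := by
  intro x hx y hy hxy
  rw [psiF_of_mem hx, psiF_of_mem hy] at hxy
  have hba : 0 < β - α := by linarith [hx.1, hx.2]
  have : (x - α)^2 = (y - α)^2 := by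
    field_simp at hxy; linarith
  have hx1 : 0 ≤ x - α := by linarith [hx.1]
  have hy1 : 0 ≤ y - α := by linarith [hy.1]
  nlinarith

lemma injOn_phiF (hαβ : α < β) : Set.InjOn (phiF α β) (Set.Ioo α β) := by
  intro x hx y hy hxy
  have := psiF_phiF hαβ hx
  rw [hxy, psiF_phiF hαβ hy] at this
  exact this.symm

lemma image_psiF (hαβ : α < β) : psiF α β '' (Set.Ioo α β) = Set.Ioo α β := by
  apply Set.Subset.antisymm
  · rintro _ ⟨t, ht, rfl⟩; exact psiF_mem hαβ ht
  · intro s hs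
    exact ⟨phiF α β s, phiF_mem hαβ hs, psiF_phiF hαβ hs⟩

lemma image_phiF (hαβ : α < β) : phiF α β '' (Set.Ioo α β) = Set.Ioo α β := by
  apply Set.Subset.antisymm
  · rintro _ ⟨t, ht, rfl⟩; exact phiF_mem hαβ ht
  · intro s hs
    exact ⟨psiF α β s, psiF_mem hαβ hs, phiF_psiF hαβ hs⟩

/-- one-dimensional change of variables, lintegral version -/
lemma lintegral_image_eq_lintegral_abs_deriv_mul' {s : Set ℝ} {f : ℝ → ℝ} {f' : ℝ → ℝ}
    (hs : MeasurableSet s) (hf' : ∀ x ∈ s, HasDerivWithinAt f (f' x) s x)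
    (hf : Set.InjOn f s) (g : ℝ → ℝ≥0∞) :
    ∫⁻ x in f '' s, g x = ∫⁻ x in s, ENNReal.ofReal |f' x| * g (f x) := by
  simpa only [ContinuousLinearMap.det_toSpanSingleton] using
    lintegral_image_eq_lintegral_abs_det_fderiv_mul volume hs
      (fun x hx => (hf' x hx).hasFDerivWithinAt) hf g

/-- Master change of variables along ψ. -/
lemma cov_psi (hαβ : α < β) (G : ℝ → ℝ≥0∞) :
    ∫⁻ t in Set.Ioo α β, ENNReal.ofReal (2 * (t - α) / (β - α)) * G (psiF α β t)
      = ∫⁻ s in Set.Ioo α β, G s := by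
  rw [← image_psiF hαβ,
    lintegral_image_eq_lintegral_abs_deriv_mul' measurableSet_Ioo
      (fun t ht => hasDerivWithinAt_psiF ht) injOn_psiF G]
  rw [image_psiF hαβ]
  apply setLIntegral_congr_fun measurableSet_Ioo
  intro t ht
  beta_reduce
  rw [abs_of_nonneg]
  have hba : 0 < β - α := by linarith [ht.1, ht.2]
  have : 0 ≤ t - α := by linarith [ht.1]
  positivity

/-- images of null sets under phiF are null -/
lemma image_null_phiF (hαβ : α < β) {N : Set ℝ} (hN : MeasurableSet N) (hN0 : volume N = 0)
    (hsub : N ⊆ Set.Ioo α β) : volume (phiF α β '' N) = 0 := by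
  have h1 : volume (phiF α β '' N) = ∫⁻ _ in phiF α β '' N, (1:ℝ≥0∞) := by
    simp
  rw [h1, lintegral_image_eq_lintegral_abs_deriv_mul' hN
    (fun s hs => (hasDerivWithinAt_phiF (hsub hs)).mono hsub)
    ((injOn_phiF hαβ).mono hsub) (fun _ => (1:ℝ≥0∞))]
  rw [Measure.restrict_eq_zero.2 hN0]
  simp

/-- images of null sets under psiF are null -/
lemma image_null_psiF {N : Set ℝ} (hN : MeasurableSet N) (hN0 : volume N = 0)
    (hsub : N ⊆ Set.Ioo α β) : volume (psiF α β '' N) = 0 := by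
  have h1 : volume (psiF α β '' N) = ∫⁻ _ in psiF α β '' N, (1:ℝ≥0∞) := by
    simp
  rw [h1, lintegral_image_eq_lintegral_abs_deriv_mul' hN
    (fun s hs => (hasDerivWithinAt_psiF (hsub hs)).mono hsub)
    (injOn_psiF.mono hsub) (fun _ => (1:ℝ≥0∞))]
  rw [Measure.restrict_eq_zero.2 hN0]
  simp

end LECaux

section Chunk2
open MeasureTheory Set ENNReal

variable {α β : ℝ} {μ₀ : ℝ → ℝ}

/-- the measure -/
noncomputable def nuM (μ₀ : ℝ → ℝ) : Measure ℝ :=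
  volume.withDensity fun t => ENNReal.ofReal (μ₀ t)

lemma nu_ac : nuM μ₀ ≪ volume := withDensity_absolutelyContinuous _ _

lemma nu_null_of_volume_null {N : Set ℝ} (h : volume N = 0) : nuM μ₀ N = 0 := nu_ac h

lemma nu_compl_Ioo (hm : Measurable μ₀)
    (hsupp : ∀ᵐ t ∂volume, t ∉ Set.Ioo α β → μ₀ t = 0) :
    nuM μ₀ (Set.Ioo α β)ᶜ = 0 := by
  rw [nuM, withDensity_apply _ measurableSet_Ioo.compl]
  rw [setLIntegral_eq_zero_iff measurableSet_Ioo.compl hm.ennreal_ofReal]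
  filter_upwards [hsupp] with t ht
  intro ht2
  simp [ht ht2]

/-- key: ν-null sets meet Ioo in a volume-null set -/
lemma volume_inter_Ioo_null (hm : Measurable μ₀)
    (hpos : ∀ᵐ t ∂(volume.restrict (Set.Ioo α β)), 0 < μ₀ t)
    {N : Set ℝ} (hN : nuM μ₀ N = 0) : volume (N ∩ Set.Ioo α β) = 0 := by
  obtain ⟨N', hNN', hN'meas, hN'0⟩ := exists_measurable_superset_of_null hN
  have h2 : ∀ᵐ t ∂volume, t ∈ N' → ENNReal.ofReal (μ₀ t) = 0 := by
    rw [← setLIntegral_eq_zero_iff hN'meas hm.ennreal_ofReal]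
    rw [nuM, withDensity_apply _ hN'meas] at hN'0
    exact hN'0
  have h3 : ∀ᵐ t ∂(volume.restrict (Set.Ioo α β)), t ∈ N'ᶜ := by
    filter_upwards [hpos, ae_restrict_of_ae h2] with t h4 h5
    intro h6
    have := h5 h6
    rw [ENNReal.ofReal_eq_zero] at this
    linarith
  have h4 : volume.restrict (Set.Ioo α β) N' = 0 := by
    rw [ae_iff] at h3
    simpa using h3
  rw [Measure.restrict_apply hN'meas] at h4
  exact measure_mono_null (Set.inter_subset_inter_left _ hNN') h4

lemma ae_nu_mem_Ioo (hm : Measurable μ₀)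
    (hsupp : ∀ᵐ t ∂volume, t ∉ Set.Ioo α β → μ₀ t = 0) :
    ∀ᵐ t ∂(nuM μ₀), t ∈ Set.Ioo α β := by
  have h3 := nu_compl_Ioo (α := α) (β := β) hm hsupp
  rw [ae_iff]
  simpa [Set.Ioo, Set.compl_setOf] using h3

lemma ae_nu_of_ae_restrict (hm : Measurable μ₀)
    (hsupp : ∀ᵐ t ∂volume, t ∉ Set.Ioo α β → μ₀ t = 0)
    {p : ℝ → Prop} (h : ∀ᵐ t ∂(volume.restrict (Set.Ioo α β)), p t) :
    ∀ᵐ t ∂(nuM μ₀), p t := by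
  rw [ae_restrict_iff'₀ measurableSet_Ioo.nullMeasurableSet] at h
  have h2 : ∀ᵐ t ∂(nuM μ₀), t ∈ Set.Ioo α β → p t := nu_ac h
  filter_upwards [h2, ae_nu_mem_Ioo hm hsupp] with t ht1 ht2
  exact ht1 ht2

lemma ae_restrict_of_ae_nu (hm : Measurable μ₀)
    (hpos : ∀ᵐ t ∂(volume.restrict (Set.Ioo α β)), 0 < μ₀ t)
    {p : ℝ → Prop} (h : ∀ᵐ t ∂(nuM μ₀), p t) :
    ∀ᵐ t ∂(volume.restrict (Set.Ioo α β)), p t := by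
  rw [ae_iff] at h ⊢
  have := volume_inter_Ioo_null hm hpos h
  rw [Measure.restrict_apply' measurableSet_Ioo]
  exact this

end Chunk2

section Chunk3
open MeasureTheory Set ENNReal

variable {α β : ℝ} {μ₀ : ℝ → ℝ}

lemma pullback_psi (hαβ : α < β) (hm : Measurable μ₀)
    (hpos : ∀ᵐ t ∂(volume.restrict (Set.Ioo α β)), 0 < μ₀ t)
    {N : Set ℝ} (hN : nuM μ₀ N = 0) : nuM μ₀ (psiF α β ⁻¹' N) = 0 := by
  obtain ⟨N', hNN', hN'meas, hN'0⟩ := exists_measurable_superset_of_null hN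
  have hvol : volume (N' ∩ Set.Ioo α β) = 0 := volume_inter_Ioo_null hm hpos hN'0
  have himg : volume (phiF α β '' (N' ∩ Set.Ioo α β)) = 0 :=
    image_null_phiF hαβ (hN'meas.inter measurableSet_Ioo) hvol (Set.inter_subset_right)
  have hsub : psiF α β ⁻¹' N ⊆ phiF α β '' (N' ∩ Set.Ioo α β) ∪ (N' \ Set.Ioo α β) := by
    intro t ht
    simp only [Set.mem_preimage] at ht
    by_cases htI : t ∈ Set.Ioo α β
    · left
      refine ⟨psiF α β t, ⟨hNN' ht, psiF_mem hαβ htI⟩, phiF_psiF hαβ htI⟩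
    · right
      rw [psiF, if_neg htI] at ht
      exact ⟨hNN' ht, htI⟩
  refine measure_mono_null hsub (le_antisymm ?_ zero_le)
  calc nuM μ₀ (phiF α β '' (N' ∩ Set.Ioo α β) ∪ (N' \ Set.Ioo α β))
      ≤ nuM μ₀ (phiF α β '' (N' ∩ Set.Ioo α β)) + nuM μ₀ (N' \ Set.Ioo α β) :=
        measure_union_le _ _
    _ ≤ 0 := by
        rw [nu_null_of_volume_null himg,
          measure_mono_null (Set.diff_subset) hN'0, add_zero]

lemma pullback_phi (hαβ : α < β) (hm : Measurable μ₀)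
    (hpos : ∀ᵐ t ∂(volume.restrict (Set.Ioo α β)), 0 < μ₀ t)
    {N : Set ℝ} (hN : nuM μ₀ N = 0) : nuM μ₀ (phiF α β ⁻¹' N) = 0 := by
  obtain ⟨N', hNN', hN'meas, hN'0⟩ := exists_measurable_superset_of_null hN
  have hvol : volume (N' ∩ Set.Ioo α β) = 0 := volume_inter_Ioo_null hm hpos hN'0
  have himg : volume (psiF α β '' (N' ∩ Set.Ioo α β)) = 0 :=
    image_null_psiF (hN'meas.inter measurableSet_Ioo) hvol (Set.inter_subset_right)
  have hsub : phiF α β ⁻¹' N ⊆ psiF α β '' (N' ∩ Set.Ioo α β) ∪ (N' \ Set.Ioo α β) := by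
    intro t ht
    simp only [Set.mem_preimage] at ht
    by_cases htI : t ∈ Set.Ioo α β
    · left
      refine ⟨phiF α β t, ⟨hNN' ht, phiF_mem hαβ htI⟩, psiF_phiF hαβ htI⟩
    · right
      rw [phiF, if_neg htI] at ht
      exact ⟨hNN' ht, htI⟩
  refine measure_mono_null hsub (le_antisymm ?_ zero_le)
  calc nuM μ₀ (psiF α β '' (N' ∩ Set.Ioo α β) ∪ (N' \ Set.Ioo α β))
      ≤ nuM μ₀ (psiF α β '' (N' ∩ Set.Ioo α β)) + nuM μ₀ (N' \ Set.Ioo α β) :=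
        measure_union_le _ _
    _ ≤ 0 := by
        rw [nu_null_of_volume_null himg,
          measure_mono_null (Set.diff_subset) hN'0, add_zero]

lemma ae_pos_comp_psi (hαβ : α < β) (hm : Measurable μ₀)
    (hpos : ∀ᵐ t ∂(volume.restrict (Set.Ioo α β)), 0 < μ₀ t) :
    ∀ᵐ t ∂(volume.restrict (Set.Ioo α β)), 0 < μ₀ (psiF α β t) := by
  set Z : Set ℝ := Set.Ioo α β ∩ μ₀ ⁻¹' (Set.Iic 0) with hZ
  have hZm : MeasurableSet Z := measurableSet_Ioo.inter (hm measurableSet_Iic)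
  have hZ0 : volume Z = 0 := by
    rw [ae_iff] at hpos
    rw [Measure.restrict_apply' measurableSet_Ioo] at hpos
    refine measure_mono_null ?_ hpos
    intro x hx
    exact ⟨not_lt.2 hx.2, hx.1⟩
  have himg : volume (phiF α β '' Z) = 0 := image_null_phiF hαβ hZm hZ0 Set.inter_subset_left
  rw [ae_restrict_iff' measurableSet_Ioo]
  rw [ae_iff]
  refine measure_mono_null ?_ himg
  intro t ht
  simp only [Set.mem_setOf_eq, not_forall] at ht
  obtain ⟨htI, ht2⟩ := ht
  refine ⟨psiF α β t, ⟨psiF_mem hαβ htI, not_lt.1 ht2⟩, phiF_psiF hαβ htI⟩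

lemma ae_pos_comp_phi (hαβ : α < β) (hm : Measurable μ₀)
    (hpos : ∀ᵐ t ∂(volume.restrict (Set.Ioo α β)), 0 < μ₀ t) :
    ∀ᵐ t ∂(volume.restrict (Set.Ioo α β)), 0 < μ₀ (phiF α β t) := by
  set Z : Set ℝ := Set.Ioo α β ∩ μ₀ ⁻¹' (Set.Iic 0) with hZ
  have hZm : MeasurableSet Z := measurableSet_Ioo.inter (hm measurableSet_Iic)
  have hZ0 : volume Z = 0 := by
    rw [ae_iff] at hpos
    rw [Measure.restrict_apply' measurableSet_Ioo] at hpos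
    refine measure_mono_null ?_ hpos
    intro x hx
    exact ⟨not_lt.2 hx.2, hx.1⟩
  have himg : volume (psiF α β '' Z) = 0 := image_null_psiF hZm hZ0 Set.inter_subset_left
  rw [ae_restrict_iff' measurableSet_Ioo]
  rw [ae_iff]
  refine measure_mono_null ?_ himg
  intro t ht
  simp only [Set.mem_setOf_eq, not_forall] at ht
  obtain ⟨htI, ht2⟩ := ht
  refine ⟨phiF α β t, ⟨phiF_mem hαβ htI, not_lt.1 ht2⟩, psiF_phiF hαβ htI⟩

/-- conversion of `nuM` integrals to Lebesgue set-integrals over `Ioo α β`. -/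
lemma lint_nu (hm : Measurable μ₀)
    (hsupp : ∀ᵐ t ∂volume, t ∉ Set.Ioo α β → μ₀ t = 0)
    {F : ℝ → ℝ≥0∞} (hF : Measurable F) :
    ∫⁻ t, F t ∂(nuM μ₀) = ∫⁻ t in Set.Ioo α β, F t * ENNReal.ofReal (μ₀ t) := by
  rw [nuM, lintegral_withDensity_eq_lintegral_mul volume hm.ennreal_ofReal hF]
  simp only [Pi.mul_apply]
  rw [← lintegral_add_compl (fun t => (ENNReal.ofReal (μ₀ t) * F t)) measurableSet_Ioo]
  have h2 : ∫⁻ t in (Set.Ioo α β)ᶜ, ENNReal.ofReal (μ₀ t) * F t = 0 := by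
    rw [setLIntegral_eq_zero_iff measurableSet_Ioo.compl (f := fun t => ENNReal.ofReal (μ₀ t) * F t) (hm.ennreal_ofReal.mul hF)]
    filter_upwards [hsupp] with t ht htc
    simp [ht htc]
  rw [h2, add_zero]
  apply setLIntegral_congr_fun measurableSet_Ioo
  intro t _
  ring

end Chunk3

section Chunk4
open MeasureTheory Set ENNReal

/-- the weight for the forward operator -/
noncomputable def wFn (α β : ℝ) (μ₀ : ℝ → ℝ) (t : ℝ) : ℝ :=
  if t ∈ Set.Ioo α β ∧ 0 < μ₀ t then
    Real.sqrt (psiF α β t * μ₀ (psiF α β t) * (2 * (t - α) / (β - α)) / (t * μ₀ t))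
  else 1

/-- the weight for the inverse operator -/
noncomputable def vFn (α β : ℝ) (μ₀ : ℝ → ℝ) (s : ℝ) : ℝ :=
  if s ∈ Set.Ioo α β then (wFn α β μ₀ (phiF α β s))⁻¹ else 1

variable {α β : ℝ} {μ₀ : ℝ → ℝ}

lemma measurable_wFn (hm : Measurable μ₀) : Measurable (wFn α β μ₀) := by
  unfold wFn
  apply Measurable.ite
  · exact (measurableSet_Ioo.inter (measurableSet_lt measurable_const hm)).congr (by ext x; simp [Set.mem_setOf_eq, Set.mem_inter_iff]; tauto)
  · apply Measurable.sqrt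
    apply Measurable.div
    · exact ((measurable_psiF.mul (hm.comp measurable_psiF)).mul (by fun_prop))
    · exact measurable_id.mul hm
  · exact measurable_const

lemma measurable_vFn (hm : Measurable μ₀) : Measurable (vFn α β μ₀) := by
  unfold vFn
  exact Measurable.ite measurableSet_Ioo
    (((measurable_wFn hm).comp measurable_phiF).inv) measurable_const

lemma wFn_sq (hα : 0 < α) (hαβ : α < β) (h0 : ∀ t, 0 ≤ μ₀ t)
    {t : ℝ} (ht : t ∈ Set.Ioo α β) (hpt : 0 < μ₀ t) :
    (wFn α β μ₀ t)^2
      = psiF α β t * μ₀ (psiF α β t) * (2 * (t - α) / (β - α)) / (t * μ₀ t) := by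
  rw [wFn, if_pos ⟨ht, hpt⟩, Real.sq_sqrt]
  have h1 : 0 < psiF α β t := lt_trans hα (psiF_mem hαβ ht).1
  have h2 : (0:ℝ) ≤ 2 * (t - α) / (β - α) := by
    have h2a : (0:ℝ) ≤ t - α := by linarith [ht.1]
    have h2b : (0:ℝ) < β - α := by linarith
    positivity
  have h3 : 0 < t := lt_trans hα ht.1
  exact div_nonneg (mul_nonneg (mul_nonneg h1.le (h0 _)) h2)
    (mul_nonneg h3.le (h0 t))

lemma wFn_pos (hα : 0 < α) (hαβ : α < β)
    {t : ℝ} (ht : t ∈ Set.Ioo α β) (hpt : 0 < μ₀ t) (hpψ : 0 < μ₀ (psiF α β t)) :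
    0 < wFn α β μ₀ t := by
  rw [wFn, if_pos ⟨ht, hpt⟩]
  apply Real.sqrt_pos.2
  have h1 : 0 < psiF α β t := lt_trans hα (psiF_mem hαβ ht).1
  have h2 : (0:ℝ) < 2 * (t - α) / (β - α) := by
    have : (0:ℝ) < t - α := by linarith [ht.1]
    have : (0:ℝ) < β - α := by linarith
    positivity
  have h3 : 0 < t := lt_trans hα ht.1
  positivity

/-- a.e.-ν inverse identity (forward then backward weight). -/
lemma wv_cancel (hα : 0 < α) (hαβ : α < β) (hm : Measurable μ₀)
    (hsupp : ∀ᵐ t ∂volume, t ∉ Set.Ioo α β → μ₀ t = 0)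
    (hpos : ∀ᵐ t ∂(volume.restrict (Set.Ioo α β)), 0 < μ₀ t) :
    ∀ᵐ t ∂(nuM μ₀), vFn α β μ₀ (psiF α β t) * wFn α β μ₀ t = 1 := by
  filter_upwards [ae_nu_mem_Ioo hm hsupp, ae_nu_of_ae_restrict hm hsupp hpos,
    ae_nu_of_ae_restrict hm hsupp (ae_pos_comp_psi hαβ hm hpos)] with t htI hpt hpψ
  rw [vFn, if_pos (psiF_mem hαβ htI), phiF_psiF hαβ htI]
  exact inv_mul_cancel₀ (wFn_pos hα hαβ htI hpt hpψ).ne'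

/-- a.e.-ν inverse identity (backward then forward weight). -/
lemma vw_cancel (hα : 0 < α) (hαβ : α < β) (hm : Measurable μ₀)
    (hsupp : ∀ᵐ t ∂volume, t ∉ Set.Ioo α β → μ₀ t = 0)
    (hpos : ∀ᵐ t ∂(volume.restrict (Set.Ioo α β)), 0 < μ₀ t) :
    ∀ᵐ s ∂(nuM μ₀), wFn α β μ₀ (phiF α β s) * vFn α β μ₀ s = 1 := by
  filter_upwards [ae_nu_mem_Ioo hm hsupp, ae_nu_of_ae_restrict hm hsupp hpos,
    ae_nu_of_ae_restrict hm hsupp (ae_pos_comp_phi hαβ hm hpos)] with s hsI hps hpφ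
  rw [vFn, if_pos hsI]
  apply mul_inv_cancel₀
  have := wFn_pos hα hαβ (phiF_mem hαβ hsI) hpφ (by rwa [psiF_phiF hαβ hsI])
  exact this.ne'

/-- Q-form preservation (lintegral level, over `Ioo`). -/
lemma L1_Q_preserved (hα : 0 < α) (hαβ : α < β) (h0 : ∀ t, 0 ≤ μ₀ t)
    (hpos : ∀ᵐ t ∂(volume.restrict (Set.Ioo α β)), 0 < μ₀ t) (f : ℝ → ℝ) :
    ∫⁻ t in Set.Ioo α β,
        ENNReal.ofReal (t * (wFn α β μ₀ t * f (psiF α β t))^2 * μ₀ t)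
      = ∫⁻ s in Set.Ioo α β, ENNReal.ofReal (s * (f s)^2 * μ₀ s) := by
  rw [← cov_psi hαβ (fun s => ENNReal.ofReal (s * (f s)^2 * μ₀ s))]
  apply lintegral_congr_ae
  filter_upwards [hpos, ae_restrict_mem measurableSet_Ioo] with t hpt htI
  have hba : (0:ℝ) < β - α := by linarith
  have htα : (0:ℝ) < t - α := by linarith [htI.1]
  have hD : (0:ℝ) ≤ 2 * (t - α) / (β - α) := by positivity
  rw [← ENNReal.ofReal_mul hD]
  congr 1
  rw [mul_pow, wFn_sq hα hαβ h0 htI hpt]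
  have h3 : (0:ℝ) < t := lt_trans hα htI.1
  field_simp

/-- norm computation for the forward operator. -/
lemma L2_norm (hα : 0 < α) (hαβ : α < β) (h0 : ∀ t, 0 ≤ μ₀ t)
    (hpos : ∀ᵐ t ∂(volume.restrict (Set.Ioo α β)), 0 < μ₀ t) (f : ℝ → ℝ) :
    ∫⁻ t in Set.Ioo α β,
        ENNReal.ofReal ((wFn α β μ₀ t * f (psiF α β t))^2 * μ₀ t)
      = ∫⁻ s in Set.Ioo α β, ENNReal.ofReal (s / phiF α β s * (f s)^2 * μ₀ s) := by
  rw [← cov_psi hαβ (fun s => ENNReal.ofReal (s / phiF α β s * (f s)^2 * μ₀ s))]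
  apply lintegral_congr_ae
  filter_upwards [hpos, ae_restrict_mem measurableSet_Ioo] with t hpt htI
  have hba : (0:ℝ) < β - α := by linarith
  have htα : (0:ℝ) < t - α := by linarith [htI.1]
  have hD : (0:ℝ) ≤ 2 * (t - α) / (β - α) := by positivity
  rw [← ENNReal.ofReal_mul hD]
  congr 1
  rw [phiF_psiF hαβ htI, mul_pow, wFn_sq hα hαβ h0 htI hpt]
  have h3 : (0:ℝ) < t := lt_trans hα htI.1
  field_simp

/-- norm computation for the backward operator. -/
lemma L3_norm (hα : 0 < α) (hαβ : α < β) (h0 : ∀ t, 0 ≤ μ₀ t)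
    (hpos : ∀ᵐ t ∂(volume.restrict (Set.Ioo α β)), 0 < μ₀ t) (hm : Measurable μ₀) (g : ℝ → ℝ) :
    ∫⁻ s in Set.Ioo α β,
        ENNReal.ofReal ((vFn α β μ₀ s * g (phiF α β s))^2 * μ₀ s)
      = ∫⁻ t in Set.Ioo α β, ENNReal.ofReal (t / psiF α β t * (g t)^2 * μ₀ t) := by
  rw [← cov_psi hαβ (fun s => ENNReal.ofReal ((vFn α β μ₀ s * g (phiF α β s))^2 * μ₀ s))]
  apply lintegral_congr_ae
  filter_upwards [hpos, ae_restrict_mem measurableSet_Ioo,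
    ae_pos_comp_psi hαβ hm hpos] with t hpt htI hpψ
  have hba : (0:ℝ) < β - α := by linarith
  have htα : (0:ℝ) < t - α := by linarith [htI.1]
  have hD : (0:ℝ) ≤ 2 * (t - α) / (β - α) := by positivity
  have hψI : psiF α β t ∈ Set.Ioo α β := psiF_mem hαβ htI
  rw [← ENNReal.ofReal_mul hD]
  congr 1
  rw [vFn, if_pos hψI, phiF_psiF hαβ htI]
  have hw : 0 < wFn α β μ₀ t := wFn_pos hα hαβ htI hpt hpψ
  have hws := wFn_sq hα hαβ h0 htI hpt
  have h3 : (0:ℝ) < t := lt_trans hα htI.1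
  have hψ0 : (0:ℝ) < psiF α β t := lt_trans hα hψI.1
  have hDpos : (0:ℝ) < 2 * (t - α) / (β - α) := by positivity
  -- (wFn t)⁻² = t μ₀ t / (ψ t μ₀(ψ t) Dψ t)
  have hinv : ((wFn α β μ₀ t)⁻¹)^2
      = t * μ₀ t / (psiF α β t * μ₀ (psiF α β t) * (2 * (t - α) / (β - α))) := by
    rw [inv_pow, hws, inv_div]
  rw [mul_pow, hinv]
  field_simp

end Chunk4

section Chunk5
open MeasureTheory Set ENNReal

variable {ν : Measure ℝ}

/-- measurable representative of an Lp function -/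
noncomputable def mkRep (f : Lp ℝ 2 ν) : ℝ → ℝ :=
  (Lp.aestronglyMeasurable f).mk ⇑f

lemma mkRep_measurable (f : Lp ℝ 2 ν) : Measurable (mkRep f) :=
  (Lp.aestronglyMeasurable f).stronglyMeasurable_mk.measurable

lemma mkRep_ae_eq (f : Lp ℝ 2 ν) : ⇑f =ᵐ[ν] mkRep f :=
  (Lp.aestronglyMeasurable f).ae_eq_mk

lemma mkRep_memLp (f : Lp ℝ 2 ν) : MemLp (mkRep f) 2 ν :=
  (Lp.memLp f).ae_eq (mkRep_ae_eq f)

/-- composition with a null-pullback map preserves a.e. equality -/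
lemma comp_ae_eq {θ : ℝ → ℝ} (hnull : ∀ N : Set ℝ, ν N = 0 → ν (θ ⁻¹' N) = 0)
    {u u' : ℝ → ℝ} (h : u =ᵐ[ν] u') : (fun t => u (θ t)) =ᵐ[ν] fun t => u' (θ t) := by
  rw [Filter.EventuallyEq, ae_iff] at h ⊢
  refine measure_mono_null ?_ (hnull _ h)
  intro t ht
  exact ht

/-- the function underlying the weighted composition operator -/
noncomputable def wcoFun (w θ : ℝ → ℝ) (f : Lp ℝ 2 ν) : ℝ → ℝ := fun t => w t * mkRep f (θ t)

/-- the weighted composition operator as a linear map on Lp -/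
noncomputable def WCO (w θ : ℝ → ℝ)
    (hnull : ∀ N : Set ℝ, ν N = 0 → ν (θ ⁻¹' N) = 0)
    (hmem : ∀ f : Lp ℝ 2 ν, MemLp (wcoFun w θ f) 2 ν) :
    Lp ℝ 2 ν →ₗ[ℝ] Lp ℝ 2 ν where
  toFun f := (hmem f).toLp _
  map_add' f g := by
    rw [← MemLp.toLp_add (hmem f) (hmem g)]
    apply MemLp.toLp_congr
    have h1 : mkRep (f + g) =ᵐ[ν] fun t => mkRep f t + mkRep g t := by
      filter_upwards [(mkRep_ae_eq (f+g)).symm, mkRep_ae_eq f, mkRep_ae_eq g,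
        Lp.coeFn_add f g] with t h1 h2 h3 h4
      rw [h1, h4, Pi.add_apply, h2, h3]
    have h2 := comp_ae_eq hnull h1
    filter_upwards [h2] with t ht
    simp only [wcoFun, Pi.add_apply]
    rw [ht]
    ring
  map_smul' c f := by
    simp only [RingHom.id_apply]
    rw [← MemLp.toLp_const_smul c (hmem f)]
    apply MemLp.toLp_congr
    have h1 : mkRep (c • f) =ᵐ[ν] fun t => c * mkRep f t := by
      filter_upwards [(mkRep_ae_eq (c • f)).symm, mkRep_ae_eq f,
        Lp.coeFn_smul c f] with t h1 h2 h3
      rw [h1, h3, Pi.smul_apply, smul_eq_mul, h2]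
    have h2 := comp_ae_eq hnull h1
    filter_upwards [h2] with t ht
    simp only [wcoFun, Pi.smul_apply, smul_eq_mul]
    rw [ht]
    ring

lemma WCO_coeFn (w θ : ℝ → ℝ)
    (hnull : ∀ N : Set ℝ, ν N = 0 → ν (θ ⁻¹' N) = 0)
    (hmem : ∀ f : Lp ℝ 2 ν, MemLp (wcoFun w θ f) 2 ν) (f : Lp ℝ 2 ν) :
    ⇑(WCO w θ hnull hmem f) =ᵐ[ν] wcoFun w θ f :=
  MemLp.coeFn_toLp (hmem f)

/-- L² norm via lintegral of square -/
lemma eLpNorm_two_eq (h : ℝ → ℝ) :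
    eLpNorm h 2 ν = (∫⁻ t, ENNReal.ofReal ((h t)^2) ∂ν) ^ (1/2 : ℝ) := by
  rw [eLpNorm_eq_lintegral_rpow_enorm_toReal two_ne_zero ENNReal.ofNat_ne_top]
  have h2 : ((2:ℝ≥0∞)).toReal = (2:ℝ) := by simp
  rw [h2]
  congr 1
  apply lintegral_congr
  intro t
  rw [show ((2:ℝ)) = ((2:ℕ):ℝ) by norm_num, ENNReal.rpow_natCast,
    Real.enorm_eq_ofReal_abs, ← ENNReal.ofReal_pow (abs_nonneg _), sq_abs]

end Chunk5

section Chunk6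
open MeasureTheory Set ENNReal

variable {α β : ℝ} {μ₀ : ℝ → ℝ}

lemma lint_sq_f (hm : Measurable μ₀) (h0 : ∀ t, 0 ≤ μ₀ t)
    (hsupp : ∀ᵐ t ∂volume, t ∉ Set.Ioo α β → μ₀ t = 0) (f : ℝ → ℝ) (hf : Measurable f) :
    ∫⁻ t, ENNReal.ofReal ((f t)^2) ∂(nuM μ₀)
      = ∫⁻ s in Set.Ioo α β, ENNReal.ofReal ((f s)^2 * μ₀ s) := by
  rw [lint_nu hm hsupp (by fun_prop : Measurable fun t => ENNReal.ofReal ((f t)^2))]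
  apply lintegral_congr
  intro s
  rw [← ENNReal.ofReal_mul' (h0 s)]

lemma lint_Qf (hm : Measurable μ₀) (h0 : ∀ t, 0 ≤ μ₀ t)
    (hsupp : ∀ᵐ t ∂volume, t ∉ Set.Ioo α β → μ₀ t = 0) (f : ℝ → ℝ) (hf : Measurable f) :
    ∫⁻ t, ENNReal.ofReal (t * (f t)^2) ∂(nuM μ₀)
      = ∫⁻ s in Set.Ioo α β, ENNReal.ofReal (s * (f s)^2 * μ₀ s) := by
  rw [lint_nu hm hsupp (by fun_prop : Measurable fun t => ENNReal.ofReal (t * (f t)^2))]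
  apply lintegral_congr
  intro s
  rw [← ENNReal.ofReal_mul' (h0 s)]

lemma lint_sq_lt_top (f : Lp ℝ 2 (nuM μ₀)) :
    ∫⁻ t, ENNReal.ofReal ((mkRep f t)^2) ∂(nuM μ₀) < ⊤ := by
  have h := (mkRep_memLp f).2
  rw [eLpNorm_two_eq] at h
  rwa [ENNReal.rpow_lt_top_iff_of_pos (by norm_num)] at h

/-- norm of forward weighted composition, as a set integral -/
lemma lint_sq_T (hα : 0 < α) (hαβ : α < β) (hm : Measurable μ₀) (h0 : ∀ t, 0 ≤ μ₀ t)
    (hsupp : ∀ᵐ t ∂volume, t ∉ Set.Ioo α β → μ₀ t = 0)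
    (hpos : ∀ᵐ t ∂(volume.restrict (Set.Ioo α β)), 0 < μ₀ t)
    (f : Lp ℝ 2 (nuM μ₀)) :
    ∫⁻ t, ENNReal.ofReal ((wcoFun (wFn α β μ₀) (psiF α β) f t)^2) ∂(nuM μ₀)
      = ∫⁻ s in Set.Ioo α β,
          ENNReal.ofReal (s / phiF α β s * (mkRep f s)^2 * μ₀ s) := by
  have hmeas : Measurable fun t =>
      ENNReal.ofReal ((wcoFun (wFn α β μ₀) (psiF α β) f t)^2) := by
    apply Measurable.ennreal_ofReal
    apply Measurable.pow _ measurable_const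
    exact (measurable_wFn hm).mul ((mkRep_measurable f).comp measurable_psiF)
  rw [lint_nu hm hsupp hmeas]
  have := L2_norm hα hαβ h0 hpos (μ₀ := μ₀) (mkRep f)
  rw [← this]
  apply lintegral_congr
  intro t
  rw [← ENNReal.ofReal_mul' (h0 t)]
  rfl

lemma eLpNorm_T_le (hα : 0 < α) (hαβ : α < β) (hm : Measurable μ₀) (h0 : ∀ t, 0 ≤ μ₀ t)
    (hsupp : ∀ᵐ t ∂volume, t ∉ Set.Ioo α β → μ₀ t = 0)
    (hpos : ∀ᵐ t ∂(volume.restrict (Set.Ioo α β)), 0 < μ₀ t)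
    (f : Lp ℝ 2 (nuM μ₀)) :
    eLpNorm (wcoFun (wFn α β μ₀) (psiF α β) f) 2 (nuM μ₀)
      ≤ eLpNorm (mkRep f) 2 (nuM μ₀) := by
  rw [eLpNorm_two_eq, eLpNorm_two_eq]
  apply ENNReal.rpow_le_rpow _ (by norm_num)
  rw [lint_sq_T hα hαβ hm h0 hsupp hpos f, lint_sq_f hm h0 hsupp _ (mkRep_measurable f)]
  apply lintegral_mono_ae
  filter_upwards [ae_restrict_mem measurableSet_Ioo] with s hsI
  apply ENNReal.ofReal_le_ofReal
  have h1 : s / phiF α β s ≤ 1 := by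
    have h2 : (0:ℝ) < s := lt_trans hα hsI.1
    have h3 : s < phiF α β s := phiF_gt hsI
    rw [div_le_one (by linarith)]
    linarith
  have h4 : (0:ℝ) ≤ (mkRep f s)^2 * μ₀ s := mul_nonneg (sq_nonneg _) (h0 s)
  nlinarith

lemma memT (hα : 0 < α) (hαβ : α < β) (hm : Measurable μ₀) (h0 : ∀ t, 0 ≤ μ₀ t)
    (hsupp : ∀ᵐ t ∂volume, t ∉ Set.Ioo α β → μ₀ t = 0)
    (hpos : ∀ᵐ t ∂(volume.restrict (Set.Ioo α β)), 0 < μ₀ t)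
    (f : Lp ℝ 2 (nuM μ₀)) :
    MemLp (wcoFun (wFn α β μ₀) (psiF α β) f) 2 (nuM μ₀) := by
  constructor
  · exact (((measurable_wFn hm).mul
      ((mkRep_measurable f).comp measurable_psiF))).aestronglyMeasurable
  · exact lt_of_le_of_lt (eLpNorm_T_le hα hαβ hm h0 hsupp hpos f) (mkRep_memLp f).2

/-- norm of backward weighted composition, as a set integral -/
lemma lint_sq_T' (hα : 0 < α) (hαβ : α < β) (hm : Measurable μ₀) (h0 : ∀ t, 0 ≤ μ₀ t)
    (hsupp : ∀ᵐ t ∂volume, t ∉ Set.Ioo α β → μ₀ t = 0)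
    (hpos : ∀ᵐ t ∂(volume.restrict (Set.Ioo α β)), 0 < μ₀ t)
    (g : Lp ℝ 2 (nuM μ₀)) :
    ∫⁻ s, ENNReal.ofReal ((wcoFun (vFn α β μ₀) (phiF α β) g s)^2) ∂(nuM μ₀)
      = ∫⁻ t in Set.Ioo α β,
          ENNReal.ofReal (t / psiF α β t * (mkRep g t)^2 * μ₀ t) := by
  have hmeas : Measurable fun t =>
      ENNReal.ofReal ((wcoFun (vFn α β μ₀) (phiF α β) g t)^2) := by
    apply Measurable.ennreal_ofReal
    apply Measurable.pow _ measurable_const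
    exact (measurable_vFn hm).mul ((mkRep_measurable g).comp measurable_phiF)
  rw [lint_nu hm hsupp hmeas]
  have := L3_norm hα hαβ h0 hpos hm (μ₀ := μ₀) (mkRep g)
  rw [← this]
  apply lintegral_congr
  intro t
  rw [← ENNReal.ofReal_mul' (h0 t)]
  rfl

lemma memT' (hα : 0 < α) (hαβ : α < β) (hm : Measurable μ₀) (h0 : ∀ t, 0 ≤ μ₀ t)
    (hsupp : ∀ᵐ t ∂volume, t ∉ Set.Ioo α β → μ₀ t = 0)
    (hpos : ∀ᵐ t ∂(volume.restrict (Set.Ioo α β)), 0 < μ₀ t)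
    (g : Lp ℝ 2 (nuM μ₀)) :
    MemLp (wcoFun (vFn α β μ₀) (phiF α β) g) 2 (nuM μ₀) := by
  constructor
  · exact (((measurable_vFn hm).mul
      ((mkRep_measurable g).comp measurable_phiF))).aestronglyMeasurable
  · rw [eLpNorm_two_eq, ENNReal.rpow_lt_top_iff_of_pos (by norm_num)]
    rw [lint_sq_T' hα hαβ hm h0 hsupp hpos g]
    have hb : ∫⁻ t in Set.Ioo α β,
        ENNReal.ofReal (t / psiF α β t * (mkRep g t)^2 * μ₀ t)
        ≤ ∫⁻ t in Set.Ioo α β,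
            ENNReal.ofReal (β / α) * ENNReal.ofReal ((mkRep g t)^2 * μ₀ t) := by
      apply lintegral_mono_ae
      filter_upwards [ae_restrict_mem measurableSet_Ioo] with t htI
      rw [← ENNReal.ofReal_mul (div_nonneg (by linarith) hα.le)]
      apply ENNReal.ofReal_le_ofReal
      have hψ : psiF α β t ∈ Set.Ioo α β := psiF_mem hαβ htI
      have h2 : (0:ℝ) < psiF α β t := lt_trans hα hψ.1
      have h3 : t / psiF α β t ≤ β / α := by
        apply div_le_div₀ (le_of_lt (lt_trans hα hαβ)) (le_of_lt htI.2) hα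
        exact le_of_lt hψ.1
      have h4 : (0:ℝ) ≤ (mkRep g t)^2 * μ₀ t := mul_nonneg (sq_nonneg _) (h0 t)
      nlinarith
    refine lt_of_le_of_lt hb ?_
    rw [lintegral_const_mul _ (f := fun t => ENNReal.ofReal ((mkRep g t)^2 * μ₀ t)) ((((mkRep_measurable g).pow measurable_const).mul hm).ennreal_ofReal)]
    apply ENNReal.mul_lt_top ENNReal.ofReal_lt_top
    rw [← lint_sq_f hm h0 hsupp _ (mkRep_measurable g)]
    exact lint_sq_lt_top g

end Chunk6

section Chunk7
open MeasureTheory Set ENNReal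

variable {α β : ℝ} {μ₀ : ℝ → ℝ}

variable (hα : 0 < α) (hαβ : α < β) (hm : Measurable μ₀) (h0 : ∀ t, 0 ≤ μ₀ t)
  (hsupp : ∀ᵐ t ∂volume, t ∉ Set.Ioo α β → μ₀ t = 0)
  (hpos : ∀ᵐ t ∂(volume.restrict (Set.Ioo α β)), 0 < μ₀ t)

/-- the forward operator -/
noncomputable def Tfwd : Lp ℝ 2 (nuM μ₀) →ₗ[ℝ] Lp ℝ 2 (nuM μ₀) :=
  WCO (wFn α β μ₀) (psiF α β) (fun _ hN => pullback_psi hαβ hm hpos hN)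
    (memT hα hαβ hm h0 hsupp hpos)

/-- the backward operator -/
noncomputable def Tbwd : Lp ℝ 2 (nuM μ₀) →ₗ[ℝ] Lp ℝ 2 (nuM μ₀) :=
  WCO (vFn α β μ₀) (phiF α β) (fun _ hN => pullback_phi hαβ hm hpos hN)
    (memT' hα hαβ hm h0 hsupp hpos)

lemma Tfwd_coe (f : Lp ℝ 2 (nuM μ₀)) :
    ⇑(Tfwd hα hαβ hm h0 hsupp hpos f) =ᵐ[nuM μ₀] wcoFun (wFn α β μ₀) (psiF α β) f :=
  WCO_coeFn _ _ _ _ f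

lemma Tbwd_coe (g : Lp ℝ 2 (nuM μ₀)) :
    ⇑(Tbwd hα hαβ hm h0 hsupp hpos g) =ᵐ[nuM μ₀] wcoFun (vFn α β μ₀) (phiF α β) g :=
  WCO_coeFn _ _ _ _ g

lemma Tbwd_Tfwd (f : Lp ℝ 2 (nuM μ₀)) :
    Tbwd hα hαβ hm h0 hsupp hpos (Tfwd hα hαβ hm h0 hsupp hpos f) = f := by
  apply Lp.ext
  set T := Tfwd hα hαβ hm h0 hsupp hpos
  have h1 := Tbwd_coe hα hαβ hm h0 hsupp hpos (T f)
  have h2 : mkRep (T f) =ᵐ[nuM μ₀] wcoFun (wFn α β μ₀) (psiF α β) f :=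
    (mkRep_ae_eq _).symm.trans (Tfwd_coe hα hαβ hm h0 hsupp hpos f)
  have h3 := comp_ae_eq (fun _ hN => pullback_phi hαβ hm hpos hN) h2
  refine h1.trans ?_
  filter_upwards [h3, vw_cancel hα hαβ hm hsupp hpos, ae_nu_mem_Ioo hm hsupp,
    mkRep_ae_eq f] with s hs1 hs2 hs3 hs4
  show vFn α β μ₀ s * mkRep (T f) (phiF α β s) = f s
  rw [hs1]
  show vFn α β μ₀ s * (wFn α β μ₀ (phiF α β s) * mkRep f (psiF α β (phiF α β s))) = f s
  rw [psiF_phiF hαβ hs3, hs4.symm]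
  calc vFn α β μ₀ s * (wFn α β μ₀ (phiF α β s) * f s)
      = (wFn α β μ₀ (phiF α β s) * vFn α β μ₀ s) * f s := by ring
    _ = f s := by rw [hs2]; ring

lemma Tfwd_Tbwd (g : Lp ℝ 2 (nuM μ₀)) :
    Tfwd hα hαβ hm h0 hsupp hpos (Tbwd hα hαβ hm h0 hsupp hpos g) = g := by
  apply Lp.ext
  set T' := Tbwd hα hαβ hm h0 hsupp hpos
  have h1 := Tfwd_coe hα hαβ hm h0 hsupp hpos (T' g)
  have h2 : mkRep (T' g) =ᵐ[nuM μ₀] wcoFun (vFn α β μ₀) (phiF α β) g :=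
    (mkRep_ae_eq _).symm.trans (Tbwd_coe hα hαβ hm h0 hsupp hpos g)
  have h3 := comp_ae_eq (fun _ hN => pullback_psi hαβ hm hpos hN) h2
  refine h1.trans ?_
  filter_upwards [h3, wv_cancel hα hαβ hm hsupp hpos, ae_nu_mem_Ioo hm hsupp,
    mkRep_ae_eq g] with t ht1 ht2 ht3 ht4
  show wFn α β μ₀ t * mkRep (T' g) (psiF α β t) = g t
  rw [ht1]
  show wFn α β μ₀ t * (vFn α β μ₀ (psiF α β t) * mkRep g (phiF α β (psiF α β t))) = g t
  rw [phiF_psiF hαβ ht3, ht4.symm]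
  calc wFn α β μ₀ t * (vFn α β μ₀ (psiF α β t) * g t)
      = (vFn α β μ₀ (psiF α β t) * wFn α β μ₀ t) * g t := by ring
    _ = g t := by rw [ht2]; ring

/-- Q-form preservation at the Lp level -/
lemma Q_Tfwd (f : Lp ℝ 2 (nuM μ₀)) :
    ∫⁻ t, ENNReal.ofReal (t * (mkRep (Tfwd hα hαβ hm h0 hsupp hpos f) t)^2) ∂(nuM μ₀)
      = ∫⁻ t, ENNReal.ofReal (t * (mkRep f t)^2) ∂(nuM μ₀) := by
  set T := Tfwd hα hαβ hm h0 hsupp hpos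
  have h2 : mkRep (T f) =ᵐ[nuM μ₀] wcoFun (wFn α β μ₀) (psiF α β) f :=
    (mkRep_ae_eq _).symm.trans (Tfwd_coe hα hαβ hm h0 hsupp hpos f)
  have hwm : Measurable (wcoFun (wFn α β μ₀) (psiF α β) f) :=
    (measurable_wFn hm).mul ((mkRep_measurable f).comp measurable_psiF)
  calc ∫⁻ t, ENNReal.ofReal (t * (mkRep (T f) t)^2) ∂(nuM μ₀)
      = ∫⁻ t, ENNReal.ofReal (t * (wcoFun (wFn α β μ₀) (psiF α β) f t)^2) ∂(nuM μ₀) := by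
        apply lintegral_congr_ae
        filter_upwards [h2] with t ht
        rw [ht]
    _ = ∫⁻ t in Set.Ioo α β,
          ENNReal.ofReal (t * (wcoFun (wFn α β μ₀) (psiF α β) f t)^2 * μ₀ t) :=
        lint_Qf hm h0 hsupp _ hwm
    _ = ∫⁻ s in Set.Ioo α β, ENNReal.ofReal (s * (mkRep f s)^2 * μ₀ s) :=
        L1_Q_preserved hα hαβ h0 hpos (mkRep f)
    _ = ∫⁻ t, ENNReal.ofReal (t * (mkRep f t)^2) ∂(nuM μ₀) :=
        (lint_Qf hm h0 hsupp _ (mkRep_measurable f)).symm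

/-- the operator is non-expansive on all of Lp -/
lemma norm_Tfwd_le (f : Lp ℝ 2 (nuM μ₀)) :
    ‖Tfwd hα hαβ hm h0 hsupp hpos f‖ ≤ ‖f‖ := by
  rw [Lp.norm_def, Lp.norm_def]
  apply ENNReal.toReal_mono (Lp.eLpNorm_ne_top f)
  calc eLpNorm (⇑(Tfwd hα hαβ hm h0 hsupp hpos f)) 2 (nuM μ₀)
      = eLpNorm (wcoFun (wFn α β μ₀) (psiF α β) f) 2 (nuM μ₀) :=
        eLpNorm_congr_ae (Tfwd_coe hα hαβ hm h0 hsupp hpos f)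
    _ ≤ eLpNorm (mkRep f) 2 (nuM μ₀) := eLpNorm_T_le hα hαβ hm h0 hsupp hpos f
    _ = eLpNorm (⇑f) 2 (nuM μ₀) := eLpNorm_congr_ae (mkRep_ae_eq f).symm

end Chunk7

section Chunk8
open MeasureTheory Set ENNReal

variable {α β : ℝ}

lemma phiF_strictMono (hαβ : α < β) {s t : ℝ} (hs : s ∈ Set.Ioo α β)
    (ht : t ∈ Set.Ioo α β) (h : s < t) : phiF α β s < phiF α β t := by
  rw [phiF_of_mem hs, phiF_of_mem ht]
  have hba : (0:ℝ) < β - α := by linarith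
  have h1 : (0:ℝ) ≤ (s - α) * (β - α) := by nlinarith [hs.1]
  have : Real.sqrt ((s - α) * (β - α)) < Real.sqrt ((t - α) * (β - α)) :=
    Real.sqrt_lt_sqrt h1 (by nlinarith [hs.1])
  linarith

end Chunk8

open MeasureTheory

set_option maxHeartbeats 1000000 in
/-- Let `0 < α < β` and let `μ ∈ L¹(ℝ)` be a nonnegative density supported
in `(α, β)` and strictly positive a.e. on `(α, β)`. Then the ellipsoid
`E = {f ∈ L²(ℝ, μ(t)dt) : ∫ t |f t|² μ(t) dt ≤ 1}` generated by the multiplication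
operator `(Af)(t) = t f(t)` is not LEC-plastic. -/
theorem ellipsoid_L2_density_not_LECPlastic
    (α β : ℝ) (hα : 0 < α) (hαβ : α < β)
    (μ : ℝ → ℝ) (hμnonneg : ∀ t, 0 ≤ μ t)
    (hμint : Integrable μ)
    (hμsupp : Function.support μ ⊆ Set.Ioo α β)
    (hμpos : ∀ᵐ t ∂(volume.restrict (Set.Ioo α β)), 0 < μ t) :
    ¬ IsLECPlastic ℝ
      {f : Lp ℝ 2 (volume.withDensity fun t => ENNReal.ofReal (μ t)) |
        ∫ t : ℝ, t * (f t) ^ 2 ∂(volume.withDensity fun t => ENNReal.ofReal (μ t)) ≤ 1} := by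
  classical
  -- measurable nonnegative version of μ
  set μ₀ : ℝ → ℝ := fun t => max (hμint.aestronglyMeasurable.mk μ t) 0 with hμ₀def
  have hm : Measurable μ₀ :=
    (hμint.aestronglyMeasurable.stronglyMeasurable_mk.measurable).max measurable_const
  have h0 : ∀ t, 0 ≤ μ₀ t := fun t => le_max_right _ _
  have hae : μ =ᵐ[volume] μ₀ := by
    filter_upwards [hμint.aestronglyMeasurable.ae_eq_mk] with t ht
    rw [hμ₀def]
    simp only [← ht]
    rw [max_eq_left (hμnonneg t)]
  have hsupp : ∀ᵐ t ∂volume, t ∉ Set.Ioo α β → μ₀ t = 0 := by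
    filter_upwards [hae] with t ht htI
    rw [← ht]
    by_contra h
    exact htI (hμsupp h)
  have hpos : ∀ᵐ t ∂(volume.restrict (Set.Ioo α β)), 0 < μ₀ t := by
    filter_upwards [hμpos, ae_restrict_of_ae hae] with t h1 h2
    rwa [← h2]
  have hν : (volume.withDensity fun t => ENNReal.ofReal (μ t)) = nuM μ₀ := by
    rw [nuM]
    apply withDensity_congr_ae
    filter_upwards [hae] with t ht
    rw [ht]
  rw [hν]
  intro hpl
  set ν := nuM μ₀ with hνdef
  set E := {f : Lp ℝ 2 ν | ∫ t : ℝ, t * (f t) ^ 2 ∂ν ≤ 1} with hEdef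
  -- bridge between the Bochner integral and lintegrals
  have hQfin : ∀ f : Lp ℝ 2 ν,
      ∫⁻ t, ENNReal.ofReal (t * (mkRep f t)^2) ∂ν ≠ ⊤ := by
    intro f
    have hb : ∫⁻ t, ENNReal.ofReal (t * (mkRep f t)^2) ∂ν
        ≤ ∫⁻ t, ENNReal.ofReal β * ENNReal.ofReal ((mkRep f t)^2) ∂ν := by
      apply lintegral_mono_ae
      filter_upwards [ae_nu_mem_Ioo hm hsupp] with t ht
      rw [← ENNReal.ofReal_mul (by linarith : (0:ℝ) ≤ β)]
      apply ENNReal.ofReal_le_ofReal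
      nlinarith [sq_nonneg (mkRep f t), ht.1, ht.2]
    refine ne_top_of_le_ne_top ?_ hb
    rw [lintegral_const_mul _ (((mkRep_measurable f).pow measurable_const).ennreal_ofReal)]
    exact (ENNReal.mul_lt_top ENNReal.ofReal_lt_top (lint_sq_lt_top f)).ne
  have hQ : ∀ f : Lp ℝ 2 ν, ∫ t : ℝ, t * (f t) ^ 2 ∂ν
      = (∫⁻ t, ENNReal.ofReal (t * (mkRep f t)^2) ∂ν).toReal := by
    intro f
    have h1 : ∫ t : ℝ, t * (f t) ^ 2 ∂ν = ∫ t : ℝ, t * (mkRep f t) ^ 2 ∂ν := by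
      apply integral_congr_ae
      filter_upwards [mkRep_ae_eq f] with t ht
      rw [ht]
    rw [h1, integral_eq_lintegral_of_nonneg_ae]
    · filter_upwards [ae_nu_mem_Ioo hm hsupp] with t ht
      have : (0:ℝ) < t := lt_trans hα ht.1
      positivity
    · exact (measurable_id.mul ((mkRep_measurable f).pow measurable_const)).aestronglyMeasurable
  have hmem : ∀ f : Lp ℝ 2 ν,
      f ∈ E ↔ (∫⁻ t, ENNReal.ofReal (t * (mkRep f t)^2) ∂ν) ≤ 1 := by
    intro f
    rw [hEdef, Set.mem_setOf_eq, hQ f, ← ENNReal.ofReal_one]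
    exact (ENNReal.le_ofReal_iff_toReal_le (hQfin f) zero_le_one).symm
  set T := Tfwd hα hαβ hm h0 hsupp hpos with hTdef
  set T' := Tbwd hα hαβ hm h0 hsupp hpos with hT'def
  -- T preserves E
  have hTE : ∀ f : Lp ℝ 2 ν, (T f ∈ E ↔ f ∈ E) := by
    intro f
    rw [hmem, hmem, Q_Tfwd hα hαβ hm h0 hsupp hpos f]
  have hBij : Set.BijOn T E E := by
    refine ⟨fun f hf => (hTE f).2 hf, ?_, ?_⟩
    · intro x _ y _ hxy
      have := congrArg T' hxy
      rwa [hTdef, hT'def, Tbwd_Tfwd, Tbwd_Tfwd] at this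
    · intro g hg
      refine ⟨T' g, ?_, ?_⟩
      · have h2 : T (T' g) = g := Tfwd_Tbwd hα hαβ hm h0 hsupp hpos g
        have := (hTE (T' g)).symm
        rw [h2] at this
        exact this.2 hg
      · exact Tfwd_Tbwd hα hαβ hm h0 hsupp hpos g
  have hNE : ∀ x ∈ E, ∀ y ∈ E, ‖T x - T y‖ ≤ ‖x - y‖ := by
    intro x _ y _
    rw [← map_sub]
    exact norm_Tfwd_le hα hαβ hm h0 hsupp hpos (x - y)
  have hIso := hpl T hBij hNE
  -- geometry of the test interval
  set a := (α + β)/2 with hadef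
  have haI : a ∈ Set.Ioo α β := ⟨by rw [hadef]; linarith, by rw [hadef]; linarith⟩
  set b := phiF α β a with hbdef
  have hbI : b ∈ Set.Ioo α β := phiF_mem hαβ haI
  have hab : a < b := phiF_gt haI
  set m := (a + b)/2 with hmdef
  have ham : a < m := by rw [hmdef]; linarith
  have hmb : m < b := by rw [hmdef]; linarith
  have hmI : m ∈ Set.Ioo α β := ⟨by linarith [haI.1], by linarith [hbI.2]⟩
  have hb0 : (0:ℝ) < b := by linarith [haI.1]
  have hm0 : (0:ℝ) < m := by linarith [hmI.1]
  set ρ := m / b with hρdef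
  have hρ1 : ρ < 1 := by rw [hρdef, div_lt_one hb0]; exact hmb
  have hρ0 : (0:ℝ) ≤ ρ := by rw [hρdef]; positivity
  have hsφ : ∀ s ∈ Set.Ioo a m, s / phiF α β s ≤ ρ := by
    intro s hs
    have hsI : s ∈ Set.Ioo α β := ⟨by linarith [haI.1, hs.1], by linarith [hmI.2, hs.2]⟩
    have h1 : b < phiF α β s := phiF_strictMono hαβ haI hsI hs.1
    have h2 : (0:ℝ) < phiF α β s := lt_trans hb0 h1
    rw [hρdef, div_le_div_iff₀ h2 hb0]
    nlinarith [hs.1, hs.2]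
  -- the measure is finite
  have hνfin : ν Set.univ < ⊤ := by
    rw [hνdef, nuM, withDensity_apply _ MeasurableSet.univ, Measure.restrict_univ]
    have heq : ∫⁻ t, ENNReal.ofReal (μ₀ t) = ∫⁻ t, ENNReal.ofReal (μ t) := by
      apply lintegral_congr_ae
      filter_upwards [hae] with t ht
      rw [ht]
    rw [heq]
    exact hμint.lintegral_lt_top
  set mU := ν Set.univ with hmUdef
  set c := min 1 (1 / (β * (mU.toReal + 1))) with hcdef
  have hβ0 : (0:ℝ) < β := lt_trans hα hαβ
  have hmR : (0:ℝ) ≤ mU.toReal := ENNReal.toReal_nonneg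
  have hc0 : 0 < c := lt_min one_pos (by positivity)
  have hc1 : c ≤ 1 := min_le_left _ _
  set x0fun : ℝ → ℝ := Set.indicator (Set.Ioo a m) (fun _ => c) with hx0def
  have hx0meas : Measurable x0fun := measurable_const.indicator measurableSet_Ioo
  have hx0mem : MemLp x0fun 2 ν :=
    memLp_indicator_const 2 measurableSet_Ioo c
      (Or.inr (lt_of_le_of_lt (measure_mono (Set.subset_univ _)) hνfin).ne)
  set x0 : Lp ℝ 2 ν := hx0mem.toLp x0fun with hx0
  have hx0coe : ⇑x0 =ᵐ[ν] x0fun := hx0mem.coeFn_toLp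
  have hx0rep : mkRep x0 =ᵐ[ν] x0fun := (mkRep_ae_eq x0).symm.trans hx0coe
  have hx0repI : ∀ᵐ s ∂(volume.restrict (Set.Ioo α β)), mkRep x0 s = x0fun s :=
    ae_restrict_of_ae_nu hm hpos hx0rep
  -- x0 belongs to the ellipsoid
  have hx0E : x0 ∈ E := by
    rw [hmem]
    have hb1 : ∫⁻ t, ENNReal.ofReal (t * (mkRep x0 t)^2) ∂ν
        ≤ ∫⁻ _, ENNReal.ofReal (β * c^2) ∂ν := by
      apply lintegral_mono_ae
      filter_upwards [ae_nu_mem_Ioo hm hsupp, hx0rep] with t ht hrep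
      apply ENNReal.ofReal_le_ofReal
      rw [hrep, hx0def]
      by_cases hI : t ∈ Set.Ioo a m
      · rw [Set.indicator_of_mem hI]
        nlinarith [ht.2, sq_nonneg c, ht.1]
      · rw [Set.indicator_of_notMem hI]
        nlinarith [sq_nonneg c]
    refine le_trans hb1 ?_
    rw [lintegral_const]
    have hmUne : mU ≠ ⊤ := hνfin.ne
    have h2 : ENNReal.ofReal (β * c^2) * mU
        ≤ ENNReal.ofReal (1/(mU.toReal+1)) * ENNReal.ofReal (mU.toReal) := by
      apply mul_le_mul' (ENNReal.ofReal_le_ofReal ?_) ?_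
      · have h3 : c ≤ 1 / (β * (mU.toReal + 1)) := min_le_right _ _
        have hcc : c^2 ≤ c := by nlinarith [mul_nonneg hc0.le (sub_nonneg.2 hc1)]
        calc β * c^2 ≤ β * c := mul_le_mul_of_nonneg_left hcc hβ0.le
          _ ≤ β * (1/(β * (mU.toReal+1))) := mul_le_mul_of_nonneg_left h3 hβ0.le
          _ = 1/(mU.toReal+1) := by field_simp
      · rw [ENNReal.ofReal_toReal hmUne]
    refine le_trans h2 ?_
    rw [← ENNReal.ofReal_mul (by positivity)]
    rw [ENNReal.ofReal_le_one]
    rw [div_mul_eq_mul_div, one_mul, div_le_one (by positivity)]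
    linarith
  -- 0 belongs to the ellipsoid
  have h0E : (0 : Lp ℝ 2 ν) ∈ E := by
    rw [hmem]
    have hz : ∫⁻ t, ENNReal.ofReal (t * (mkRep (0 : Lp ℝ 2 ν) t)^2) ∂ν = 0 := by
      rw [lintegral_eq_zero_iff
        (f := fun t => ENNReal.ofReal (t * (mkRep (0 : Lp ℝ 2 ν) t)^2))
        ((measurable_id.mul ((mkRep_measurable _).pow measurable_const)).ennreal_ofReal)]
      filter_upwards [(mkRep_ae_eq (0 : Lp ℝ 2 ν)).symm, Lp.coeFn_zero ℝ 2 ν] with t h1 h2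
      simp only [Pi.zero_apply] at h2
      rw [h1, h2]
      simp
    rw [hz]
    exact zero_le_one
  -- strict norm decrease on x0
  have hLne := lint_sq_lt_top x0
  set L := ∫⁻ t, ENNReal.ofReal ((mkRep x0 t)^2) ∂ν with hLdef
  have hLpos : 0 < L := by
    rcases eq_zero_or_pos L with hL0 | h
    · exfalso
      rw [hLdef, lint_sq_f hm h0 hsupp _ (mkRep_measurable x0)] at hL0
      rw [setLIntegral_eq_zero_iff measurableSet_Ioo
        (f := fun t => ENNReal.ofReal ((mkRep x0 t)^2 * μ₀ t)) ((((mkRep_measurable x0).pow measurable_const).mul hm).ennreal_ofReal)] at hL0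
      have hIoo_null : ∀ᵐ t ∂(volume.restrict (Set.Ioo α β)), t ∉ Set.Ioo a m := by
        filter_upwards [ae_restrict_of_ae hL0, hpos, hx0repI,
          ae_restrict_mem measurableSet_Ioo] with t h1 h2 h3 h4
        intro h5
        have h6 := h1 h4
        rw [h3, hx0def, Set.indicator_of_mem h5] at h6
        rw [ENNReal.ofReal_eq_zero] at h6
        nlinarith [mul_pos (pow_pos hc0 2) h2]
      have h7 : volume.restrict (Set.Ioo α β) (Set.Ioo a m) = 0 := by
        rw [ae_iff] at hIoo_null
        simp at hIoo_null ⊢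
        exact hIoo_null
      rw [Measure.restrict_apply' measurableSet_Ioo] at h7
      have h8 : Set.Ioo a m ∩ Set.Ioo α β = Set.Ioo a m := by
        apply Set.inter_eq_self_of_subset_left
        intro z hz
        exact ⟨by linarith [haI.1, hz.1], by linarith [hmI.2, hz.2]⟩
      rw [h8, Real.volume_Ioo] at h7
      rw [ENNReal.ofReal_eq_zero] at h7
      linarith
    · exact h
  have hLT : ∫⁻ t, ENNReal.ofReal ((wcoFun (wFn α β μ₀) (psiF α β) x0 t)^2) ∂ν
      ≤ ENNReal.ofReal ρ * L := by
    rw [lint_sq_T hα hαβ hm h0 hsupp hpos x0, hLdef,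
      lint_sq_f hm h0 hsupp _ (mkRep_measurable x0),
      ← lintegral_const_mul _ (f := fun t => ENNReal.ofReal ((mkRep x0 t)^2 * μ₀ t)) ((((mkRep_measurable x0).pow measurable_const).mul hm).ennreal_ofReal)]
    apply lintegral_mono_ae
    filter_upwards [hx0repI, ae_restrict_mem measurableSet_Ioo] with s hrep hsI
    rw [← ENNReal.ofReal_mul hρ0]
    apply ENNReal.ofReal_le_ofReal
    rw [hrep, hx0def]
    by_cases hI : s ∈ Set.Ioo a m
    · rw [Set.indicator_of_mem hI]
      have h1 := hsφ s hI
      have h2 : (0:ℝ) ≤ c^2 * μ₀ s := mul_nonneg (sq_nonneg c) (h0 s)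
      nlinarith
    · rw [Set.indicator_of_notMem hI]
      nlinarith [mul_nonneg hρ0 (mul_nonneg (sq_nonneg (0:ℝ)) (h0 s))]
  have hstep : ENNReal.ofReal ρ * L < L := by
    have h1 : ENNReal.ofReal ρ < 1 := ENNReal.ofReal_lt_one.2 hρ1
    calc ENNReal.ofReal ρ * L < 1 * L :=
        (ENNReal.mul_lt_mul_iff_left hLpos.ne' hLne.ne).2 h1
      _ = L := one_mul L
  have hnorm : ‖T x0‖ < ‖x0‖ := by
    rw [Lp.norm_def, Lp.norm_def]
    apply ENNReal.toReal_strict_mono (Lp.eLpNorm_ne_top x0)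
    calc eLpNorm (⇑(T x0)) 2 ν
        = eLpNorm (wcoFun (wFn α β μ₀) (psiF α β) x0) 2 ν :=
          eLpNorm_congr_ae (Tfwd_coe hα hαβ hm h0 hsupp hpos x0)
      _ = (∫⁻ t, ENNReal.ofReal ((wcoFun (wFn α β μ₀) (psiF α β) x0 t)^2) ∂ν) ^ (1/2 : ℝ) :=
          eLpNorm_two_eq _
      _ ≤ (ENNReal.ofReal ρ * L) ^ (1/2 : ℝ) := ENNReal.rpow_le_rpow hLT (by norm_num)
      _ < L ^ (1/2 : ℝ) := ENNReal.rpow_lt_rpow hstep (by norm_num)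
      _ = eLpNorm (mkRep x0) 2 ν := (eLpNorm_two_eq _).symm
      _ = eLpNorm (⇑x0) 2 ν := eLpNorm_congr_ae (mkRep_ae_eq x0).symm
  have hcontra := hIso x0 hx0E 0 h0E
  rw [map_zero, sub_zero, sub_zero] at hcontra
  exact absurd hcontra (ne_of_lt hnorm)
end

section
/- Let A be a bounded self-adjoint operator on a separable infinite-dimensional Hilbert space H with inf_{‖x‖=1} ⟨Ax, x⟩ > 0, let E = {x ∈ H : ⟨x, Ax⟩ ≤ 1} and S = {x ∈ H : ⟨x, Ax⟩ = 1}. Let T : H → H be a linear operator which maps E bijectively onto itself. Then T maps the whole of H bijectively onto itself and T(S) = S. If, moreover, the restriction of T to E is non-expansive, then ‖T‖ ≤ 1, i.e. ‖Tx‖ ≤ ‖x‖ for all x ∈ H. -/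
/-- Let `A` be a bounded self-adjoint operator (positively bounded below on
the sphere) on a separable infinite-dimensional Hilbert space `H`, let
`E = {x | ⟨x, Ax⟩ ≤ 1}` and `S = {x | ⟨x, Ax⟩ = 1}`. If a linear operator `T : H → H` maps
`E` bijectively onto itself, then `T` is a bijection of `H` and `T(S) = S`; if moreover `T`
is non-expansive on `E`, then `‖T x‖ ≤ ‖x‖` for all `x ∈ H`. -/
theorem linear_bijection_of_ellipsoid
    {𝕜 H : Type*} [RCLike 𝕜] [NormedAddCommGroup H] [InnerProductSpace 𝕜 H]
    [CompleteSpace H] [TopologicalSpace.SeparableSpace H]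
    (hinf : ¬ FiniteDimensional 𝕜 H)
    (A : H →L[𝕜] H) (hA : IsSelfAdjoint A)
    (hpos : ∃ c : ℝ, 0 < c ∧ ∀ x : H, ‖x‖ = 1 → c ≤ RCLike.re (inner 𝕜 (A x) x : 𝕜))
    (T : H →ₗ[𝕜] H)
    (hT : Set.BijOn T {x : H | RCLike.re (inner 𝕜 x (A x) : 𝕜) ≤ 1}
      {x : H | RCLike.re (inner 𝕜 x (A x) : 𝕜) ≤ 1}) :
    Function.Bijective T ∧
    T '' {x : H | RCLike.re (inner 𝕜 x (A x) : 𝕜) = 1}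
      = {x : H | RCLike.re (inner 𝕜 x (A x) : 𝕜) = 1} ∧
    ((∀ x ∈ {x : H | RCLike.re (inner 𝕜 x (A x) : 𝕜) ≤ 1},
        ∀ y ∈ {x : H | RCLike.re (inner 𝕜 x (A x) : 𝕜) ≤ 1}, ‖T x - T y‖ ≤ ‖x - y‖) →
      ∀ x : H, ‖T x‖ ≤ ‖x‖) := by
  set q : H → ℝ := fun x => RCLike.re (inner 𝕜 x (A x) : 𝕜) with hqdef
  set E : Set H := {x : H | q x ≤ 1} with hEdef
  obtain ⟨c, hc0, hcb⟩ := hpos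
  have hscale : ∀ (t : ℝ) (x : H), q ((t:𝕜) • x) = t^2 * q x := by
    intro t x
    simp only [hqdef, map_smul, inner_smul_left, inner_smul_right, RCLike.conj_ofReal,
      ← RCLike.ofReal_mul, RCLike.re_ofReal_mul]
    ring
  have hq0 : q 0 = 0 := by simp [hqdef]
  have hlow : ∀ x : H, c * ‖x‖^2 ≤ q x := by
    intro x
    rcases eq_or_ne x 0 with rfl | hx
    · simp [hq0]
    · have hn : (0:ℝ) < ‖x‖ := norm_pos_iff.mpr hx
      have hu : ‖((‖x‖⁻¹ : ℝ) : 𝕜) • x‖ = 1 := by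
        simp [norm_smul, abs_of_pos (inv_pos.mpr hn), inv_mul_cancel₀ hn.ne']
      have h1 := hcb _ hu
      have h2 : RCLike.re (inner 𝕜 (A (((‖x‖⁻¹:ℝ):𝕜) • x)) (((‖x‖⁻¹:ℝ):𝕜) • x) : 𝕜)
          = q (((‖x‖⁻¹:ℝ):𝕜) • x) := inner_re_symm (𝕜 := 𝕜) _ _
      rw [h2, hscale] at h1
      have h3 : c * ‖x‖^2 ≤ (‖x‖⁻¹)^2 * q x * ‖x‖^2 := by nlinarith
      calc c * ‖x‖^2 ≤ (‖x‖⁻¹)^2 * q x * ‖x‖^2 := h3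
        _ = q x := by field_simp
  have hqnn : ∀ x : H, 0 ≤ q x := fun x => le_trans (by positivity) (hlow x)
  have hqpos : ∀ x : H, x ≠ 0 → 0 < q x := by
    intro x hx
    have h : (0:ℝ) < c * ‖x‖^2 := by
      have := norm_pos_iff.mpr hx
      positivity
    exact lt_of_lt_of_le h (hlow x)
  have h0E : (0:H) ∈ E := by show q 0 ≤ 1; simp [hq0]
  -- injectivity
  have hinj : Function.Injective T := by
    intro a b hab
    set t : ℝ := (1 + max (q a) (q b))⁻¹ with htdef
    have hM : 0 ≤ max (q a) (q b) := le_trans (hqnn a) (le_max_left _ _)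
    have ht0 : 0 < t := by positivity
    have ha : ((t:ℝ):𝕜) • a ∈ E := by
      show q _ ≤ 1
      rw [hscale, htdef, inv_pow, inv_mul_le_iff₀ (by positivity)]
      have : q a ≤ max (q a) (q b) := le_max_left _ _
      nlinarith
    have hb : ((t:ℝ):𝕜) • b ∈ E := by
      show q _ ≤ 1
      rw [hscale, htdef, inv_pow, inv_mul_le_iff₀ (by positivity)]
      have : q b ≤ max (q a) (q b) := le_max_right _ _
      nlinarith
    have heq : ((t:ℝ):𝕜) • a = ((t:ℝ):𝕜) • b := by
      apply hT.injOn ha hb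
      simp only [map_smul, hab]
    have ht : ((t:ℝ):𝕜) ≠ 0 := by
      simpa [RCLike.ofReal_eq_zero] using ht0.ne'
    exact smul_right_injective H ht heq
  -- surjectivity
  have hsurj : Function.Surjective T := by
    intro y
    set t : ℝ := (1 + q y)⁻¹ with htdef
    have h1 : (0:ℝ) < 1 + q y := by linarith [hqnn y]
    have ht0 : 0 < t := inv_pos.mpr h1
    have hy : ((t:ℝ):𝕜) • y ∈ E := by
      show q _ ≤ 1
      rw [hscale, htdef, inv_pow, inv_mul_le_iff₀ (pow_pos h1 2)]
      nlinarith [hqnn y]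
    obtain ⟨z, hz, hzeq⟩ := hT.surjOn hy
    refine ⟨((t⁻¹:ℝ):𝕜) • z, ?_⟩
    rw [map_smul, hzeq]
    rw [smul_smul, ← RCLike.ofReal_mul, inv_mul_cancel₀ ht0.ne']
    simp
  -- dilation lemma
  have dilate : ∀ x : H, x ≠ 0 → q x < 1 → ∃ s : ℝ, 1 < s ∧ s^2 * q x = 1 := by
    intro x hx h1
    have hp := hqpos x hx
    refine ⟨Real.sqrt (q x)⁻¹, ?_, ?_⟩
    · have : (1:ℝ) < (q x)⁻¹ := (one_lt_inv₀ hp).mpr h1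
      calc (1:ℝ) = Real.sqrt 1 := Real.sqrt_one.symm
        _ < Real.sqrt (q x)⁻¹ := Real.sqrt_lt_sqrt zero_le_one this
    · rw [Real.sq_sqrt (by positivity)]
      exact inv_mul_cancel₀ hp.ne'
  -- S maps into S
  have hfwd : ∀ x : H, q x = 1 → q (T x) = 1 := by
    intro x hx
    have hxE : x ∈ E := le_of_eq hx
    have hTxE : T x ∈ E := hT.mapsTo hxE
    by_contra hne
    have hlt : q (T x) < 1 := lt_of_le_of_ne hTxE hne
    have hx0 : x ≠ 0 := by intro h; rw [h, hq0] at hx; norm_num at hx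
    have hTx0 : T x ≠ 0 := by
      intro h
      exact hx0 (hinj (by rw [h, map_zero]))
    obtain ⟨s, hs1, hs2⟩ := dilate (T x) hTx0 hlt
    have hsE : ((s:ℝ):𝕜) • T x ∈ E := by
      show q _ ≤ 1
      rw [hscale, hs2]
    obtain ⟨w, hw, hweq⟩ := hT.surjOn hsE
    have : T w = T (((s:ℝ):𝕜) • x) := by rw [hweq, map_smul]
    have hw2 : w = ((s:ℝ):𝕜) • x := hinj this
    rw [hw2] at hw
    have : q (((s:ℝ):𝕜) • x) ≤ 1 := hw
    rw [hscale, hx, mul_one] at this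
    nlinarith
  have hbwd : ∀ y : H, q y = 1 → ∃ x : H, q x = 1 ∧ T x = y := by
    intro y hy
    obtain ⟨x, hxE, hxeq⟩ := hT.surjOn (le_of_eq hy : y ∈ E)
    refine ⟨x, ?_, hxeq⟩
    by_contra hne
    have hlt : q x < 1 := lt_of_le_of_ne hxE hne
    have hx0 : x ≠ 0 := by
      intro h
      rw [h] at hxeq
      rw [← hxeq, map_zero, hq0] at hy
      norm_num at hy
    obtain ⟨s, hs1, hs2⟩ := dilate x hx0 hlt
    have hsE : ((s:ℝ):𝕜) • x ∈ E := by
      show q _ ≤ 1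
      rw [hscale, hs2]
    have := hT.mapsTo hsE
    rw [map_smul, hxeq] at this
    have h2 : q (((s:ℝ):𝕜) • y) ≤ 1 := this
    rw [hscale, hy, mul_one] at h2
    nlinarith
  refine ⟨⟨hinj, hsurj⟩, ?_, ?_⟩
  · ext y
    constructor
    · rintro ⟨x, hx, rfl⟩
      exact hfwd x hx
    · intro hy
      obtain ⟨x, hx, hxeq⟩ := hbwd y hy
      exact ⟨x, hx, hxeq⟩
  · intro hne x
    rcases eq_or_ne x 0 with rfl | hx0
    · simp
    set t : ℝ := (1 + q x)⁻¹ with htdef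
    have h1 : (0:ℝ) < 1 + q x := by linarith [hqnn x]
    have ht0 : 0 < t := inv_pos.mpr h1
    have hxE : ((t:ℝ):𝕜) • x ∈ E := by
      show q _ ≤ 1
      rw [hscale, htdef, inv_pow, inv_mul_le_iff₀ (pow_pos h1 2)]
      nlinarith [hqnn x]
    have := hne _ hxE 0 h0E
    rw [map_zero, sub_zero, sub_zero, map_smul, norm_smul, norm_smul] at this
    have hnt : ‖((t:ℝ):𝕜)‖ = t := by
      rw [RCLike.norm_ofReal, abs_of_pos ht0]
    rw [hnt] at this
    exact le_of_mul_le_mul_left this ht0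
end

section
/- Let A be a bounded self-adjoint operator on a separable infinite-dimensional Hilbert space H with inf_{‖x‖=1} ⟨Ax, x⟩ > 0, whose eigenvectors span a dense subspace of H (i.e. σ(A) = σ_pp(A) ⊂ (0, ∞)). Suppose the set of eigenvalues of A has a minimal element r whose eigenspace H_r = Ker(A − r) is finite-dimensional. Let T : H → H be a linear operator which maps the ellipsoid E = {x ∈ H : ⟨x, Ax⟩ ≤ 1} bijectively onto itself and whose restriction to E is non-expansive. Then T(H_r) = H_r, T(H_r ∩ E) = H_r ∩ E, and the restriction of T to H_r is a bijective isometry. -/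
section Aux

variable {𝕜 H : Type*} [RCLike 𝕜] [NormedAddCommGroup H] [InnerProductSpace 𝕜 H]

/-- For `x` in the span of eigenspaces of a symmetric operator whose real eigenvalues are
all `≥ r`, we have `r * ‖x‖ ^ 2 ≤ re ⟪x, A x⟫`. -/
lemma quad_lower_on_eigenspan (A : H →ₗ[𝕜] H) (hsym : A.IsSymmetric) (r : ℝ)
    (hrmin : ∀ μ : ℝ, Module.End.HasEigenvalue A (μ : 𝕜) → r ≤ μ)
    (x : H) (hx : x ∈ ⨆ μ : 𝕜, Module.End.eigenspace A μ) :
    r * ‖x‖ ^ 2 ≤ RCLike.re (inner 𝕜 x (A x) : 𝕜) := by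
  classical
  obtain ⟨f, hf, rfl⟩ := (Submodule.mem_iSup_iff_exists_finsupp _ x).mp hx
  have horth : ∀ μ ν : 𝕜, μ ≠ ν → (inner 𝕜 (f μ) (f ν) : 𝕜) = 0 := by
    intro μ ν hμν
    exact hsym.orthogonalFamily_eigenspaces hμν ⟨f μ, hf μ⟩ ⟨f ν, hf ν⟩
  have hAf : ∀ μ : 𝕜, A (f μ) = μ • f μ := fun μ => Module.End.mem_eigenspace_iff.mp (hf μ)
  have hsum : f.sum (fun _ v => v) = ∑ μ ∈ f.support, f μ := rfl
  -- diagonalize the quadratic form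
  have hdiag : ∀ g : 𝕜 → H, (∀ μ, g μ = f μ ∨ g μ = A (f μ)) →
      (inner 𝕜 (f.sum fun _ v => v) (∑ ν ∈ f.support, g ν) : 𝕜)
        = ∑ μ ∈ f.support, (inner 𝕜 (f μ) (g μ) : 𝕜) := by
    intro g hg
    rw [hsum, sum_inner]
    refine Finset.sum_congr rfl fun μ hμ => ?_
    rw [inner_sum]
    refine Finset.sum_eq_single μ (fun ν _ hν => ?_) (fun h => by
      simp [Finsupp.notMem_support_iff.mp h])
    rcases hg ν with h | h
    · rw [h]; exact horth μ ν (Ne.symm hν)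
    · rw [h, hAf ν, inner_smul_right, horth μ ν (Ne.symm hν), mul_zero]
  have hx2 : (inner 𝕜 (f.sum fun _ v => v) (f.sum fun _ v => v) : 𝕜)
      = ∑ μ ∈ f.support, (inner 𝕜 (f μ) (f μ) : 𝕜) := by
    rw [show (f.sum fun _ v => v) = ∑ ν ∈ f.support, f ν from rfl] at *
    exact hdiag _ (fun μ => Or.inl rfl)
  have hAx2 : (inner 𝕜 (f.sum fun _ v => v) (A (f.sum fun _ v => v)) : 𝕜)
      = ∑ μ ∈ f.support, (inner 𝕜 (f μ) (A (f μ)) : 𝕜) := by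
    have : A (f.sum fun _ v => v) = ∑ ν ∈ f.support, A (f ν) := by
      rw [hsum, map_sum]
    rw [this]
    exact hdiag _ (fun μ => Or.inr rfl)
  have hnorm : ‖f.sum fun _ v => v‖ ^ 2 = ∑ μ ∈ f.support, ‖f μ‖ ^ 2 := by
    rw [← inner_self_eq_norm_sq (𝕜 := 𝕜), hx2, map_sum]
    exact Finset.sum_congr rfl fun μ _ => inner_self_eq_norm_sq (𝕜 := 𝕜) (f μ)
  have hterm : ∀ μ ∈ f.support,
      r * ‖f μ‖ ^ 2 ≤ RCLike.re (inner 𝕜 (f μ) (A (f μ)) : 𝕜) := by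
    intro μ hμ
    have hfμ : f μ ≠ 0 := Finsupp.mem_support_iff.mp hμ
    have hev : Module.End.HasEigenvalue A μ :=
      Module.End.hasEigenvalue_of_hasEigenvector ⟨hf μ, hfμ⟩
    have hμreal : ((RCLike.re μ : ℝ) : 𝕜) = μ :=
      RCLike.conj_eq_iff_re.mp (hsym.conj_eigenvalue_eq_self hev)
    have hle : r ≤ RCLike.re μ := hrmin _ (by rw [hμreal]; exact hev)
    have : (inner 𝕜 (f μ) (A (f μ)) : 𝕜) = μ * inner 𝕜 (f μ) (f μ) := by
      rw [hAf μ, inner_smul_right]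
    rw [this, ← hμreal, RCLike.re_ofReal_mul, inner_self_eq_norm_sq]
    exact mul_le_mul_of_nonneg_right hle (sq_nonneg _)
  calc r * ‖f.sum fun _ v => v‖ ^ 2 = ∑ μ ∈ f.support, r * ‖f μ‖ ^ 2 := by
        rw [hnorm, Finset.mul_sum]
    _ ≤ ∑ μ ∈ f.support, RCLike.re (inner 𝕜 (f μ) (A (f μ)) : 𝕜) :=
        Finset.sum_le_sum hterm
    _ = RCLike.re (inner 𝕜 (f.sum fun _ v => v) (A (f.sum fun _ v => v)) : 𝕜) := by
        rw [hAx2, map_sum]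

end Aux

/-- Let `A` be a bounded self-adjoint operator (positively bounded below
on the sphere) on a separable infinite-dimensional Hilbert space `H`, whose eigenvectors
span a dense subspace of `H`. Suppose the set of eigenvalues has a minimal element `r`
whose eigenspace `H_r = Ker(A - r)` is finite-dimensional. If a linear operator `T`
maps the ellipsoid `E = {x | ⟨x, Ax⟩ ≤ 1}` bijectively onto itself and is non-expansive
on `E`, then `T(H_r) = H_r`, `T(H_r ∩ E) = H_r ∩ E`, and `T` restricted to `H_r` is a
bijective isometry. -/
theorem min_eigenspace_invariant
    {𝕜 H : Type*} [RCLike 𝕜] [NormedAddCommGroup H] [InnerProductSpace 𝕜 H]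
    [CompleteSpace H] [TopologicalSpace.SeparableSpace H]
    (hinf : ¬ FiniteDimensional 𝕜 H)
    (A : H →L[𝕜] H) (hA : IsSelfAdjoint A)
    (hpos : ∃ c : ℝ, 0 < c ∧ ∀ x : H, ‖x‖ = 1 → c ≤ RCLike.re (inner 𝕜 (A x) x : 𝕜))
    (hdense : (⨆ μ : 𝕜, Module.End.eigenspace (A : H →ₗ[𝕜] H) μ).topologicalClosure = ⊤)
    (r : ℝ)
    (hr : Module.End.HasEigenvalue (A : H →ₗ[𝕜] H) (r : 𝕜))
    (hrmin : ∀ μ : ℝ, Module.End.HasEigenvalue (A : H →ₗ[𝕜] H) (μ : 𝕜) → r ≤ μ)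
    (hfd : FiniteDimensional 𝕜 (Module.End.eigenspace (A : H →ₗ[𝕜] H) (r : 𝕜)))
    (T : H →ₗ[𝕜] H)
    (hTbij : Set.BijOn T {x : H | RCLike.re (inner 𝕜 x (A x) : 𝕜) ≤ 1}
      {x : H | RCLike.re (inner 𝕜 x (A x) : 𝕜) ≤ 1})
    (hTne : ∀ x ∈ {x : H | RCLike.re (inner 𝕜 x (A x) : 𝕜) ≤ 1},
      ∀ y ∈ {x : H | RCLike.re (inner 𝕜 x (A x) : 𝕜) ≤ 1}, ‖T x - T y‖ ≤ ‖x - y‖) :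
    T '' (Module.End.eigenspace (A : H →ₗ[𝕜] H) (r : 𝕜) : Set H)
      = (Module.End.eigenspace (A : H →ₗ[𝕜] H) (r : 𝕜) : Set H) ∧
    T '' ((Module.End.eigenspace (A : H →ₗ[𝕜] H) (r : 𝕜) : Set H)
        ∩ {x : H | RCLike.re (inner 𝕜 x (A x) : 𝕜) ≤ 1})
      = (Module.End.eigenspace (A : H →ₗ[𝕜] H) (r : 𝕜) : Set H)
        ∩ {x : H | RCLike.re (inner 𝕜 x (A x) : 𝕜) ≤ 1} ∧
    Set.BijOn T (Module.End.eigenspace (A : H →ₗ[𝕜] H) (r : 𝕜) : Set H)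
      (Module.End.eigenspace (A : H →ₗ[𝕜] H) (r : 𝕜) : Set H) ∧
    ∀ x ∈ (Module.End.eigenspace (A : H →ₗ[𝕜] H) (r : 𝕜) : Set H),
      ∀ y ∈ (Module.End.eigenspace (A : H →ₗ[𝕜] H) (r : 𝕜) : Set H),
        ‖T x - T y‖ = ‖x - y‖ := by
  classical
  haveI := hfd
  obtain ⟨c, hc, hcb⟩ := hpos
  have hsym : (A : H →ₗ[𝕜] H).IsSymmetric := hA.isSymmetric
  set K : Submodule 𝕜 H := Module.End.eigenspace (A : H →ₗ[𝕜] H) (r : 𝕜) with hKdef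
  set E : Set H := {x : H | RCLike.re (inner 𝕜 x (A x) : 𝕜) ≤ 1} with hEdef
  -- `r * ‖x‖ ^ 2 ≤ re ⟪x, A x⟫` for every `x`, by density
  have hq_lower : ∀ x : H, r * ‖x‖ ^ 2 ≤ RCLike.re (inner 𝕜 x (A x) : 𝕜) := by
    have hcont : Continuous fun x : H => RCLike.re (inner 𝕜 x (A x) : 𝕜) - r * ‖x‖ ^ 2 := by
      have h1 : Continuous fun x : H => (inner 𝕜 x (A x) : 𝕜) :=
        Continuous.inner continuous_id A.continuous
      exact (RCLike.continuous_re.comp h1).sub (continuous_const.mul (continuous_norm.pow 2))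
    have hclosed : IsClosed {x : H | r * ‖x‖ ^ 2 ≤ RCLike.re (inner 𝕜 x (A x) : 𝕜)} := by
      have : {x : H | r * ‖x‖ ^ 2 ≤ RCLike.re (inner 𝕜 x (A x) : 𝕜)}
          = {x : H | 0 ≤ RCLike.re (inner 𝕜 x (A x) : 𝕜) - r * ‖x‖ ^ 2} := by
        ext x; simp [sub_nonneg]
      rw [this]
      exact isClosed_le continuous_const hcont
    have hDense : Dense ((⨆ μ : 𝕜, Module.End.eigenspace (A : H →ₗ[𝕜] H) μ : Submodule 𝕜 H) : Set H) :=
      Submodule.dense_iff_topologicalClosure_eq_top.mpr hdense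
    intro x
    have hsub : ((⨆ μ : 𝕜, Module.End.eigenspace (A : H →ₗ[𝕜] H) μ : Submodule 𝕜 H) : Set H)
        ⊆ {x : H | r * ‖x‖ ^ 2 ≤ RCLike.re (inner 𝕜 x (A x) : 𝕜)} := fun y hy =>
      quad_lower_on_eigenspan (A : H →ₗ[𝕜] H) hsym r hrmin y hy
    have : closure ((⨆ μ : 𝕜, Module.End.eigenspace (A : H →ₗ[𝕜] H) μ : Submodule 𝕜 H) : Set H)
        ⊆ {x : H | r * ‖x‖ ^ 2 ≤ RCLike.re (inner 𝕜 x (A x) : 𝕜)} :=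
      hclosed.closure_subset_iff.mpr hsub
    exact this (by rw [hDense.closure_eq]; trivial)
  -- positivity of r
  have hrpos : 0 < r := by
    obtain ⟨v, hv⟩ := hr.exists_hasEigenvector
    have hvne : v ≠ 0 := hv.right
    have hvnorm : 0 < ‖v‖ := norm_pos_iff.mpr hvne
    have hAv : A v = ((r : ℝ) : 𝕜) • v := hv.apply_eq_smul
    have h1 : RCLike.re (inner 𝕜 v (A v) : 𝕜) = r * ‖v‖ ^ 2 := by
      rw [hAv, inner_smul_right, RCLike.re_ofReal_mul, inner_self_eq_norm_sq]
    have h2 : c * ‖v‖ ^ 2 ≤ RCLike.re (inner 𝕜 v (A v) : 𝕜) := by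
      have hu : ‖((‖v‖⁻¹ : ℝ) : 𝕜) • v‖ = 1 := by
        rw [norm_smul]; simp [norm_inv, hvnorm.ne']
      have := hcb _ hu
      have heq : RCLike.re (inner 𝕜 (A (((‖v‖⁻¹ : ℝ) : 𝕜) • v)) (((‖v‖⁻¹ : ℝ) : 𝕜) • v) : 𝕜)
          = (‖v‖⁻¹) ^ 2 * RCLike.re (inner 𝕜 (A v) v : 𝕜) := by
        rw [map_smul, inner_smul_left, inner_smul_right, RCLike.conj_ofReal, ← mul_assoc,
          ← RCLike.ofReal_mul, RCLike.re_ofReal_mul]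
        ring
      rw [heq] at this
      have hrey : RCLike.re (inner 𝕜 (A v) v : 𝕜) = RCLike.re (inner 𝕜 v (A v) : 𝕜) := by
        rw [← inner_conj_symm (A v) v]; exact (RCLike.conj_re _)
      rw [hrey] at this
      have hv2 : (0:ℝ) < ‖v‖ ^ 2 := by positivity
      calc c * ‖v‖ ^ 2 ≤ ((‖v‖⁻¹) ^ 2 * RCLike.re (inner 𝕜 v (A v) : 𝕜)) * ‖v‖ ^ 2 := by
            exact mul_le_mul_of_nonneg_right this hv2.le
        _ = RCLike.re (inner 𝕜 v (A v) : 𝕜) := by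
            field_simp
      -- done
    nlinarith [h1, h2, sq_nonneg ‖v‖, mul_pos hc (mul_pos hvnorm hvnorm)]
  -- quadratic form formula on K
  have hqK : ∀ z : H, z ∈ K → RCLike.re (inner 𝕜 z (A z) : 𝕜) = r * ‖z‖ ^ 2 := by
    intro z hz
    have hAz : A z = ((r : ℝ) : 𝕜) • z := Module.End.mem_eigenspace_iff.mp hz
    rw [hAz, inner_smul_right, RCLike.re_ofReal_mul, inner_self_eq_norm_sq]
  -- equality case: if re ⟪x, A x⟫ = r ‖x‖², then x ∈ K
  have hsym' : ∀ x y : H, (inner 𝕜 (A x) y : 𝕜) = inner 𝕜 x (A y) := fun x y => hsym x y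
  have hBsym : ∀ x y : H, (inner 𝕜 (A x - ((r:ℝ):𝕜) • x) y : 𝕜) = inner 𝕜 x (A y - ((r:ℝ):𝕜) • y) := by
    intro x y
    rw [inner_sub_left, inner_sub_right, inner_smul_left, inner_smul_right, hsym' x y,
      RCLike.conj_ofReal]
  have hBpos : ∀ x : H, 0 ≤ RCLike.re (inner 𝕜 x (A x - ((r:ℝ):𝕜) • x) : 𝕜) := by
    intro x
    rw [inner_sub_right, inner_smul_right, map_sub, RCLike.re_ofReal_mul, inner_self_eq_norm_sq]
    linarith [hq_lower x]
  have heqcase : ∀ x : H, RCLike.re (inner 𝕜 x (A x) : 𝕜) = r * ‖x‖ ^ 2 → x ∈ K := by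
    intro x hx
    set B : H → H := fun y => A y - ((r:ℝ):𝕜) • y with hBdef
    have hBadd : ∀ y z : H, B (y + z) = B y + B z := by
      intro y z; simp only [hBdef, map_add, smul_add]; abel
    have hBsmul : ∀ (t : ℝ) (y : H), B (((t:ℝ):𝕜) • y) = ((t:ℝ):𝕜) • B y := by
      intro t y
      show A (((t:ℝ):𝕜) • y) - ((r:ℝ):𝕜) • (((t:ℝ):𝕜) • y)
          = ((t:ℝ):𝕜) • (A y - ((r:ℝ):𝕜) • y)
      rw [map_smul, smul_sub, smul_comm]
    have hq0 : RCLike.re (inner 𝕜 x (B x) : 𝕜) = 0 := by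
      simp only [hBdef, inner_sub_right, inner_smul_right, map_sub, RCLike.re_ofReal_mul,
        inner_self_eq_norm_sq]
      linarith [hx]
    set a : ℝ := ‖B x‖ ^ 2 with hadef
    set C : ℝ := RCLike.re (inner 𝕜 (B x) (B (B x)) : 𝕜) with hCdef
    have hCnn : 0 ≤ C := hBpos (B x)
    have hkey : ∀ t : ℝ, 0 ≤ 2 * t * a + t ^ 2 * C := by
      intro t
      have h0 := hBpos (x + ((t:ℝ):𝕜) • B x)
      have hexp : (inner 𝕜 (x + ((t:ℝ):𝕜) • B x) (B (x + ((t:ℝ):𝕜) • B x)) : 𝕜)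
          = inner 𝕜 x (B x) + ((t:ℝ):𝕜) * inner 𝕜 x (B (B x))
            + ((t:ℝ):𝕜) * inner 𝕜 (B x) (B x) + ((t:ℝ):𝕜) * (((t:ℝ):𝕜) * inner 𝕜 (B x) (B (B x))) := by
        rw [hBadd, hBsmul, inner_add_left, inner_add_right, inner_add_right,
          inner_smul_left, inner_smul_right, inner_smul_left, inner_smul_right,
          RCLike.conj_ofReal]
        ring
      have hxBB : (inner 𝕜 x (B (B x)) : 𝕜) = inner 𝕜 (B x) (B x) := (hBsym x (B x)).symm
      rw [hexp, hxBB] at h0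
      have : RCLike.re ((inner 𝕜 x (B x) : 𝕜) + ((t:ℝ):𝕜) * inner 𝕜 (B x) (B x)
            + ((t:ℝ):𝕜) * inner 𝕜 (B x) (B x)
            + ((t:ℝ):𝕜) * (((t:ℝ):𝕜) * inner 𝕜 (B x) (B (B x))))
          = 0 + t * a + t * a + t * (t * C) := by
        simp only [map_add, RCLike.re_ofReal_mul, hq0, inner_self_eq_norm_sq]
        try rw [← hadef]
        try rw [← hCdef]
        try ring
      rw [this] at h0
      nlinarith [h0]
    have ha0 : a = 0 := by
      by_contra hane
      have hapos : 0 < a := lt_of_le_of_ne (by positivity) (Ne.symm hane)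
      have ht := hkey (-(a / (C + 1)))
      have hC1 : (0:ℝ) < C + 1 := by linarith
      have hu : 0 < a / (C + 1) := div_pos hapos hC1
      have h3 : a / (C + 1) * C ≤ a := by
        rw [div_mul_eq_mul_div, div_le_iff₀ hC1]; nlinarith
      nlinarith [ht, mul_le_mul_of_nonneg_left h3 hu.le, mul_pos hu hapos]
    have hBx0 : B x = 0 := by
      have hsq : ‖B x‖ ^ 2 = 0 := by rw [← hadef]; exact ha0
      exact norm_eq_zero.mp (pow_eq_zero_iff two_ne_zero |>.mp hsq)
    have : A x = ((r:ℝ):𝕜) • x := by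
      have := hBx0
      rw [hBdef] at this
      have h := sub_eq_zero.mp this
      exact h
    exact Module.End.mem_eigenspace_iff.mpr this
  -- T has operator norm ≤ 1
  have hE0 : (0:H) ∈ E := by simp [hEdef]
  have hT0 : T 0 = 0 := map_zero T
  have hTnorm : ∀ v : H, ‖T v‖ ≤ ‖v‖ := by
    intro v
    rcases eq_or_ne v 0 with rfl | hv
    · simp [hT0]
    · have hQpos : 0 < RCLike.re (inner 𝕜 v (A v) : 𝕜) := by
        have := hq_lower v
        have : r * ‖v‖ ^ 2 ≤ RCLike.re (inner 𝕜 v (A v) : 𝕜) := this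
        nlinarith [this, mul_pos hrpos (pow_pos (norm_pos_iff.mpr hv) 2)]
      set s : ℝ := (Real.sqrt (RCLike.re (inner 𝕜 v (A v) : 𝕜)))⁻¹ with hsdef
      have hspos : 0 < s := by
        rw [hsdef]; exact inv_pos.mpr (Real.sqrt_pos.mpr hQpos)
      have hmem : ((s:ℝ):𝕜) • v ∈ E := by
        simp only [hEdef, Set.mem_setOf_eq, map_smul, inner_smul_left, inner_smul_right,
          RCLike.conj_ofReal]
        rw [← mul_assoc, ← RCLike.ofReal_mul, RCLike.re_ofReal_mul]
        rw [show s * s = s ^ 2 by ring]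
        rw [hsdef, inv_pow, Real.sq_sqrt hQpos.le]
        rw [inv_mul_cancel₀ hQpos.ne']
      have := hTne _ hmem _ hE0
      rw [hT0, sub_zero, sub_zero, map_smul, norm_smul, norm_smul] at this
      have hns : ‖((s:ℝ):𝕜)‖ = s := by
        rw [RCLike.norm_ofReal, abs_of_pos hspos]
      rw [hns] at this
      exact le_of_mul_le_mul_left this hspos
  -- the critical sphere radius
  set ρ : ℝ := (Real.sqrt r)⁻¹ with hρdef
  have hρpos : 0 < ρ := inv_pos.mpr (Real.sqrt_pos.mpr hrpos)
  have hρsq : r * ρ ^ 2 = 1 := by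
    rw [hρdef, inv_pow, Real.sq_sqrt hrpos.le]
    exact mul_inv_cancel₀ hrpos.ne'
  -- norm bound on E
  have hEnorm : ∀ x ∈ E, ‖x‖ ≤ ρ := by
    intro x hx
    have h1 : r * ‖x‖ ^ 2 ≤ 1 := le_trans (hq_lower x) hx
    have h2 : ‖x‖ ^ 2 ≤ ρ ^ 2 := by
      rw [← hρsq] at h1
      exact le_of_mul_le_mul_left (by linarith) hrpos
    calc ‖x‖ = Real.sqrt (‖x‖ ^ 2) := (Real.sqrt_sq (norm_nonneg x)).symm
      _ ≤ Real.sqrt (ρ ^ 2) := Real.sqrt_le_sqrt h2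
      _ = ρ := Real.sqrt_sq hρpos.le
  -- key preimage lemma
  have hpre : ∀ y : H, y ∈ K → ∃ x : H, x ∈ K ∧ ‖x‖ = ‖y‖ ∧ T x = y := by
    intro y hy
    rcases eq_or_ne y 0 with rfl | hyne
    · exact ⟨0, K.zero_mem, by simp, hT0⟩
    · have hynorm : 0 < ‖y‖ := norm_pos_iff.mpr hyne
      set y' : H := (((ρ * ‖y‖⁻¹ : ℝ) : 𝕜)) • y with hy'def
      have hy'K : y' ∈ K := K.smul_mem _ hy
      have hy'norm : ‖y'‖ = ρ := by
        rw [hy'def, norm_smul, RCLike.norm_ofReal, abs_of_pos (by positivity)]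
        field_simp
      have hy'E : y' ∈ E := by
        have := hqK y' hy'K
        simp only [hEdef, Set.mem_setOf_eq]
        rw [this, hy'norm, hρsq]
      obtain ⟨x', hx'E, hTx'⟩ := hTbij.surjOn hy'E
      have hx'ρ : ‖x'‖ = ρ := by
        have h1 : ‖x'‖ ≤ ρ := hEnorm x' hx'E
        have h2 : ρ ≤ ‖x'‖ := by
          calc ρ = ‖y'‖ := hy'norm.symm
            _ = ‖T x'‖ := by rw [hTx']
            _ ≤ ‖x'‖ := hTnorm x'
        linarith
      have hx'K : x' ∈ K := by
        apply heqcase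
        have h1 : RCLike.re (inner 𝕜 x' (A x') : 𝕜) ≤ 1 := hx'E
        have h2 : r * ‖x'‖ ^ 2 ≤ RCLike.re (inner 𝕜 x' (A x') : 𝕜) := hq_lower x'
        have h3 : r * ‖x'‖ ^ 2 = 1 := by rw [hx'ρ, hρsq]
        linarith
      refine ⟨(((‖y‖ * ρ⁻¹ : ℝ) : 𝕜)) • x', K.smul_mem _ hx'K, ?_, ?_⟩
      · rw [norm_smul, RCLike.norm_ofReal, abs_of_pos (by positivity), hx'ρ]
        field_simp
      · rw [map_smul, hTx', hy'def, smul_smul, ← RCLike.ofReal_mul]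
        have : ‖y‖ * ρ⁻¹ * (ρ * ‖y‖⁻¹) = 1 := by field_simp
        rw [this]
        simp
  -- T maps K onto K
  have hmaple : K ≤ Submodule.map T K := by
    intro y hy
    obtain ⟨x, hxK, _, hTx⟩ := hpre y hy
    exact ⟨x, hxK, hTx⟩
  have hmap : Submodule.map T K = K := by
    haveI : FiniteDimensional 𝕜 (Submodule.map T K) := by
      exact Module.Finite.map K T
    exact (Submodule.eq_of_le_of_finrank_le hmaple (Submodule.finrank_map_le T K)).symm
  have hmem : ∀ x ∈ K, T x ∈ K := by
    intro x hx
    rw [← hmap]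
    exact Submodule.mem_map_of_mem hx
  -- injectivity on K
  have hinjK : ∀ x ∈ K, ∀ x' ∈ K, T x = T x' → x = x' := by
    have fsurj : Function.Surjective (T.restrict hmem) := by
      rintro ⟨y, hy⟩
      rw [← hmap] at hy
      obtain ⟨x, hxK, hTx⟩ := hy
      exact ⟨⟨x, hxK⟩, Subtype.ext hTx⟩
    have finj : Function.Injective (T.restrict hmem) :=
      LinearMap.injective_iff_surjective.mpr fsurj
    intro x hx x' hx' hTeq
    have : T.restrict hmem ⟨x, hx⟩ = T.restrict hmem ⟨x', hx'⟩ := Subtype.ext hTeq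
    exact Subtype.ext_iff.mp (finj this)
  -- isometry on K
  have hiso : ∀ z ∈ K, ‖T z‖ = ‖z‖ := by
    intro z hz
    obtain ⟨x, hxK, hxn, hTx⟩ := hpre (T z) (hmem z hz)
    have hxz : x = z := hinjK x hxK z hz hTx
    rw [← hxn, hxz]
  -- assemble conclusions
  have hbij : Set.BijOn T (K : Set H) (K : Set H) :=
    ⟨hmem, fun x hx x' hx' h => hinjK x hx x' hx' h,
      fun y hy => by
        obtain ⟨x, hxK, hTx⟩ := hmaple hy
        exact ⟨x, hxK, hTx⟩⟩
  refine ⟨hbij.image_eq, ?_, hbij, ?_⟩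
  · ext y
    constructor
    · rintro ⟨x, ⟨hxK, hxE⟩, rfl⟩
      exact ⟨hmem x hxK, hTbij.mapsTo hxE⟩
    · rintro ⟨hyK, hyE⟩
      obtain ⟨x, hxK, hTx⟩ := hmaple hyK
      refine ⟨x, ⟨hxK, ?_⟩, hTx⟩
      have hxn : ‖x‖ = ‖y‖ := by
        rw [← hTx]; exact (hiso x hxK).symm
      simp only [hEdef, Set.mem_setOf_eq]
      rw [hqK x hxK, hxn, ← hqK y hyK]
      exact hyE
  · intro x hx y hy
    have : T x - T y = T (x - y) := (map_sub T x y).symm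
    rw [this]
    exact hiso (x - y) (K.sub_mem hx hy)
end
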